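/- arXiv:1108.3207 — 6 statements merged into one kernel-verified Lean document; each statement's English description precedes it below -/
import Mathlib

section
/- Let $n$ be a positive integer, let $p \in (0,1)$, and let $r$ be a positive integer with $r \le n/2$. Then over all families $\mathcal{A} \subseteq \mathcal{P}[n]$ with $|\mathcal{A}| = \sum_{j=r}^n \binom{n}{j}$, the probability that $\mathcal{A}_p$ is intersecting is maximized by $\mathcal{A} = [n]^{(\geq r)}$. Concretely: for every such $\mathcal{A}$, $\sum_{\mathcal{B} \subseteq \mathcal{A},\ \mathcal{B} \text{ intersecting}} p^{|\mathcal{B}|}(1-p)^{|\mathcal{A}|-|\mathcal{B}|} \le \sum_{\mathcal{B} \subseteq [n]^{(\geq r)},\ \mathcal{B} \text{ intersecting}} p^{|\mathcal{B}|}(1-p)^{|[n]^{(\geq r)}|-|\mathcal{B}|}$. -/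
open Finset

/-- A family of finite sets is intersecting if any two members meet. -/
def IsIntersecting (𝓑 : Finset (Finset ℕ)) : Prop :=
  ∀ A ∈ 𝓑, ∀ B ∈ 𝓑, (A ∩ B).Nonempty

instance : DecidablePred IsIntersecting :=
  fun 𝓑 => decidable_of_iff (∀ A ∈ 𝓑, ∀ B ∈ 𝓑, (A ∩ B).Nonempty) Iff.rfl

/-- A family is `t`-intersecting if any two members meet in at least `t` elements. -/
def TIntersecting (t : ℕ) (𝓐 : Finset (Finset ℕ)) : Prop :=
  ∀ A ∈ 𝓐, ∀ B ∈ 𝓐, t ≤ (A ∩ B).card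

/-- The probability that the p-random subfamily of `𝓐` is intersecting. -/
noncomputable def probInter (p : ℝ) (𝓐 : Finset (Finset ℕ)) : ℝ :=
  ∑ 𝓑 ∈ 𝓐.powerset.filter IsIntersecting,
    p ^ 𝓑.card * (1 - p) ^ (𝓐.card - 𝓑.card)

/-- The number of intersecting subfamilies of `𝓐` of order `m`. -/
def numInter (𝓐 : Finset (Finset ℕ)) (m : ℕ) : ℕ :=
  ((𝓐.powerset.filter IsIntersecting).filter (fun 𝓑 => 𝓑.card = m)).card

/-- `[n]^{(≥ r)}`: all subsets of `[n] = {1,…,n}` of size at least `r`. -/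
def atLeast (n r : ℕ) : Finset (Finset ℕ) :=
  (Finset.Icc 1 n).powerset.filter (fun A => r ≤ A.card)

/-- `[n]^{(r)}`: all subsets of `[n] = {1,…,n}` of size exactly `r`. -/
def uniformFam (n r : ℕ) : Finset (Finset ℕ) :=
  Finset.powersetCard r (Finset.Icc 1 n)

/-- The `ij`-compression of a set. -/
def setCompress (i j : ℕ) (A : Finset ℕ) : Finset ℕ :=
  if j ∈ A ∧ i ∉ A then insert i (A.erase j) else A

/-- The `ij`-compression of a family. -/
def famCompress (i j : ℕ) (𝓐 : Finset (Finset ℕ)) : Finset (Finset ℕ) :=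
  𝓐.image (setCompress i j) ∪ 𝓐.filter (fun A => setCompress i j A ∈ 𝓐)

/-- A family is left-compressed if it is `ij`-compressed for all `i < j` in `[n]`. -/
def LeftCompressed (n : ℕ) (𝓐 : Finset (Finset ℕ)) : Prop :=
  ∀ i j : ℕ, 1 ≤ i → i < j → j ≤ n → famCompress i j 𝓐 = 𝓐

/-- The `UV`-compression of a set. -/
def setUV (U V A : Finset ℕ) : Finset ℕ :=
  if V ⊆ A ∧ Disjoint U A then (A ∪ U) \ V else A

/-- The `UV`-compression of a family. -/
def famUV (U V : Finset ℕ) (𝓐 : Finset (Finset ℕ)) : Finset (Finset ℕ) :=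
  𝓐.image (setUV U V) ∪ 𝓐.filter (fun A => setUV U V A ∈ 𝓐)

/-- `f` is a pairing function on `U`: an involution on `U` with no fixed point. -/
def IsPairing (f : ℕ → ℕ) (U : Finset ℕ) : Prop :=
  (∀ x ∈ U, f x ∈ U) ∧ (∀ x ∈ U, f (f x) = x) ∧ (∀ x ∈ U, f x ≠ x)

/-- The `(U,v,f)`-compression of a set. -/
def setUvf (U : Finset ℕ) (v : ℕ) (f : ℕ → ℕ) (A : Finset ℕ) : Finset ℕ :=
  if v ∈ A then A else (A ∩ U).image f ∪ {v} ∪ (A \ U)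

/-- The `(U,v,f)`-compression of a family. -/
def famUvf (U : Finset ℕ) (v : ℕ) (f : ℕ → ℕ) (𝓐 : Finset (Finset ℕ)) : Finset (Finset ℕ) :=
  𝓐.image (setUvf U v f) ∪ 𝓐.filter (fun A => setUvf U v f A ∈ 𝓐)


namespace UvfProof

open Finset

variable {U : Finset ℕ} {v : ℕ} {f : ℕ → ℕ} {A B Z : Finset ℕ}

lemma setUvf_of_mem (h : v ∈ A) : setUvf U v f A = A := if_pos h

lemma setUvf_of_not_mem (h : v ∉ A) :
    setUvf U v f A = (A ∩ U).image f ∪ {v} ∪ (A \ U) := if_neg h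

lemma mem_setUvf_self : v ∈ setUvf U v f A := by
  by_cases h : v ∈ A
  · rw [setUvf_of_mem h]; exact h
  · rw [setUvf_of_not_mem h]; simp

lemma setUvf_idem : setUvf U v f (setUvf U v f A) = setUvf U v f A :=
  setUvf_of_mem mem_setUvf_self

lemma image_f_subset (hf : IsPairing f U) {s : Finset ℕ} (hs : s ⊆ U) :
    s.image f ⊆ U := by
  intro x hx
  obtain ⟨y, hy, rfl⟩ := Finset.mem_image.1 hx
  exact hf.1 y (hs hy)

lemma image_image_f (hf : IsPairing f U) {s : Finset ℕ} (hs : s ⊆ U) :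
    (s.image f).image f = s := by
  rw [Finset.image_image]
  have : ∀ x ∈ s, (f ∘ f) x = id x := fun x hx => hf.2.1 x (hs hx)
  rw [Finset.image_congr this, Finset.image_id]

lemma injOn_f (hf : IsPairing f U) {x y : ℕ} (hx : x ∈ U) (hy : y ∈ U)
    (h : f x = f y) : x = y := by
  have := hf.2.1 x hx
  rw [h, hf.2.1 y hy] at this
  exact this.symm

/-- intersection of the compressed set with U -/
lemma setUvf_inter_U' (hv : v ∉ U) (hf : IsPairing f U) (h : v ∉ A) :
    setUvf U v f A ∩ U = (A ∩ U).image f := by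
  rw [setUvf_of_not_mem h]
  ext x
  simp only [Finset.mem_inter, Finset.mem_union, Finset.mem_singleton, Finset.mem_sdiff]
  constructor
  · rintro ⟨(h1 | h1) | h1, h2⟩
    · exact h1
    · exact absurd h2 (h1 ▸ hv)
    · exact absurd h2 h1.2
  · intro hx
    exact ⟨Or.inl (Or.inl hx), image_f_subset hf (Finset.inter_subset_right) hx⟩

lemma setUvf_sdiff' (hf : IsPairing f U) (h : v ∉ A) :
    setUvf U v f A \ insert v U = A \ U := by
  rw [setUvf_of_not_mem h]
  ext x
  simp only [Finset.mem_sdiff, Finset.mem_union, Finset.mem_singleton, Finset.mem_insert]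
  constructor
  · rintro ⟨(h1 | h1) | h1, h2⟩
    · exact absurd (Or.inr (image_f_subset hf Finset.inter_subset_right h1)) h2
    · exact absurd (Or.inl h1) h2
    · exact h1
  · rintro ⟨h1, h2⟩
    exact ⟨Or.inr ⟨h1, h2⟩, fun hc => hc.elim (fun hx => h (hx ▸ h1)) h2⟩

lemma setUvf_recover (hv : v ∉ U) (hf : IsPairing f U) (h : v ∉ A) :
    (setUvf U v f A ∩ U).image f ∪ (setUvf U v f A \ insert v U) = A := by
  rw [setUvf_inter_U' hv hf h, setUvf_sdiff' hf h, image_image_f hf Finset.inter_subset_right]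
  rw [Finset.union_comm]
  exact Finset.sdiff_union_inter A U

lemma setUvf_injOn (hv : v ∉ U) (hf : IsPairing f U) (hA : v ∉ A) (hB : v ∉ B)
    (h : setUvf U v f A = setUvf U v f B) : A = B := by
  have := setUvf_recover (A := A) hv hf hA
  rw [h, setUvf_recover hv hf hB] at this
  exact this.symm

lemma card_setUvf (hv : v ∉ U) (hf : IsPairing f U) (h : v ∉ A) :
    (setUvf U v f A).card = A.card + 1 := by
  rw [setUvf_of_not_mem h]
  rw [Finset.card_union_of_disjoint, Finset.card_union_of_disjoint]
  · rw [Finset.card_image_of_injOn (fun x hx y hy => injOn_f hf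
      (Finset.inter_subset_right (Finset.mem_coe.1 hx))
      (Finset.inter_subset_right (Finset.mem_coe.1 hy))),
      Finset.card_singleton]
    have : (A ∩ U).card + (A \ U).card = A.card := Finset.card_inter_add_card_sdiff A U
    omega
  · simp only [Finset.disjoint_singleton_right, Finset.mem_image]
    rintro ⟨y, hy, rfl⟩
    exact hv (hf.1 y (Finset.inter_subset_right hy))
  · rw [Finset.disjoint_union_left]
    constructor
    · exact Finset.disjoint_left.2 (fun x hx hx2 =>
        (Finset.mem_sdiff.1 hx2).2 (image_f_subset hf Finset.inter_subset_right hx))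
    · exact Finset.disjoint_left.2 (fun x hx hx2 => h (Finset.mem_singleton.1 hx ▸ (Finset.mem_sdiff.1 hx2).1))

lemma setUvf_subset' {s : Finset ℕ} (hf : IsPairing f U) (hU : U ⊆ s) (hvs : v ∈ s) (hA : A ⊆ s) :
    setUvf U v f A ⊆ s := by
  by_cases h : v ∈ A
  · rw [setUvf_of_mem h]; exact hA
  · rw [setUvf_of_not_mem h]
    intro x hx
    rcases Finset.mem_union.1 hx with hx | hx
    · rcases Finset.mem_union.1 hx with hx | hx
      · exact hU (image_f_subset hf Finset.inter_subset_right hx)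
      · exact Finset.mem_singleton.1 hx ▸ hvs
    · exact hA (Finset.mem_sdiff.1 hx).1

/-- The conflict-transfer lemma (F6). -/
lemma conflict_transfer (hv : v ∉ U) (hf : IsPairing f U) (hZ : v ∉ Z) (hB : v ∉ B)
    (hdis : setUvf U v f Z ∩ B = ∅) : Z ∩ setUvf U v f B = ∅ := by
  rw [setUvf_of_not_mem hZ] at hdis
  rw [setUvf_of_not_mem hB]
  have hdis' : ∀ x, x ∈ ((Z ∩ U).image f ∪ {v} ∪ (Z \ U)) → x ∉ B := by
    intro x hx hxB
    exact Finset.eq_empty_iff_forall_notMem.1 hdis x (Finset.mem_inter.2 ⟨hx, hxB⟩)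
  rw [Finset.eq_empty_iff_forall_notMem]
  intro x hx
  obtain ⟨hxZ, hx2⟩ := Finset.mem_inter.1 hx
  rcases Finset.mem_union.1 hx2 with hx2 | hx2
  · rcases Finset.mem_union.1 hx2 with hx2 | hx2
    · -- x ∈ (B ∩ U).image f, x ∈ Z
      obtain ⟨u, hu, rfl⟩ := Finset.mem_image.1 hx2
      obtain ⟨huB, huU⟩ := Finset.mem_inter.1 hu
      have hfuU : f u ∈ U := hf.1 u huU
      have : u ∈ (Z ∩ U).image f := by
        refine Finset.mem_image.2 ⟨f u, Finset.mem_inter.2 ⟨hxZ, hfuU⟩, hf.2.1 u huU⟩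
      exact hdis' u (Finset.mem_union.2 (Or.inl (Finset.mem_union.2 (Or.inl this)))) huB
    · exact hZ (Finset.mem_singleton.1 hx2 ▸ hxZ)
  · -- x ∈ B \ U and x ∈ Z: then x ∈ Z \ U ⟹ x ∉ B
    obtain ⟨hxB, hxU⟩ := Finset.mem_sdiff.1 hx2
    exact hdis' x (Finset.mem_union.2 (Or.inr (Finset.mem_sdiff.2 ⟨hxZ, hxU⟩))) hxB

end UvfProof

namespace UvfProof

open Finset Relation

/-- One conflict-propagation step inside a subfamily `𝓑`. -/
def chainStep (U : Finset ℕ) (v : ℕ) (f : ℕ → ℕ) (𝓑 : Finset (Finset ℕ))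
    (Z B : Finset ℕ) : Prop :=
  B ∈ 𝓑 ∧ v ∉ B ∧ (Z ∩ B).Nonempty ∧ setUvf U v f Z ∩ B = ∅

/-- Membership in the "to move" part of `𝓑`. -/
def Smem (U : Finset ℕ) (v : ℕ) (f : ℕ → ℕ) (𝓐 𝓑 : Finset (Finset ℕ))
    (B : Finset ℕ) : Prop :=
  ∃ Z₀, (Z₀ ∈ 𝓑 ∧ v ∉ Z₀ ∧ setUvf U v f Z₀ ∉ 𝓐) ∧
    ReflTransGen (chainStep U v f 𝓑) Z₀ B

open Classical in
/-- The "to move" part of `𝓑`, as a finset. -/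
noncomputable def Sset (U : Finset ℕ) (v : ℕ) (f : ℕ → ℕ) (𝓐 𝓑 : Finset (Finset ℕ)) :
    Finset (Finset ℕ) :=
  𝓑.filter (Smem U v f 𝓐 𝓑)

/-- The compressed image of an intersecting subfamily. -/
noncomputable def Phi (U : Finset ℕ) (v : ℕ) (f : ℕ → ℕ) (𝓐 𝓑 : Finset (Finset ℕ)) :
    Finset (Finset ℕ) :=
  (Sset U v f 𝓐 𝓑).image (setUvf U v f) ∪ (𝓑 \ Sset U v f 𝓐 𝓑)

variable {U : Finset ℕ} {v : ℕ} {f : ℕ → ℕ} {𝓐 𝓑 : Finset (Finset ℕ)} {A B Z : Finset ℕ}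
variable {p : ℝ}

lemma Smem_elim (h : Smem U v f 𝓐 𝓑 B) : B ∈ 𝓑 ∧ v ∉ B := by
  obtain ⟨Z₀, hZ₀, hchain⟩ := h
  induction hchain with
  | refl => exact ⟨hZ₀.1, hZ₀.2.1⟩
  | tail h₁ h₂ _ => exact ⟨h₂.1, h₂.2.1⟩

lemma Smem_base (hB : B ∈ 𝓑) (hvB : v ∉ B) (hc : setUvf U v f B ∉ 𝓐) :
    Smem U v f 𝓐 𝓑 B :=
  ⟨B, ⟨hB, hvB, hc⟩, ReflTransGen.refl⟩

lemma Smem_step (hZ : Smem U v f 𝓐 𝓑 Z) (hB : B ∈ 𝓑) (hvB : v ∉ B)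
    (hne : (Z ∩ B).Nonempty) (hdis : setUvf U v f Z ∩ B = ∅) :
    Smem U v f 𝓐 𝓑 B := by
  obtain ⟨Z₀, h0, hc⟩ := hZ
  exact ⟨Z₀, h0, hc.tail ⟨hB, hvB, hne, hdis⟩⟩

lemma mem_Sset : B ∈ Sset U v f 𝓐 𝓑 ↔ B ∈ 𝓑 ∧ Smem U v f 𝓐 𝓑 B := by
  classical
  simp [Sset, Finset.mem_filter]

lemma mem_Sset_of_Smem (h : Smem U v f 𝓐 𝓑 B) : B ∈ Sset U v f 𝓐 𝓑 :=
  mem_Sset.2 ⟨(Smem_elim h).1, h⟩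

lemma setUvf_not_mem_of_Smem (hv : v ∉ U) (hf : IsPairing f U)
    (hint : IsIntersecting 𝓑) (h𝓑𝓐 : 𝓑 ⊆ 𝓐) (h : Smem U v f 𝓐 𝓑 B) :
    setUvf U v f B ∉ 𝓑 := by
  obtain ⟨Z₀, hZ₀, hchain⟩ := h
  induction hchain with
  | refl => exact fun hc => hZ₀.2.2 (h𝓑𝓐 hc)
  | @tail b c hbc hstep _ =>
    intro hc
    have hb : b ∈ 𝓑 ∧ v ∉ b := Smem_elim ⟨Z₀, hZ₀, hbc⟩
    have hdis : b ∩ setUvf U v f c = ∅ :=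
      conflict_transfer hv hf hb.2 hstep.2.1 hstep.2.2.2
    obtain ⟨x, hx⟩ := hint b hb.1 (setUvf U v f c) hc
    rw [hdis] at hx
    exact absurd hx (Finset.notMem_empty x)

lemma Phi_subset (h𝓑𝓐 : 𝓑 ⊆ 𝓐) :
    Phi U v f 𝓐 𝓑 ⊆ famUvf U v f 𝓐 := by
  intro X hX
  rcases Finset.mem_union.1 hX with hX | hX
  · obtain ⟨B, hB, rfl⟩ := Finset.mem_image.1 hX
    have hB𝓐 : B ∈ 𝓐 := h𝓑𝓐 (mem_Sset.1 hB).1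
    by_cases hmem : setUvf U v f B ∈ 𝓐
    · exact Finset.mem_union.2 (Or.inr (Finset.mem_filter.2
        ⟨hmem, by rw [setUvf_idem]; exact hmem⟩))
    · exact Finset.mem_union.2 (Or.inl (Finset.mem_image.2 ⟨B, hB𝓐, rfl⟩))
  · obtain ⟨hX𝓑, hXS⟩ := Finset.mem_sdiff.1 hX
    have hX𝓐 : X ∈ 𝓐 := h𝓑𝓐 hX𝓑
    by_cases hvX : v ∈ X
    · exact Finset.mem_union.2 (Or.inr (Finset.mem_filter.2
        ⟨hX𝓐, by rw [setUvf_of_mem hvX]; exact hX𝓐⟩))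
    · by_cases hmem : setUvf U v f X ∈ 𝓐
      · exact Finset.mem_union.2 (Or.inr (Finset.mem_filter.2 ⟨hX𝓐, hmem⟩))
      · exact absurd (mem_Sset_of_Smem (Smem_base hX𝓑 hvX hmem)) hXS

lemma Sset_subset : Sset U v f 𝓐 𝓑 ⊆ 𝓑 := fun _ h => (mem_Sset.1 h).1

lemma Phi_card (hv : v ∉ U) (hf : IsPairing f U)
    (hint : IsIntersecting 𝓑) (h𝓑𝓐 : 𝓑 ⊆ 𝓐) :
    (Phi U v f 𝓐 𝓑).card = 𝓑.card := by
  rw [Phi, Finset.card_union_of_disjoint, Finset.card_image_of_injOn]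
  · have := Finset.card_sdiff_add_card_eq_card (Sset_subset (U := U) (v := v) (f := f) (𝓐 := 𝓐) (𝓑 := 𝓑))
    omega
  · intro B₁ hB₁ B₂ hB₂ h
    have h1 := Smem_elim (mem_Sset.1 hB₁).2
    have h2 := Smem_elim (mem_Sset.1 hB₂).2
    exact setUvf_injOn hv hf h1.2 h2.2 h
  · rw [Finset.disjoint_left]
    rintro X hX hX2
    obtain ⟨B, hB, rfl⟩ := Finset.mem_image.1 hX
    exact setUvf_not_mem_of_Smem hv hf hint h𝓑𝓐 (mem_Sset.1 hB).2
      (Finset.mem_sdiff.1 hX2).1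

lemma Phi_inter (hv : v ∉ U) (hf : IsPairing f U)
    (hint : IsIntersecting 𝓑) (h𝓑𝓐 : 𝓑 ⊆ 𝓐) :
    IsIntersecting (Phi U v f 𝓐 𝓑) := by
  have key : ∀ X ∈ Phi U v f 𝓐 𝓑, ∀ B ∈ Sset U v f 𝓐 𝓑,
      (setUvf U v f B ∩ X).Nonempty := by
    intro X hX B hB
    rcases Finset.mem_union.1 hX with hX | hX
    · obtain ⟨B', _, rfl⟩ := Finset.mem_image.1 hX
      exact ⟨v, Finset.mem_inter.2 ⟨mem_setUvf_self, mem_setUvf_self⟩⟩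
    · obtain ⟨hX𝓑, hXS⟩ := Finset.mem_sdiff.1 hX
      by_cases hvX : v ∈ X
      · exact ⟨v, Finset.mem_inter.2 ⟨mem_setUvf_self, hvX⟩⟩
      · by_contra hne
        rw [Finset.not_nonempty_iff_eq_empty] at hne
        have hBS := (mem_Sset.1 hB).2
        have hBX : (B ∩ X).Nonempty := hint B (Sset_subset hB) X hX𝓑
        exact hXS (mem_Sset_of_Smem (Smem_step hBS hX𝓑 hvX hBX hne))
  intro X hX Y hY
  rcases Finset.mem_union.1 hX with hX' | hX'
  · obtain ⟨B, hB, rfl⟩ := Finset.mem_image.1 hX'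
    exact key Y hY B hB
  · rcases Finset.mem_union.1 hY with hY' | hY'
    · obtain ⟨B, hB, rfl⟩ := Finset.mem_image.1 hY'
      obtain ⟨x, hx⟩ := key X hX B hB
      exact ⟨x, by rw [Finset.inter_comm]; exact hx⟩
    · exact hint X (Finset.mem_sdiff.1 hX').1 Y (Finset.mem_sdiff.1 hY').1

/-- One decoding step, relative to a compressed family `𝓒`. -/
def dStep (U : Finset ℕ) (v : ℕ) (f : ℕ → ℕ) (𝓐 𝓒 : Finset (Finset ℕ))
    (Z B : Finset ℕ) : Prop :=
  B ∈ 𝓐 ∧ v ∉ B ∧ setUvf U v f B ∈ 𝓒 ∧ (Z ∩ B).Nonempty ∧ setUvf U v f Z ∩ B = ∅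

/-- Decoded "was moved" predicate. -/
def Dmem (U : Finset ℕ) (v : ℕ) (f : ℕ → ℕ) (𝓐 𝓒 : Finset (Finset ℕ))
    (B : Finset ℕ) : Prop :=
  ∃ Z₀, (Z₀ ∈ 𝓐 ∧ v ∉ Z₀ ∧ setUvf U v f Z₀ ∈ 𝓒 ∧ setUvf U v f Z₀ ∉ 𝓐) ∧
    ReflTransGen (dStep U v f 𝓐 𝓒) Z₀ B

lemma Dmem_iff_Smem (hv : v ∉ U) (hf : IsPairing f U)
    (hint : IsIntersecting 𝓑) (h𝓑𝓐 : 𝓑 ⊆ 𝓐) :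
    ∀ B, Dmem U v f 𝓐 (Phi U v f 𝓐 𝓑) B ↔ Smem U v f 𝓐 𝓑 B := by
  intro B
  constructor
  · rintro ⟨Z₀, h0, hchain⟩
    induction hchain with
    | refl =>
      rcases Finset.mem_union.1 h0.2.2.1 with hmem | hmem
      · obtain ⟨B', hB', heq⟩ := Finset.mem_image.1 hmem
        have h1 := Smem_elim (mem_Sset.1 hB').2
        have : B' = Z₀ := setUvf_injOn hv hf h1.2 h0.2.1 heq
        exact this ▸ (mem_Sset.1 hB').2
      · exact absurd (h𝓑𝓐 (Finset.mem_sdiff.1 hmem).1) h0.2.2.2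
    | @tail b c hbc hstep ih =>
      have hb : Smem U v f 𝓐 𝓑 b := ih
      rcases Finset.mem_union.1 hstep.2.2.1 with hmem | hmem
      · obtain ⟨B', hB', heq⟩ := Finset.mem_image.1 hmem
        have h1 := Smem_elim (mem_Sset.1 hB').2
        have : B' = c := setUvf_injOn hv hf h1.2 hstep.2.1 heq
        exact this ▸ (mem_Sset.1 hB').2
      · exfalso
        have hbel := Smem_elim hb
        have hdis : b ∩ setUvf U v f c = ∅ :=
          conflict_transfer hv hf hbel.2 hstep.2.1 hstep.2.2.2.2
        obtain ⟨x, hx⟩ := hint b hbel.1 (setUvf U v f c) (Finset.mem_sdiff.1 hmem).1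
        rw [hdis] at hx
        exact absurd hx (Finset.notMem_empty x)
  · rintro ⟨Z₀, h0, hchain⟩
    have hZ₀Phi : setUvf U v f Z₀ ∈ Phi U v f 𝓐 𝓑 :=
      Finset.mem_union.2 (Or.inl (Finset.mem_image.2
        ⟨Z₀, mem_Sset_of_Smem (Smem_base h0.1 h0.2.1 h0.2.2), rfl⟩))
    induction hchain with
    | refl => exact ⟨Z₀, ⟨h𝓑𝓐 h0.1, h0.2.1, hZ₀Phi, h0.2.2⟩, ReflTransGen.refl⟩
    | @tail b c hbc hstep ih =>
      have hcS : Smem U v f 𝓐 𝓑 c := ⟨Z₀, h0, hbc.tail hstep⟩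
      have hcPhi : setUvf U v f c ∈ Phi U v f 𝓐 𝓑 :=
        Finset.mem_union.2 (Or.inl (Finset.mem_image.2 ⟨c, mem_Sset_of_Smem hcS, rfl⟩))
      obtain ⟨W₀, hW0, hWchain⟩ := ih
      exact ⟨W₀, hW0, hWchain.tail
        ⟨h𝓑𝓐 hstep.1, hstep.2.1, hcPhi, hstep.2.2.1, hstep.2.2.2⟩⟩

open Classical in
/-- The decoded moved part. -/
noncomputable def Dset (U : Finset ℕ) (v : ℕ) (f : ℕ → ℕ) (𝓐 𝓒 : Finset (Finset ℕ)) :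
    Finset (Finset ℕ) :=
  𝓐.filter (Dmem U v f 𝓐 𝓒)

open Classical in
/-- Full decoding of a compressed subfamily. -/
noncomputable def decode (U : Finset ℕ) (v : ℕ) (f : ℕ → ℕ) (𝓐 𝓒 : Finset (Finset ℕ)) :
    Finset (Finset ℕ) :=
  𝓒.filter (fun X => v ∉ X) ∪ Dset U v f 𝓐 𝓒 ∪
    (𝓒.filter (fun X => v ∈ X) \ (Dset U v f 𝓐 𝓒).image (setUvf U v f))

lemma Dset_Phi (hv : v ∉ U) (hf : IsPairing f U)
    (hint : IsIntersecting 𝓑) (h𝓑𝓐 : 𝓑 ⊆ 𝓐) :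
    Dset U v f 𝓐 (Phi U v f 𝓐 𝓑) = Sset U v f 𝓐 𝓑 := by
  classical
  ext B
  rw [mem_Sset]
  simp only [Dset, Finset.mem_filter, Dmem_iff_Smem hv hf hint h𝓑𝓐]
  constructor
  · rintro ⟨_, h⟩; exact ⟨(Smem_elim h).1, h⟩
  · rintro ⟨hB, h⟩; exact ⟨h𝓑𝓐 hB, h⟩

lemma decode_Phi (hv : v ∉ U) (hf : IsPairing f U)
    (hint : IsIntersecting 𝓑) (h𝓑𝓐 : 𝓑 ⊆ 𝓐) :
    decode U v f 𝓐 (Phi U v f 𝓐 𝓑) = 𝓑 := by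
  rw [decode, Dset_Phi hv hf hint h𝓑𝓐]
  ext X
  simp only [Finset.mem_union, Finset.mem_sdiff, Finset.mem_filter]
  constructor
  · rintro ((⟨hX, hvX⟩ | hX) | ⟨⟨hX, hvX⟩, hX2⟩)
    · rcases Finset.mem_union.1 hX with hX | hX
      · obtain ⟨B, _, rfl⟩ := Finset.mem_image.1 hX
        exact absurd mem_setUvf_self hvX
      · exact (Finset.mem_sdiff.1 hX).1
    · exact Sset_subset hX
    · rcases Finset.mem_union.1 hX with hX | hX
      · exact absurd hX hX2
      · exact (Finset.mem_sdiff.1 hX).1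
  · intro hX
    by_cases hXS : X ∈ Sset U v f 𝓐 𝓑
    · exact Or.inl (Or.inr hXS)
    · have hXPhi : X ∈ Phi U v f 𝓐 𝓑 :=
        Finset.mem_union.2 (Or.inr (Finset.mem_sdiff.2 ⟨hX, hXS⟩))
      by_cases hvX : v ∈ X
      · refine Or.inr ⟨⟨hXPhi, hvX⟩, ?_⟩
        intro hc
        obtain ⟨B, hB, heq⟩ := Finset.mem_image.1 hc
        exact setUvf_not_mem_of_Smem hv hf hint h𝓑𝓐 (mem_Sset.1 hB).2 (heq ▸ hX)
      · exact Or.inl (Or.inl ⟨hXPhi, hvX⟩)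

end UvfProof

namespace UvfProof

open Finset

variable {U : Finset ℕ} {v : ℕ} {f : ℕ → ℕ} {𝓐 : Finset (Finset ℕ)} {p : ℝ}

lemma famUvf_eq (hv : v ∉ U) (hf : IsPairing f U) :
    famUvf U v f 𝓐 =
      (𝓐.filter (fun A => setUvf U v f A ∉ 𝓐)).image (setUvf U v f) ∪
        𝓐.filter (fun A => setUvf U v f A ∈ 𝓐) := by
  classical
  ext X
  simp only [famUvf, Finset.mem_union, Finset.mem_image, Finset.mem_filter]
  constructor
  · rintro (⟨A, hA, rfl⟩ | hX)
    · by_cases hmem : setUvf U v f A ∈ 𝓐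
      · exact Or.inr ⟨hmem, by rw [setUvf_idem]; exact hmem⟩
      · exact Or.inl ⟨A, ⟨hA, hmem⟩, rfl⟩
    · exact Or.inr hX
  · rintro (⟨A, hA, rfl⟩ | hX)
    · exact Or.inl ⟨A, hA.1, rfl⟩
    · exact Or.inr hX

lemma famUvf_card (hv : v ∉ U) (hf : IsPairing f U) :
    (famUvf U v f 𝓐).card = 𝓐.card := by
  rw [famUvf_eq hv hf, Finset.card_union_of_disjoint, Finset.card_image_of_injOn]
  · have h := Finset.card_filter_add_card_filter_not
      (s := 𝓐) (p := fun A => setUvf U v f A ∈ 𝓐)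
    omega
  · intro A hA B hB h
    simp only [Finset.coe_filter, Set.mem_setOf_eq] at hA hB
    have hvA : v ∉ A := fun hc => hA.2 (by rw [setUvf_of_mem hc]; exact hA.1)
    have hvB : v ∉ B := fun hc => hB.2 (by rw [setUvf_of_mem hc]; exact hB.1)
    exact setUvf_injOn hv hf hvA hvB h
  · rw [Finset.disjoint_left]
    rintro X hX hX2
    obtain ⟨A, hA, rfl⟩ := Finset.mem_image.1 hX
    exact (Finset.mem_filter.1 hA).2 (Finset.mem_filter.1 hX2).1

lemma famUvf_powerset {s : Finset ℕ} (hf : IsPairing f U) (hU : U ⊆ s) (hvs : v ∈ s)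
    (h𝓐 : 𝓐 ⊆ s.powerset) : famUvf U v f 𝓐 ⊆ s.powerset := by
  intro X hX
  rcases Finset.mem_union.1 hX with hX | hX
  · obtain ⟨A, hA, rfl⟩ := Finset.mem_image.1 hX
    exact Finset.mem_powerset.2 (setUvf_subset' hf hU hvs (Finset.mem_powerset.1 (h𝓐 hA)))
  · exact h𝓐 (Finset.filter_subset _ _ hX)

/-- The key compression inequality. -/
lemma probInter_le_famUvf (hv : v ∉ U) (hf : IsPairing f U)
    (hp0 : 0 ≤ p) (hp1 : p ≤ 1) :
    probInter p 𝓐 ≤ probInter p (famUvf U v f 𝓐) := by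
  classical
  rw [probInter, probInter, famUvf_card hv hf]
  set w : Finset (Finset ℕ) → ℝ := fun 𝓑 => p ^ 𝓑.card * (1 - p) ^ (𝓐.card - 𝓑.card) with hw
  have hwnn : ∀ 𝓑, 0 ≤ w 𝓑 := fun 𝓑 =>
    mul_nonneg (pow_nonneg hp0 _) (pow_nonneg (by linarith) _)
  set s := 𝓐.powerset.filter IsIntersecting with hs
  set t := (famUvf U v f 𝓐).powerset.filter IsIntersecting with ht
  have hmem : ∀ 𝓑 ∈ s, 𝓑 ⊆ 𝓐 ∧ IsIntersecting 𝓑 := by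
    intro 𝓑 h𝓑
    obtain ⟨h1, h2⟩ := Finset.mem_filter.1 h𝓑
    exact ⟨Finset.mem_powerset.1 h1, h2⟩
  have himg : ∀ 𝓑 ∈ s, Phi U v f 𝓐 𝓑 ∈ t := by
    intro 𝓑 h𝓑
    obtain ⟨h1, h2⟩ := hmem 𝓑 h𝓑
    exact Finset.mem_filter.2 ⟨Finset.mem_powerset.2 (Phi_subset h1),
      Phi_inter hv hf h2 h1⟩
  have hinj : ∀ 𝓑₁ ∈ s, ∀ 𝓑₂ ∈ s, Phi U v f 𝓐 𝓑₁ = Phi U v f 𝓐 𝓑₂ → 𝓑₁ = 𝓑₂ := by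
    intro 𝓑₁ h₁ 𝓑₂ h₂ h
    obtain ⟨hs₁, hi₁⟩ := hmem _ h₁
    obtain ⟨hs₂, hi₂⟩ := hmem _ h₂
    have := decode_Phi hv hf hi₁ hs₁
    rw [h, decode_Phi hv hf hi₂ hs₂] at this
    exact this.symm
  calc ∑ 𝓑 ∈ s, w 𝓑 = ∑ 𝓑 ∈ s, w (Phi U v f 𝓐 𝓑) := by
        apply Finset.sum_congr rfl
        intro 𝓑 h𝓑
        obtain ⟨h1, h2⟩ := hmem 𝓑 h𝓑
        simp only [hw]
        rw [Phi_card hv hf h2 h1]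
    _ = ∑ 𝓒 ∈ s.image (Phi U v f 𝓐), w 𝓒 := (Finset.sum_image hinj).symm
    _ ≤ ∑ 𝓒 ∈ t, w 𝓒 := by
        apply Finset.sum_le_sum_of_subset_of_nonneg
        · intro 𝓒 h𝓒
          obtain ⟨𝓑, h𝓑, rfl⟩ := Finset.mem_image.1 h𝓒
          exact himg 𝓑 h𝓑
        · exact fun 𝓒 _ _ => hwnn 𝓒

end UvfProof

namespace UvfProof

open Finset

variable {U : Finset ℕ} {v : ℕ} {f : ℕ → ℕ} {𝓐 : Finset (Finset ℕ)} {A B : Finset ℕ} {n r : ℕ}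

lemma atLeast_eq (n r : ℕ) :
    atLeast n r = (Finset.Icc r n).biUnion (fun j => Finset.powersetCard j (Finset.Icc 1 n)) := by
  ext A
  simp only [atLeast, Finset.mem_filter, Finset.mem_powerset, Finset.mem_biUnion,
    Finset.mem_Icc, Finset.mem_powersetCard]
  constructor
  · rintro ⟨h1, h2⟩
    have hcard : A.card ≤ n := by
      have := Finset.card_le_card h1
      rwa [Nat.card_Icc, Nat.add_sub_cancel] at this
    exact ⟨A.card, ⟨h2, hcard⟩, h1, rfl⟩
  · rintro ⟨j, ⟨hj1, _⟩, hsub, hcard⟩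
    exact ⟨hsub, hcard ▸ hj1⟩

lemma biUnion_levels_card (n r : ℕ) :
    ((Finset.Icc r n).biUnion (fun j => Finset.powersetCard j (Finset.Icc 1 n))).card =
      ∑ j ∈ Finset.Icc r n, n.choose j := by
  rw [Finset.card_biUnion]
  · apply Finset.sum_congr rfl
    intro j _
    rw [Finset.card_powersetCard, Nat.card_Icc, Nat.add_sub_cancel]
  · intro i _ j _ hij
    simp only [Function.onFun, Finset.disjoint_left]
    intro A hA hA'
    rw [Finset.mem_powersetCard] at hA hA'
    exact hij (hA.2 ▸ hA'.2)

lemma atLeast_card (n r : ℕ) :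
    (atLeast n r).card = ∑ j ∈ Finset.Icc r n, n.choose j := by
  rw [atLeast_eq, biUnion_levels_card]

/-- Potential function for termination. -/
def Omega (n : ℕ) (𝓐 : Finset (Finset ℕ)) : ℕ := ∑ A ∈ 𝓐, (n - A.card)

lemma Omega_famUvf_lt (hv : v ∉ U) (hf : IsPairing f U)
    (hIcc : 𝓐 ⊆ (Finset.Icc 1 n).powerset) (hU : U ⊆ Finset.Icc 1 n)
    (hvn : v ∈ Finset.Icc 1 n)
    (hMov : (𝓐.filter (fun A => setUvf U v f A ∉ 𝓐)).Nonempty) :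
    Omega n (famUvf U v f 𝓐) < Omega n 𝓐 := by
  set Mov := 𝓐.filter (fun A => setUvf U v f A ∉ 𝓐) with hMovdef
  set Fix := 𝓐.filter (fun A => setUvf U v f A ∈ 𝓐) with hFixdef
  have hvnot : ∀ A ∈ Mov, v ∉ A := by
    intro A hA hvA
    obtain ⟨hA𝓐, hnot⟩ := Finset.mem_filter.1 hA
    exact hnot (by rw [setUvf_of_mem hvA]; exact hA𝓐)
  have hcardlt : ∀ A ∈ Mov, A.card + 1 ≤ n := by
    intro A hA
    have hA𝓐 := (Finset.mem_filter.1 hA).1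
    have hsub : setUvf U v f A ⊆ Finset.Icc 1 n :=
      setUvf_subset' hf hU hvn (Finset.mem_powerset.1 (hIcc hA𝓐))
    have := Finset.card_le_card hsub
    rw [card_setUvf hv hf (hvnot A hA), Nat.card_Icc, Nat.add_sub_cancel] at this
    exact this
  have hsplit : Omega n 𝓐 = ∑ A ∈ Fix, (n - A.card) + ∑ A ∈ Mov, (n - A.card) := by
    rw [Omega, ← Finset.sum_filter_add_sum_filter_not 𝓐 (fun A => setUvf U v f A ∈ 𝓐)]
  have hdisj : Disjoint (Mov.image (setUvf U v f)) Fix := by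
    rw [Finset.disjoint_left]
    rintro X hX hX2
    obtain ⟨A, hA, rfl⟩ := Finset.mem_image.1 hX
    exact (Finset.mem_filter.1 hA).2 (Finset.mem_filter.1 hX2).1
  have himg : Omega n (famUvf U v f 𝓐) =
      ∑ A ∈ Mov, (n - (A.card + 1)) + ∑ A ∈ Fix, (n - A.card) := by
    rw [Omega, famUvf_eq hv hf, ← hMovdef, ← hFixdef, Finset.sum_union hdisj]
    congr 1
    rw [Finset.sum_image]
    · apply Finset.sum_congr rfl
      intro A hA
      rw [card_setUvf hv hf (hvnot A hA)]
    · intro A hA B hB h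
      exact setUvf_injOn hv hf (hvnot A hA) (hvnot B hB) h
  rw [himg, hsplit]
  have : ∑ A ∈ Mov, (n - (A.card + 1)) < ∑ A ∈ Mov, (n - A.card) := by
    apply Finset.sum_lt_sum_of_nonempty hMov
    intro A hA
    have := hcardlt A hA
    omega
  omega

/-- Construction of a `(U,v,f)` compression moving `A` to `B`. -/
lemma exists_uvf (hcard : B.card = A.card + 1) :
    ∃ (U : Finset ℕ) (v : ℕ) (g : ℕ → ℕ), IsPairing g U ∧ v ∉ U ∧
      U ⊆ A ∪ B ∧ v ∈ B ∧ setUvf U v g A = B := by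
  classical
  set X := A \ B with hX
  set Y' := B \ A with hY'
  have hcards : X.card + 1 = Y'.card := by
    have h1 : X.card + (A ∩ B).card = A.card := Finset.card_sdiff_add_card_inter A B
    have h2 : Y'.card + (B ∩ A).card = B.card := Finset.card_sdiff_add_card_inter B A
    have h3 : (A ∩ B).card = (B ∩ A).card := by rw [Finset.inter_comm]
    omega
  have hY'ne : Y'.Nonempty := Finset.card_pos.1 (by omega)
  obtain ⟨v, hv⟩ := hY'ne
  set Y := Y'.erase v with hY
  have hYcard : Y.card = X.card := by
    rw [hY, Finset.card_erase_of_mem hv]; omega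
  have hXY : Disjoint X Y := by
    rw [Finset.disjoint_left]
    intro x hx hx2
    have hx' := Finset.mem_sdiff.1 hx
    have hx2' := Finset.mem_sdiff.1 (Finset.mem_of_mem_erase hx2)
    exact hx2'.2 hx'.1
  have hYX : Disjoint Y X := hXY.symm
  set e : {x // x ∈ X} ≃ {x // x ∈ Y} := Finset.equivOfCardEq hYcard.symm with he
  set g : ℕ → ℕ := fun x =>
    if hx : x ∈ X then (e ⟨x, hx⟩ : ℕ)
    else if hx : x ∈ Y then (e.symm ⟨x, hx⟩ : ℕ) else x with hg
  have hgX : ∀ x (hx : x ∈ X), g x = (e ⟨x, hx⟩ : ℕ) := by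
    intro x hx; rw [hg]; simp [hx]
  have hgY : ∀ x (hx : x ∈ Y), g x = (e.symm ⟨x, hx⟩ : ℕ) := by
    intro x hx
    have hxX : x ∉ X := Finset.disjoint_left.1 hYX hx
    rw [hg]; simp [hxX, hx]
  have hgXmem : ∀ x (hx : x ∈ X), g x ∈ Y := by
    intro x hx; rw [hgX x hx]; exact (e ⟨x, hx⟩).2
  have hgYmem : ∀ x (hx : x ∈ Y), g x ∈ X := by
    intro x hx; rw [hgY x hx]; exact (e.symm ⟨x, hx⟩).2
  refine ⟨X ∪ Y, v, g, ⟨?_, ?_, ?_⟩, ?_, ?_, ?_, ?_⟩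
  · -- g maps U into U
    intro x hx
    rcases Finset.mem_union.1 hx with hx | hx
    · exact Finset.mem_union.2 (Or.inr (hgXmem x hx))
    · exact Finset.mem_union.2 (Or.inl (hgYmem x hx))
  · -- involution
    intro x hx
    rcases Finset.mem_union.1 hx with hx | hx
    · have h1 := hgX x hx
      have h2 : g x ∈ Y := hgXmem x hx
      rw [h1] at h2 ⊢
      rw [hgY _ h2]
      have : (⟨(e ⟨x, hx⟩ : ℕ), h2⟩ : {y // y ∈ Y}) = e ⟨x, hx⟩ := Subtype.ext rfl
      rw [this, Equiv.symm_apply_apply]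
    · have h1 := hgY x hx
      have h2 : g x ∈ X := hgYmem x hx
      rw [h1] at h2 ⊢
      rw [hgX _ h2]
      have : (⟨(e.symm ⟨x, hx⟩ : ℕ), h2⟩ : {y // y ∈ X}) = e.symm ⟨x, hx⟩ := Subtype.ext rfl
      rw [this, Equiv.apply_symm_apply]
  · -- no fixed points
    intro x hx hfix
    rcases Finset.mem_union.1 hx with hx | hx
    · have : g x ∈ Y := hgXmem x hx
      rw [hfix] at this
      exact Finset.disjoint_left.1 hXY hx this
    · have : g x ∈ X := hgYmem x hx
      rw [hfix] at this
      exact Finset.disjoint_left.1 hYX hx this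
  · -- v ∉ U
    intro hvU
    rcases Finset.mem_union.1 hvU with hvU | hvU
    · exact (Finset.mem_sdiff.1 hvU).2 (Finset.mem_sdiff.1 hv).1
    · exact Finset.notMem_erase v Y' hvU
  · -- U ⊆ A ∪ B
    intro x hx
    rcases Finset.mem_union.1 hx with hx | hx
    · exact Finset.mem_union.2 (Or.inl (Finset.mem_sdiff.1 hx).1)
    · exact Finset.mem_union.2 (Or.inr (Finset.mem_sdiff.1 (Finset.mem_of_mem_erase hx)).1)
  · exact (Finset.mem_sdiff.1 hv).1
  · -- setUvf A = B
    have hvA : v ∉ A := (Finset.mem_sdiff.1 hv).2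
    rw [setUvf_of_not_mem hvA]
    have hAU : A ∩ (X ∪ Y) = X := by
      ext x
      simp only [Finset.mem_inter, Finset.mem_union]
      constructor
      · rintro ⟨hxA, hx | hx⟩
        · exact hx
        · exact absurd hxA (fun h => (Finset.mem_sdiff.1 (Finset.mem_of_mem_erase hx)).2 h)
      · intro hx
        exact ⟨(Finset.mem_sdiff.1 hx).1, Or.inl hx⟩
    have himgXY : X.image g = Y := by
      apply Finset.eq_of_subset_of_card_le
      · intro y hy
        obtain ⟨x, hx, rfl⟩ := Finset.mem_image.1 hy
        exact hgXmem x hx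
      · rw [Finset.card_image_of_injOn]
        · omega
        · intro x hx y hy hxy
          rw [hgX x hx, hgX y hy] at hxy
          have : (e ⟨x, hx⟩) = (e ⟨y, hy⟩) := Subtype.ext hxy
          have h2 := e.injective this
          exact congrArg Subtype.val h2
    have hAdiff : A \ (X ∪ Y) = A ∩ B := by
      ext x
      simp only [Finset.mem_sdiff, Finset.mem_union, Finset.mem_inter]
      constructor
      · rintro ⟨hxA, hnot⟩
        by_cases hxB : x ∈ B
        · exact ⟨hxA, hxB⟩
        · exact absurd (Or.inl (Finset.mem_sdiff.2 ⟨hxA, hxB⟩)) hnot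
      · rintro ⟨hxA, hxB⟩
        refine ⟨hxA, ?_⟩
        rintro (hx | hx)
        · exact (Finset.mem_sdiff.1 hx).2 hxB
        · exact (Finset.mem_sdiff.1 (Finset.mem_of_mem_erase hx)).2 hxA
    rw [hAU, himgXY, hAdiff]
    -- Y ∪ {v} ∪ (A ∩ B) = B
    have h1 : Y ∪ {v} = Y' := by
      rw [hY, Finset.union_comm]
      have : {v} ∪ Y'.erase v = insert v (Y'.erase v) := by
        rw [Finset.insert_eq]
      rw [this, Finset.insert_erase hv]
    rw [h1]
    ext x
    simp only [Finset.mem_union, Finset.mem_sdiff, Finset.mem_inter, hY']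
    constructor
    · rintro (hx | hx)
      · exact hx.1
      · exact hx.2
    · intro hx
      by_cases hxA : x ∈ A
      · exact Or.inr ⟨hxA, hx⟩
      · exact Or.inl ⟨hx, hxA⟩

end UvfProof

theorem stmt0 (n r : ℕ) (hn : 0 < n) (hr : 0 < r) (hrn : 2 * r ≤ n)
    (p : ℝ) (hp0 : 0 < p) (hp1 : p < 1)
    (𝓐 : Finset (Finset ℕ)) (h𝓐 : 𝓐 ⊆ (Finset.Icc 1 n).powerset)
    (hcard : 𝓐.card = ∑ j ∈ Finset.Icc r n, n.choose j) :
    probInter p 𝓐 ≤ probInter p (atLeast n r) := by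
  classical
  open UvfProof Finset in
  suffices H : ∀ (k : ℕ) (𝓑 : Finset (Finset ℕ)), UvfProof.Omega n 𝓑 < k →
      𝓑 ⊆ (Finset.Icc 1 n).powerset → 𝓑.card = ∑ j ∈ Finset.Icc r n, n.choose j →
      probInter p 𝓑 ≤ probInter p (atLeast n r) by
    exact H (UvfProof.Omega n 𝓐 + 1) 𝓐 (Nat.lt_succ_self _) h𝓐 hcard
  intro k
  induction k with
  | zero => intro 𝓑 h; exact absurd h (Nat.not_lt_zero _)
  | succ k IH =>
    intro 𝓑 hΩ h𝓑 hcard𝓑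
    by_cases hcl : ∀ A ∈ 𝓑, ∀ B ⊆ Finset.Icc 1 n, B.card = A.card + 1 → B ∈ 𝓑
    · -- closed case: 𝓑 = atLeast n r
      have hlevels : ∀ j, ∀ A ∈ 𝓑, A.card < j → j ≤ n →
          ∀ B ⊆ Finset.Icc 1 n, B.card = j → B ∈ 𝓑 := by
        intro j
        induction j with
        | zero => intro A _ h; omega
        | succ j IHj =>
          intro A hA hAj hjn B hBsub hBcard
          by_cases hcase : A.card = j
          · exact hcl A hA B hBsub (by omega)
          · obtain ⟨B', hB'sub, hB'card⟩ :=
              Finset.exists_subset_card_eq (n := j) (s := B) (by omega)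
            have hB' : B' ∈ 𝓑 :=
              IHj A hA (by omega) (by omega) B' (hB'sub.trans hBsub) hB'card
            exact hcl B' hB' B hBsub (by omega)
      by_cases hall : ∀ A ∈ 𝓑, r ≤ A.card
      · have hsub : 𝓑 ⊆ atLeast n r := by
          intro A hA
          exact Finset.mem_filter.2 ⟨h𝓑 hA, hall A hA⟩
        have heq : 𝓑 = atLeast n r := by
          apply Finset.eq_of_subset_of_card_le hsub
          rw [UvfProof.atLeast_card, ← hcard𝓑]
        rw [heq]
      · exfalso
        push_neg at hall
        obtain ⟨A₀, hA₀, hA₀r⟩ := hall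
        set T := (Finset.Icc r n).biUnion
          (fun j => Finset.powersetCard j (Finset.Icc 1 n)) with hT
        have hTsub : T ⊆ 𝓑 := by
          intro B hB
          obtain ⟨j, hj, hBj⟩ := Finset.mem_biUnion.1 hB
          obtain ⟨hj1, hj2⟩ := Finset.mem_Icc.1 hj
          obtain ⟨hBsub, hBcard⟩ := Finset.mem_powersetCard.1 hBj
          exact hlevels j A₀ hA₀ (by omega) hj2 B hBsub hBcard
        have hA₀T : A₀ ∉ T := by
          intro hc
          obtain ⟨j, hj, hBj⟩ := Finset.mem_biUnion.1 hc
          obtain ⟨hj1, _⟩ := Finset.mem_Icc.1 hj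
          obtain ⟨_, hBcard⟩ := Finset.mem_powersetCard.1 hBj
          omega
        have hins : insert A₀ T ⊆ 𝓑 := Finset.insert_subset hA₀ hTsub
        have hle : T.card + 1 ≤ 𝓑.card := by
          have h1 := Finset.card_le_card hins
          rwa [Finset.card_insert_of_notMem hA₀T] at h1
        have hTcard : T.card = ∑ j ∈ Finset.Icc r n, n.choose j :=
          UvfProof.biUnion_levels_card n r
        omega
    · -- compression step
      push_neg at hcl
      obtain ⟨A, hA, B, hBsub, hBcard, hBnot⟩ := hcl
      obtain ⟨U, v, g, hpair, hvU, hUsub, hvB, hset⟩ :=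
        UvfProof.exists_uvf (A := A) (B := B) hBcard
      have hUIcc : U ⊆ Finset.Icc 1 n := by
        refine hUsub.trans ?_
        intro x hx
        rcases Finset.mem_union.1 hx with hx | hx
        · exact Finset.mem_powerset.1 (h𝓑 hA) hx
        · exact hBsub hx
      have hvIcc : v ∈ Finset.Icc 1 n := hBsub hvB
      have hMov : (𝓑.filter (fun C => setUvf U v g C ∉ 𝓑)).Nonempty :=
        ⟨A, Finset.mem_filter.2 ⟨hA, by rw [hset]; exact hBnot⟩⟩
      have hΩ' : UvfProof.Omega n (famUvf U v g 𝓑) < k := by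
        have := UvfProof.Omega_famUvf_lt hvU hpair h𝓑 hUIcc hvIcc hMov
        omega
      have hstep : probInter p 𝓑 ≤ probInter p (famUvf U v g 𝓑) :=
        UvfProof.probInter_le_famUvf hvU hpair (le_of_lt hp0) (le_of_lt hp1)
      refine le_trans hstep (IH (famUvf U v g 𝓑) hΩ' ?_ ?_)
      · exact UvfProof.famUvf_powerset hpair hUIcc hvIcc h𝓑
      · rw [UvfProof.famUvf_card hvU hpair]; exact hcard𝓑
end

section
/- Let $n$ be a positive integer, let $p \in (0,1)$, let $i$ be a positive integer with $i \le 2^{n-1}$, and let $r$ be such that $\sum_{j=r+1}^n \binom{n}{j} \le 2^{n-1}+i \le \sum_{j=r}^n \binom{n}{j}$. Then there exists a family $\mathcal{A}$ with $[n]^{(\geq r+1)} \subseteq \mathcal{A} \subseteq [n]^{(\geq r)}$ and $|\mathcal{A}| = 2^{n-1}+i$ such that for every family $\mathcal{B} \subseteq \mathcal{P}[n]$ with $|\mathcal{B}| = 2^{n-1}+i$, we have $\mathbb{P}(\mathcal{B}_p \text{ is intersecting}) \le \mathbb{P}(\mathcal{A}_p \text{ is intersecting})$. -/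
open Finset

set_option linter.unusedSectionVars false

-- Abstract compression machinery
section Master

variable (σ : Finset ℕ → Finset ℕ) (𝓜 : Finset (Finset ℕ))

/-- kept part -/
def famK : Finset (Finset ℕ) := 𝓜.filter (fun A => σ A ∈ 𝓜)
/-- moved part -/
def famM : Finset (Finset ℕ) := 𝓜.filter (fun A => σ A ∉ 𝓜)
/-- the compressed family -/
def famN : Finset (Finset ℕ) := famK σ 𝓜 ∪ (famM σ 𝓜).image σ

/-- one cascade step -/
def stgStep (𝓒 S : Finset (Finset ℕ)) : Finset (Finset ℕ) :=
  S ∪ 𝓒.filter (fun A => ∃ Q ∈ S, A ∩ σ Q = ∅)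

/-- cascade stages for a subfamily 𝓒 -/
def stg (𝓒 : Finset (Finset ℕ)) : ℕ → Finset (Finset ℕ)
  | 0 => 𝓒.filter (fun A => σ A ∉ 𝓜)
  | t+1 => stgStep σ 𝓒 (stg 𝓒 t)

/-- the cascade closure -/
def scl (𝓒 : Finset (Finset ℕ)) : Finset (Finset ℕ) := stg σ 𝓜 𝓒 𝓒.card

/-- the image of a subfamily under the compression-with-cascade -/
def phi (𝓒 : Finset (Finset ℕ)) : Finset (Finset ℕ) :=
  (𝓒 \ scl σ 𝓜 𝓒) ∪ (scl σ 𝓜 𝓒).image σ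

variable {𝓒 : Finset (Finset ℕ)}

lemma stg_subset : ∀ t, stg σ 𝓜 𝓒 t ⊆ 𝓒
  | 0 => filter_subset _ _
  | (t+1) => union_subset (stg_subset t) (filter_subset _ _)

lemma stg_mono_succ (t : ℕ) : stg σ 𝓜 𝓒 t ⊆ stg σ 𝓜 𝓒 (t+1) := subset_union_left

lemma stg_mono {t u : ℕ} (h : t ≤ u) : stg σ 𝓜 𝓒 t ⊆ stg σ 𝓜 𝓒 u := by
  induction u with
  | zero => simp [Nat.le_zero.mp h, Finset.Subset.refl]
  | succ u ih =>
    rcases Nat.lt_or_ge t (u+1) with h' | h'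
    · exact (ih (Nat.lt_succ_iff.mp h')).trans (stg_mono_succ σ 𝓜 u)
    · have : t = u + 1 := le_antisymm h h'
      rw [this]

lemma stg_stable_of_eq {t : ℕ} (h : stg σ 𝓜 𝓒 t = stg σ 𝓜 𝓒 (t+1)) :
    ∀ k, stg σ 𝓜 𝓒 (t + k) = stg σ 𝓜 𝓒 t := by
  intro k
  induction k with
  | zero => rfl
  | succ k ih =>
    have : stg σ 𝓜 𝓒 (t + k + 1) = stgStep σ 𝓒 (stg σ 𝓜 𝓒 (t + k)) := rfl
    rw [show t + (k+1) = (t+k) + 1 from rfl, this, ih]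
    exact ((show stg σ 𝓜 𝓒 (t+1) = stgStep σ 𝓒 (stg σ 𝓜 𝓒 t) from rfl) ▸ h).symm

lemma stg_stable_or_card : ∀ t, stg σ 𝓜 𝓒 t = stg σ 𝓜 𝓒 (t+1) ∨ t + 1 ≤ (stg σ 𝓜 𝓒 (t+1)).card := by
  intro t
  induction t with
  | zero =>
    by_cases h : stg σ 𝓜 𝓒 0 = stg σ 𝓜 𝓒 (0+1)
    · exact Or.inl h
    · right
      have hss : stg σ 𝓜 𝓒 0 ⊂ stg σ 𝓜 𝓒 (0+1) :=
        lt_of_le_of_ne (stg_mono_succ σ 𝓜 0) h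
      have h2 := card_lt_card hss
      omega
  | succ t ih =>
    by_cases h : stg σ 𝓜 𝓒 (t+1) = stg σ 𝓜 𝓒 (t+1+1)
    · exact Or.inl h
    · right
      have hlt : (stg σ 𝓜 𝓒 (t+1)).card < (stg σ 𝓜 𝓒 (t+1+1)).card :=
        card_lt_card (lt_of_le_of_ne (stg_mono_succ σ 𝓜 (t+1)) h)
      rcases ih with h' | h'
      · exact absurd ((stg_stable_of_eq σ 𝓜 h' 2).trans (stg_stable_of_eq σ 𝓜 h' 1).symm).symm h
      · omega

lemma stg_le_scl (t : ℕ) : stg σ 𝓜 𝓒 t ⊆ scl σ 𝓜 𝓒 := by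
  have hfix : stg σ 𝓜 𝓒 𝓒.card = stg σ 𝓜 𝓒 (𝓒.card + 1) := by
    rcases stg_stable_or_card σ 𝓜 𝓒.card with h | h
    · exact h
    · exact absurd (card_le_card (stg_subset σ 𝓜 (𝓒 := 𝓒) (𝓒.card + 1))) (by omega)
  rcases Nat.le_total t 𝓒.card with h | h
  · exact stg_mono σ 𝓜 h
  · obtain ⟨k, rfl⟩ := Nat.exists_eq_add_of_le h
    rw [stg_stable_of_eq σ 𝓜 hfix k]
    exact Finset.Subset.refl _

lemma scl_subset : scl σ 𝓜 𝓒 ⊆ 𝓒 := stg_subset σ 𝓜 _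

lemma scl_closure {A : Finset ℕ} (hA : A ∈ 𝓒) (h : ∃ Q ∈ scl σ 𝓜 𝓒, A ∩ σ Q = ∅) :
    A ∈ scl σ 𝓜 𝓒 := by
  have : A ∈ stg σ 𝓜 𝓒 (𝓒.card + 1) := mem_union.mpr (Or.inr (mem_filter.mpr ⟨hA, h⟩))
  exact stg_le_scl σ 𝓜 _ this

lemma scl_zero {A : Finset ℕ} (hA : A ∈ 𝓒) (h : σ A ∉ 𝓜) : A ∈ scl σ 𝓜 𝓒 :=
  stg_le_scl σ 𝓜 0 (mem_filter.mpr ⟨hA, h⟩)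

lemma scl_spec {A : Finset ℕ} (hA : A ∈ scl σ 𝓜 𝓒) :
    σ A ∉ 𝓜 ∨ ∃ Q ∈ scl σ 𝓜 𝓒, A ∩ σ Q = ∅ := by
  have : ∀ t, ∀ A ∈ stg σ 𝓜 𝓒 t, σ A ∉ 𝓜 ∨ ∃ Q ∈ scl σ 𝓜 𝓒, A ∩ σ Q = ∅ := by
    intro t
    induction t with
    | zero => intro A hA; exact Or.inl (mem_filter.mp hA).2
    | succ t ih =>
      intro A hA
      rcases mem_union.mp hA with h | h
      · exact ih A h
      · obtain ⟨Q, hQ, hAQ⟩ := (mem_filter.mp h).2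
        exact Or.inr ⟨Q, stg_le_scl σ 𝓜 t hQ, hAQ⟩
  exact this _ A hA

end Master
section Master2

variable {σ : Finset ℕ → Finset ℕ} {v : ℕ} {𝓜 : Finset (Finset ℕ)}
variable (h1 : ∀ A, v ∈ σ A)
variable (h2 : ∀ A, v ∈ A → σ A = A)
variable (hinj : ∀ A B, v ∉ A → v ∉ B → σ A = σ B → A = B)
variable (h5 : ∀ A B : Finset ℕ, (A ∩ B).Nonempty → (A ∩ σ B).Nonempty → (σ A ∩ B).Nonempty)

include h2 in
lemma famM_vfree {A : Finset ℕ} (hA : A ∈ famM σ 𝓜) : v ∉ A := by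
  obtain ⟨hA𝓜, hσ⟩ := mem_filter.mp hA
  intro hv
  exact hσ (by rw [h2 A hv]; exact hA𝓜)

include h1 h2 in
lemma stg_vfree {𝓒 : Finset (Finset ℕ)} (h𝓒 : 𝓒 ⊆ 𝓜) :
    ∀ t, ∀ A ∈ stg σ 𝓜 𝓒 t, v ∉ A := by
  intro t
  induction t with
  | zero =>
    intro A hA hv
    obtain ⟨hA𝓒, hσ⟩ := mem_filter.mp hA
    exact hσ (by rw [h2 A hv]; exact h𝓒 hA𝓒)
  | succ t ih =>
    intro A hA hv
    rcases mem_union.mp hA with h | h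
    · exact ih A h hv
    · obtain ⟨Q, _, hAQ⟩ := (mem_filter.mp h).2
      have : v ∈ A ∩ σ Q := mem_inter.mpr ⟨hv, h1 Q⟩
      rw [hAQ] at this
      exact absurd this (notMem_empty v)

include h1 h2 in
lemma scl_vfree {𝓒 : Finset (Finset ℕ)} (h𝓒 : 𝓒 ⊆ 𝓜) {A : Finset ℕ}
    (hA : A ∈ scl σ 𝓜 𝓒) : v ∉ A := stg_vfree h1 h2 h𝓒 _ A hA

/-- a set that survives the cascade meets all compressed members -/
lemma kept_meets {𝓒 : Finset (Finset ℕ)} {A Q : Finset ℕ}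
    (hA : A ∈ 𝓒) (hA' : A ∉ scl σ 𝓜 𝓒) (hQ : Q ∈ scl σ 𝓜 𝓒) :
    (A ∩ σ Q).Nonempty := by
  by_contra h
  exact hA' (scl_closure σ 𝓜 hA ⟨Q, hQ, not_nonempty_iff_eq_empty.mp h⟩)

include h5 in
lemma scl_image_not_mem {𝓒 : Finset (Finset ℕ)} (h𝓒 : 𝓒 ⊆ 𝓜) (hint : IsIntersecting 𝓒)
    {A : Finset ℕ} (hA : A ∈ scl σ 𝓜 𝓒) : σ A ∉ 𝓒 := by
  intro hσA
  rcases scl_spec σ 𝓜 hA with h | ⟨Q, hQ, hAQ⟩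
  · exact h (h𝓒 hσA)
  · have hQ𝓒 : Q ∈ 𝓒 := scl_subset σ 𝓜 hQ
    have hA𝓒 : A ∈ 𝓒 := scl_subset σ 𝓜 hA
    have h1' : (Q ∩ A).Nonempty := by
      have := hint A hA𝓒 Q hQ𝓒
      rwa [inter_comm] at this
    have h2' : (Q ∩ σ A).Nonempty := by
      have := hint (σ A) hσA Q hQ𝓒
      rwa [inter_comm] at this
    have := h5 Q A h1' h2'
    rw [inter_comm, hAQ] at this
    exact this.ne_empty rfl

include h1 h2 hinj h5 in
lemma phi_card {𝓒 : Finset (Finset ℕ)} (h𝓒 : 𝓒 ⊆ 𝓜) (hint : IsIntersecting 𝓒) :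
    (phi σ 𝓜 𝓒).card = 𝓒.card := by
  have hdisj : Disjoint (𝓒 \ scl σ 𝓜 𝓒) ((scl σ 𝓜 𝓒).image σ) := by
    rw [disjoint_right]
    intro X hX hX'
    obtain ⟨A, hA, rfl⟩ := mem_image.mp hX
    exact scl_image_not_mem h5 h𝓒 hint hA (mem_sdiff.mp hX').1
  rw [phi, card_union_of_disjoint hdisj, card_image_of_injOn, card_sdiff_add_card_eq_card (scl_subset σ 𝓜)]
  intro A hA B hB hAB
  exact hinj A B (scl_vfree h1 h2 h𝓒 hA) (scl_vfree h1 h2 h𝓒 hB) hAB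

include h1 in
lemma phi_int {𝓒 : Finset (Finset ℕ)} (hint : IsIntersecting 𝓒) :
    IsIntersecting (phi σ 𝓜 𝓒) := by
  intro X hX Y hY
  rcases mem_union.mp hX with hX | hX <;> rcases mem_union.mp hY with hY | hY
  · exact hint X (mem_sdiff.mp hX).1 Y (mem_sdiff.mp hY).1
  · obtain ⟨Q, hQ, rfl⟩ := mem_image.mp hY
    exact kept_meets (mem_sdiff.mp hX).1 (mem_sdiff.mp hX).2 hQ
  · obtain ⟨Q, hQ, rfl⟩ := mem_image.mp hX
    rw [inter_comm]
    exact kept_meets (mem_sdiff.mp hY).1 (mem_sdiff.mp hY).2 hQ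
  · obtain ⟨Q, _, rfl⟩ := mem_image.mp hX
    obtain ⟨Q', _, rfl⟩ := mem_image.mp hY
    exact ⟨v, mem_inter.mpr ⟨h1 Q, h1 Q'⟩⟩

include h1 h2 in
lemma phi_subset_famN {𝓒 : Finset (Finset ℕ)} (h𝓒 : 𝓒 ⊆ 𝓜) :
    phi σ 𝓜 𝓒 ⊆ famN σ 𝓜 := by
  intro X hX
  rcases mem_union.mp hX with hX | hX
  · obtain ⟨hX𝓒, hX'⟩ := mem_sdiff.mp hX
    apply mem_union.mpr; left
    refine mem_filter.mpr ⟨h𝓒 hX𝓒, ?_⟩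
    by_contra h
    exact hX' (scl_zero σ 𝓜 hX𝓒 h)
  · obtain ⟨A, hA, rfl⟩ := mem_image.mp hX
    have hA𝓜 : A ∈ 𝓜 := h𝓒 (scl_subset σ 𝓜 hA)
    by_cases h : σ A ∈ 𝓜
    · apply mem_union.mpr; left
      exact mem_filter.mpr ⟨h, by rw [h2 (σ A) (h1 A)]; exact h⟩
    · apply mem_union.mpr; right
      exact mem_image.mpr ⟨A, mem_filter.mpr ⟨hA𝓜, h⟩, rfl⟩

include h1 h2 hinj h5 in
lemma phi_inj {𝓒 𝓓 : Finset (Finset ℕ)} (h𝓒 : 𝓒 ⊆ 𝓜) (h𝓓 : 𝓓 ⊆ 𝓜)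
    (hi𝓒 : IsIntersecting 𝓒) (hi𝓓 : IsIntersecting 𝓓)
    (heq : phi σ 𝓜 𝓒 = phi σ 𝓜 𝓓) : 𝓒 = 𝓓 := by
  -- first: scl 𝓒 ⊆ scl 𝓓 (and symmetrically)
  have key : ∀ (𝓒 𝓓 : Finset (Finset ℕ)), 𝓒 ⊆ 𝓜 → 𝓓 ⊆ 𝓜 → IsIntersecting 𝓒 →
      IsIntersecting 𝓓 → phi σ 𝓜 𝓒 = phi σ 𝓜 𝓓 →
      ∀ t, stg σ 𝓜 𝓒 t ⊆ scl σ 𝓜 𝓓 := by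
    intro 𝓒 𝓓 h𝓒 h𝓓 hi𝓒 hi𝓓 heq t
    induction t with
    | zero =>
      intro A hA
      obtain ⟨hA𝓒, hσA⟩ := mem_filter.mp hA
      have hAs : A ∈ scl σ 𝓜 𝓒 := stg_le_scl σ 𝓜 0 hA
      have hmem : σ A ∈ phi σ 𝓜 𝓓 := heq ▸ (mem_union.mpr (Or.inr (mem_image.mpr ⟨A, hAs, rfl⟩)))
      rcases mem_union.mp hmem with h | h
      · exact absurd (h𝓓 (mem_sdiff.mp h).1) hσA
      · obtain ⟨A', hA', hAA'⟩ := mem_image.mp h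
        have : A' = A := hinj A' A (scl_vfree h1 h2 h𝓓 hA') (scl_vfree h1 h2 h𝓒 hAs) hAA'
        exact this ▸ hA'
    | succ t ih =>
      intro A hA
      rcases mem_union.mp hA with h | h
      · exact ih h
      · obtain ⟨hA𝓒, Q, hQ, hAQ⟩ := (by
          obtain ⟨x, y⟩ := mem_filter.mp h
          exact ⟨x, y⟩ : A ∈ 𝓒 ∧ ∃ Q ∈ stg σ 𝓜 𝓒 t, A ∩ σ Q = ∅)
        have hQT : Q ∈ scl σ 𝓜 𝓓 := ih hQ
        by_contra hAT
        have hAs : A ∈ scl σ 𝓜 𝓒 := stg_le_scl σ 𝓜 (t+1) hA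
        have hmem : σ A ∈ phi σ 𝓜 𝓓 := heq ▸ (mem_union.mpr (Or.inr (mem_image.mpr ⟨A, hAs, rfl⟩)))
        rcases mem_union.mp hmem with hm | hm
        · -- σ A ∈ 𝓓 \ scl 𝓓 : contradiction via h5
          have hσA𝓓 : σ A ∈ 𝓓 := (mem_sdiff.mp hm).1
          have hQ𝓓 : Q ∈ 𝓓 := scl_subset σ 𝓜 hQT
          have hQ𝓒 : Q ∈ 𝓒 := scl_subset σ 𝓜 (stg_le_scl σ 𝓜 t hQ)
          have hQA : (Q ∩ A).Nonempty := by
            have := hi𝓒 A hA𝓒 Q hQ𝓒; rwa [inter_comm] at this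
          have hQσA : (Q ∩ σ A).Nonempty := by
            have := hi𝓓 (σ A) hσA𝓓 Q hQ𝓓; rwa [inter_comm] at this
          have := h5 Q A hQA hQσA
          rw [inter_comm, hAQ] at this
          exact this.ne_empty rfl
        · obtain ⟨A', hA', hAA'⟩ := mem_image.mp hm
          have : A' = A := hinj A' A (scl_vfree h1 h2 h𝓓 hA') (scl_vfree h1 h2 h𝓒 hAs) hAA'
          exact hAT (this ▸ hA')
  have hS : scl σ 𝓜 𝓒 = scl σ 𝓜 𝓓 :=
    Finset.Subset.antisymm (key 𝓒 𝓓 h𝓒 h𝓓 hi𝓒 hi𝓓 heq _) (key 𝓓 𝓒 h𝓓 h𝓒 hi𝓓 hi𝓒 heq.symm _)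
  -- now conclude 𝓒 = 𝓓
  have main : ∀ (𝓒 𝓓 : Finset (Finset ℕ)), 𝓒 ⊆ 𝓜 → 𝓓 ⊆ 𝓜 → IsIntersecting 𝓒 →
      IsIntersecting 𝓓 → phi σ 𝓜 𝓒 = phi σ 𝓜 𝓓 → scl σ 𝓜 𝓒 = scl σ 𝓜 𝓓 → 𝓒 ⊆ 𝓓 := by
    intro 𝓒 𝓓 h𝓒 h𝓓 hi𝓒 hi𝓓 heq hS A hA
    by_cases hAs : A ∈ scl σ 𝓜 𝓒
    · exact scl_subset σ 𝓜 (hS ▸ hAs)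
    · have : A ∈ phi σ 𝓜 𝓓 := heq ▸ (mem_union.mpr (Or.inl (mem_sdiff.mpr ⟨hA, hAs⟩)))
      rcases mem_union.mp this with h | h
      · exact (mem_sdiff.mp h).1
      · obtain ⟨A', hA', hAA'⟩ := mem_image.mp h
        exfalso
        have : σ A' ∉ 𝓒 := scl_image_not_mem h5 h𝓒 hi𝓒 (hS ▸ hA')
        exact this (hAA' ▸ hA)
  exact Finset.Subset.antisymm (main 𝓒 𝓓 h𝓒 h𝓓 hi𝓒 hi𝓓 heq hS)
    (main 𝓓 𝓒 h𝓓 h𝓒 hi𝓓 hi𝓒 heq.symm hS.symm)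

end Master2
section Master3

variable {σ : Finset ℕ → Finset ℕ} {v : ℕ} {𝓜 : Finset (Finset ℕ)}
variable (h1 : ∀ A, v ∈ σ A)
variable (h2 : ∀ A, v ∈ A → σ A = A)
variable (hinj : ∀ A B, v ∉ A → v ∉ B → σ A = σ B → A = B)
variable (h5 : ∀ A B : Finset ℕ, (A ∩ B).Nonempty → (A ∩ σ B).Nonempty → (σ A ∩ B).Nonempty)

include h2 hinj in
lemma famN_card : (famN σ 𝓜).card = 𝓜.card := by
  have hdisj : Disjoint (famK σ 𝓜) ((famM σ 𝓜).image σ) := by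
    rw [disjoint_right]
    intro X hX hX'
    obtain ⟨A, hA, rfl⟩ := mem_image.mp hX
    exact (mem_filter.mp hA).2 (mem_filter.mp hX').1
  rw [famN, card_union_of_disjoint hdisj, card_image_of_injOn, famK, famM,
    card_filter_add_card_filter_not]
  intro A hA B hB hAB
  exact hinj A B (famM_vfree h2 hA) (famM_vfree h2 hB) hAB

lemma famN_subset {G : Finset ℕ} (h𝓜 : 𝓜 ⊆ G.powerset) (hσ : ∀ A ∈ 𝓜, σ A ⊆ G) :
    famN σ 𝓜 ⊆ G.powerset := by
  intro X hX
  rcases mem_union.mp hX with h | h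
  · exact h𝓜 (mem_filter.mp h).1
  · obtain ⟨A, hA, rfl⟩ := mem_image.mp h
    exact mem_powerset.mpr (hσ A (mem_filter.mp hA).1)

include h2 hinj in
lemma famN_sizes (hsz : ∀ A ∈ famM σ 𝓜, (σ A).card = A.card + 1) :
    ∑ X ∈ famN σ 𝓜, X.card = (∑ X ∈ 𝓜, X.card) + (famM σ 𝓜).card := by
  have hdisj : Disjoint (famK σ 𝓜) ((famM σ 𝓜).image σ) := by
    rw [disjoint_right]
    intro X hX hX'
    obtain ⟨A, hA, rfl⟩ := mem_image.mp hX
    exact (mem_filter.mp hA).2 (mem_filter.mp hX').1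
  have hinj' : ∀ A ∈ famM σ 𝓜, ∀ B ∈ famM σ 𝓜, σ A = σ B → A = B := by
    intro A hA B hB hAB
    exact hinj A B (famM_vfree h2 hA) (famM_vfree h2 hB) hAB
  rw [famN, sum_union hdisj, sum_image hinj']
  have : ∑ A ∈ famM σ 𝓜, (σ A).card = ∑ A ∈ famM σ 𝓜, (A.card + 1) :=
    Finset.sum_congr rfl (fun A hA => hsz A hA)
  rw [this, Finset.sum_add_distrib, Finset.sum_const, smul_eq_mul, mul_one]
  have hsplit : ∑ X ∈ famK σ 𝓜, X.card + ∑ X ∈ famM σ 𝓜, X.card = ∑ X ∈ 𝓜, X.card := by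
    rw [famK, famM, Finset.sum_filter_add_sum_filter_not]
  omega

include h1 h2 hinj h5 in
lemma master_prob {p : ℝ} (hp0 : 0 < p) (hp1 : p < 1) :
    probInter p 𝓜 ≤ probInter p (famN σ 𝓜) := by
  rw [probInter, probInter, famN_card h2 hinj]
  set h : Finset (Finset ℕ) → ℝ := fun 𝓧 => p ^ 𝓧.card * (1 - p) ^ (𝓜.card - 𝓧.card) with hh
  have hmem : ∀ 𝓒 ∈ 𝓜.powerset.filter IsIntersecting, 𝓒 ⊆ 𝓜 ∧ IsIntersecting 𝓒 := by
    intro 𝓒 h𝓒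
    exact ⟨mem_powerset.mp (mem_filter.mp h𝓒).1, (mem_filter.mp h𝓒).2⟩
  have hinjOn : ∀ 𝓒 ∈ 𝓜.powerset.filter IsIntersecting, ∀ 𝓓 ∈ 𝓜.powerset.filter IsIntersecting,
      phi σ 𝓜 𝓒 = phi σ 𝓜 𝓓 → 𝓒 = 𝓓 := by
    intro 𝓒 h𝓒 𝓓 h𝓓 heq
    exact phi_inj h1 h2 hinj h5 (hmem 𝓒 h𝓒).1 (hmem 𝓓 h𝓓).1 (hmem 𝓒 h𝓒).2 (hmem 𝓓 h𝓓).2 heq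
  calc ∑ 𝓑 ∈ 𝓜.powerset.filter IsIntersecting, h 𝓑
      = ∑ 𝓑 ∈ 𝓜.powerset.filter IsIntersecting, h (phi σ 𝓜 𝓑) := by
        apply Finset.sum_congr rfl
        intro 𝓒 h𝓒
        simp only [hh]
        rw [phi_card h1 h2 hinj h5 (hmem 𝓒 h𝓒).1 (hmem 𝓒 h𝓒).2]
    _ = ∑ 𝓑 ∈ (𝓜.powerset.filter IsIntersecting).image (phi σ 𝓜), h 𝓑 :=
        (Finset.sum_image hinjOn).symm
    _ ≤ ∑ 𝓑 ∈ (famN σ 𝓜).powerset.filter IsIntersecting, h 𝓑 := by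
        apply Finset.sum_le_sum_of_subset_of_nonneg
        · intro 𝓧 h𝓧
          obtain ⟨𝓒, h𝓒, rfl⟩ := mem_image.mp h𝓧
          refine mem_filter.mpr ⟨mem_powerset.mpr ?_, phi_int h1 (hmem 𝓒 h𝓒).2⟩
          exact phi_subset_famN h1 h2 (hmem 𝓒 h𝓒).1
        · intro 𝓧 _ _
          exact mul_nonneg (pow_nonneg hp0.le _) (pow_nonneg (by linarith) _)

end Master3
section UvfLemmas

variable {U : Finset ℕ} {v : ℕ} {f : ℕ → ℕ}
variable (hfU : ∀ x ∈ U, f x ∈ U)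
variable (hff : ∀ x ∈ U, f (f x) = x)
variable (hvU : v ∉ U)

lemma inter_union_sdiff' (s t : Finset ℕ) : s ∩ t ∪ s \ t = s := by
  ext x; simp only [mem_union, mem_inter, mem_sdiff]; tauto

lemma setUvf_h1 (X : Finset ℕ) : v ∈ setUvf U v f X := by
  rw [setUvf]
  split_ifs with h
  · exact h
  · simp

lemma setUvf_h2 (X : Finset ℕ) (h : v ∈ X) : setUvf U v f X = X := by
  rw [setUvf, if_pos h]

lemma setUvf_of_not_mem (X : Finset ℕ) (h : v ∉ X) :
    setUvf U v f X = (X ∩ U).image f ∪ {v} ∪ (X \ U) := by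
  rw [setUvf, if_neg h]

include hfU in
lemma setUvf_image_subset (X : Finset ℕ) : (X ∩ U).image f ⊆ U := by
  intro y hy
  obtain ⟨x, hx, rfl⟩ := mem_image.mp hy
  exact hfU x (mem_inter.mp hx).2

include hfU hff in
lemma setUvf_injOn (X : Finset ℕ) : Set.InjOn f ↑(X ∩ U) := by
  intro a ha b hb hab
  have ha' : a ∈ U := (mem_inter.mp (mem_coe.mp ha)).2
  have hb' : b ∈ U := (mem_inter.mp (mem_coe.mp hb)).2
  rw [← hff a ha', hab, hff b hb']

include hfU hff hvU in
lemma setUvf_inter_U (X : Finset ℕ) (h : v ∉ X) :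
    setUvf U v f X ∩ U = (X ∩ U).image f := by
  rw [setUvf_of_not_mem X h]
  ext y
  simp only [mem_inter, mem_union, mem_singleton, mem_sdiff]
  constructor
  · rintro ⟨(h1 | h1) | h1, h2⟩
    · exact h1
    · exact absurd h2 (h1 ▸ hvU)
    · exact absurd h2 h1.2
  · intro hy
    exact ⟨Or.inl (Or.inl hy), setUvf_image_subset hfU X hy⟩

include hfU hvU in
lemma setUvf_sdiff_U (X : Finset ℕ) (h : v ∉ X) :
    (setUvf U v f X \ U).erase v = X \ U := by
  rw [setUvf_of_not_mem X h]
  ext y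
  simp only [mem_erase, mem_sdiff, mem_union, mem_singleton]
  constructor
  · rintro ⟨hyv, (h1 | h1) | h1, h2⟩
    · exact absurd (setUvf_image_subset hfU X h1) h2
    · exact absurd h1 hyv
    · exact h1
  · intro hy
    refine ⟨fun hc => h (hc ▸ hy.1), Or.inr hy, hy.2⟩

include hfU hff hvU in
lemma setUvf_inj (X Y : Finset ℕ) (hX : v ∉ X) (hY : v ∉ Y)
    (h : setUvf U v f X = setUvf U v f Y) : X = Y := by
  have e1 : (X ∩ U).image f = (Y ∩ U).image f := by
    rw [← setUvf_inter_U hfU hff hvU X hX, ← setUvf_inter_U hfU hff hvU Y hY, h]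
  have key : ∀ Z : Finset ℕ, ((Z ∩ U).image f).image f = Z ∩ U := by
    intro Z
    rw [image_image]
    ext y
    simp only [mem_image, Function.comp_apply]
    constructor
    · rintro ⟨x, hx, rfl⟩
      rw [hff x (mem_inter.mp hx).2]; exact hx
    · intro hy; exact ⟨y, hy, hff y (mem_inter.mp hy).2⟩
  have e2 : X ∩ U = Y ∩ U := by rw [← key X, e1, key Y]
  have e3 : X \ U = Y \ U := by
    rw [← setUvf_sdiff_U hfU hvU X hX, ← setUvf_sdiff_U hfU hvU Y hY, h]
  rw [← inter_union_sdiff' X U, ← inter_union_sdiff' Y U, e2, e3]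

include hfU hff in
lemma setUvf_h5 (X Y : Finset ℕ) (hXY : (X ∩ Y).Nonempty)
    (hXsY : (X ∩ setUvf U v f Y).Nonempty) : (setUvf U v f X ∩ Y).Nonempty := by
  by_cases hvX : v ∈ X
  · rwa [setUvf_h2 X hvX]
  by_cases hvY : v ∈ Y
  · exact ⟨v, mem_inter.mpr ⟨setUvf_h1 X, hvY⟩⟩
  obtain ⟨y, hy⟩ := hXsY
  obtain ⟨hyX, hyσY⟩ := mem_inter.mp hy
  rw [setUvf_of_not_mem Y hvY] at hyσY
  rcases mem_union.mp hyσY with h | h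
  · rcases mem_union.mp h with h | h
    · -- y ∈ (Y ∩ U).image f
      obtain ⟨w, hw, rfl⟩ := mem_image.mp h
      have hwU : w ∈ U := (mem_inter.mp hw).2
      have hwY : w ∈ Y := (mem_inter.mp hw).1
      have hfwU : f w ∈ U := hfU w hwU
      have : f (f w) = w := hff w hwU
      refine ⟨w, mem_inter.mpr ⟨?_, hwY⟩⟩
      rw [setUvf_of_not_mem X hvX]
      apply mem_union.mpr; left; apply mem_union.mpr; left
      exact mem_image.mpr ⟨f w, mem_inter.mpr ⟨hyX, hfwU⟩, this⟩
    · -- y = v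
      rw [mem_singleton.mp h] at hyX
      exact absurd hyX hvX
  · -- y ∈ Y \ U
    refine ⟨y, mem_inter.mpr ⟨?_, (mem_sdiff.mp h).1⟩⟩
    rw [setUvf_of_not_mem X hvX]
    apply mem_union.mpr; right
    exact mem_sdiff.mpr ⟨hyX, (mem_sdiff.mp h).2⟩

include hfU hff hvU in
lemma setUvf_card (X : Finset ℕ) (h : v ∉ X) :
    (setUvf U v f X).card = X.card + 1 := by
  rw [setUvf_of_not_mem X h]
  have d1 : Disjoint ((X ∩ U).image f ∪ {v}) (X \ U) := by
    rw [disjoint_left]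
    intro y hy hy'
    rcases mem_union.mp hy with h1 | h1
    · exact (mem_sdiff.mp hy').2 (setUvf_image_subset hfU X h1)
    · exact h ((mem_singleton.mp h1) ▸ (mem_sdiff.mp hy').1)
  have d2 : Disjoint ((X ∩ U).image f) ({v} : Finset ℕ) := by
    rw [disjoint_right]
    intro y hy hy'
    exact hvU ((mem_singleton.mp hy) ▸ setUvf_image_subset hfU X hy')
  rw [card_union_of_disjoint d1, card_union_of_disjoint d2,
    card_image_of_injOn (setUvf_injOn hfU hff X), card_singleton]
  have := card_inter_add_card_sdiff X U
  omega

include hfU in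
lemma setUvf_sub (X : Finset ℕ) : setUvf U v f X ⊆ (X ∪ U) ∪ {v} := by
  rw [setUvf]
  split_ifs with h
  · intro y hy; exact mem_union.mpr (Or.inl (mem_union.mpr (Or.inl hy)))
  · intro y hy
    rcases mem_union.mp hy with h1 | h1
    · rcases mem_union.mp h1 with h2 | h2
      · exact mem_union.mpr (Or.inl (mem_union.mpr (Or.inr (setUvf_image_subset hfU X h2))))
      · exact mem_union.mpr (Or.inr h2)
    · exact mem_union.mpr (Or.inl (mem_union.mpr (Or.inl (mem_sdiff.mp h1).1)))

end UvfLemmas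
section Construction

/-- From `A`, `B` with `|B| = |A| + 1`, build a compression `σ` with `σ A = B`. -/
lemma uvf_construction {A B : Finset ℕ} (hAB : B.card = A.card + 1) :
    ∃ (σ : Finset ℕ → Finset ℕ) (v : ℕ),
      (∀ X, v ∈ σ X) ∧ (∀ X, v ∈ X → σ X = X) ∧
      (∀ X Y, v ∉ X → v ∉ Y → σ X = σ Y → X = Y) ∧
      (∀ X Y : Finset ℕ, (X ∩ Y).Nonempty → (X ∩ σ Y).Nonempty → (σ X ∩ Y).Nonempty) ∧
      σ A = B ∧ v ∉ A ∧
      (∀ X, σ X ⊆ (X ∪ (A ∪ B)) ∪ {v}) ∧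
      (∀ X, v ∉ X → (σ X).card = X.card + 1) := by
  have hBA : (B \ A).Nonempty := by
    rw [sdiff_nonempty]
    intro hsub
    have := card_le_card hsub
    omega
  obtain ⟨v, hv⟩ := hBA
  have hvB : v ∈ B := (mem_sdiff.mp hv).1
  have hvA : v ∉ A := (mem_sdiff.mp hv).2
  set D := A \ B with hD
  set E := (B \ A).erase v with hE
  have hDsub : D ⊆ A := sdiff_subset
  have hDB : ∀ x ∈ D, x ∉ B := fun x hx => (mem_sdiff.mp hx).2
  have hEB : ∀ x ∈ E, x ∈ B := fun x hx => (mem_sdiff.mp (mem_of_mem_erase hx)).1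
  have hEA : ∀ x ∈ E, x ∉ A := fun x hx => (mem_sdiff.mp (mem_of_mem_erase hx)).2
  have hDE : ∀ x, ¬(x ∈ D ∧ x ∈ E) := by
    rintro x ⟨h1, h2⟩
    exact hEA x h2 (hDsub h1)
  have cardDE : D.card = E.card := by
    show (A \ B).card = ((B \ A).erase v).card
    have c1 := card_inter_add_card_sdiff A B
    have c2 := card_inter_add_card_sdiff B A
    have c3 : (B ∩ A).card = (A ∩ B).card := by rw [inter_comm]
    have c4 : ((B \ A).erase v).card = (B \ A).card - 1 := card_erase_of_mem hv
    have c5 : 1 ≤ (B \ A).card := card_pos.mpr ⟨v, hv⟩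
    omega
  set e := Finset.equivOfCardEq cardDE with he
  set f : ℕ → ℕ := fun x => if hx : x ∈ D then (e ⟨x, hx⟩ : ℕ) else
    if hx : x ∈ E then (e.symm ⟨x, hx⟩ : ℕ) else x with hf
  have hfD : ∀ x (hx : x ∈ D), f x = (e ⟨x, hx⟩ : ℕ) := by
    intro x hx; simp only [hf, dif_pos hx]
  have hfE : ∀ x (hx : x ∈ E), f x = (e.symm ⟨x, hx⟩ : ℕ) := by
    intro x hx
    have hxD : x ∉ D := fun h => hDE x ⟨h, hx⟩
    simp only [hf, dif_neg hxD, dif_pos hx]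
  have hfDE : ∀ x (hx : x ∈ D), f x ∈ E := by
    intro x hx; rw [hfD x hx]; exact (e ⟨x, hx⟩).2
  have hfED : ∀ x (hx : x ∈ E), f x ∈ D := by
    intro x hx; rw [hfE x hx]; exact (e.symm ⟨x, hx⟩).2
  set U := D ∪ E with hU
  have hfU : ∀ x ∈ U, f x ∈ U := by
    intro x hx
    rcases mem_union.mp hx with h | h
    · exact mem_union.mpr (Or.inr (hfDE x h))
    · exact mem_union.mpr (Or.inl (hfED x h))
  have hff : ∀ x ∈ U, f (f x) = x := by
    intro x hx
    rcases mem_union.mp hx with h | h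
    · have h2 : f x ∈ E := hfDE x h
      rw [hfE (f x) h2]
      have : (⟨f x, h2⟩ : {y // y ∈ E}) = e ⟨x, h⟩ := Subtype.ext (hfD x h)
      rw [this, Equiv.symm_apply_apply]
    · have h2 : f x ∈ D := hfED x h
      rw [hfD (f x) h2]
      have : (⟨f x, h2⟩ : {y // y ∈ D}) = e.symm ⟨x, h⟩ := Subtype.ext (hfE x h)
      rw [this, Equiv.apply_symm_apply]
  have hvU : v ∉ U := by
    intro h
    rcases mem_union.mp h with h | h
    · exact hvA (hDsub h)
    · exact notMem_erase v _ h
  refine ⟨setUvf U v f, v, setUvf_h1, setUvf_h2, setUvf_inj hfU hff hvU,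
    setUvf_h5 hfU hff, ?_, hvA, ?_, setUvf_card hfU hff hvU⟩
  · -- σ A = B
    rw [setUvf_of_not_mem A hvA]
    have eAU : A ∩ U = D := by
      ext x
      simp only [hU, mem_inter, mem_union]
      constructor
      · rintro ⟨hxA, hxD | hxE⟩
        · exact hxD
        · exact absurd hxA (hEA x hxE)
      · intro hx; exact ⟨hDsub hx, Or.inl hx⟩
    have eimg : D.image f = E := by
      ext y
      simp only [mem_image]
      constructor
      · rintro ⟨x, hx, rfl⟩; exact hfDE x hx
      · intro hy
        refine ⟨(e.symm ⟨y, hy⟩ : ℕ), (e.symm ⟨y, hy⟩).2, ?_⟩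
        rw [hfD _ (e.symm ⟨y, hy⟩).2]
        have : (⟨(e.symm ⟨y, hy⟩ : ℕ), (e.symm ⟨y, hy⟩).2⟩ : {x // x ∈ D}) = e.symm ⟨y, hy⟩ :=
          Subtype.ext rfl
        rw [this, Equiv.apply_symm_apply]
    have eAsd : A \ U = A ∩ B := by
      ext x
      simp only [mem_sdiff, mem_inter, hU, mem_union]
      constructor
      · rintro ⟨hxA, hx⟩
        push_neg at hx
        refine ⟨hxA, ?_⟩
        by_contra hxB
        exact hx.1 (mem_sdiff.mpr ⟨hxA, hxB⟩)
      · rintro ⟨hxA, hxB⟩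
        refine ⟨hxA, ?_⟩
        push_neg
        constructor
        · intro h
          exact (mem_sdiff.mp (hD ▸ h)).2 hxB
        · intro h
          exact hEA x h hxA
    rw [eAU, eimg, eAsd]
    ext y
    simp only [mem_union, mem_singleton, mem_inter]
    constructor
    · rintro ((h | h) | h)
      · exact hEB y h
      · exact h ▸ hvB
      · exact h.2
    · intro hyB
      by_cases hyA : y ∈ A
      · exact Or.inr ⟨hyA, hyB⟩
      · by_cases hyv : y = v
        · exact Or.inl (Or.inr hyv)
        · exact Or.inl (Or.inl (mem_erase.mpr ⟨hyv, mem_sdiff.mpr ⟨hyB, hyA⟩⟩))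
  · -- σ X ⊆ X ∪ (A ∪ B) ∪ {v}
    intro X
    refine (setUvf_sub hfU X).trans ?_
    intro y hy
    rcases mem_union.mp hy with h | h
    · rcases mem_union.mp h with h | h
      · exact mem_union.mpr (Or.inl (mem_union.mpr (Or.inl h)))
      · rcases mem_union.mp h with h | h
        · exact mem_union.mpr (Or.inl (mem_union.mpr (Or.inr (mem_union.mpr (Or.inl (hDsub h))))))
        · exact mem_union.mpr (Or.inl (mem_union.mpr (Or.inr (mem_union.mpr (Or.inr (hEB y h))))))
    · exact mem_union.mpr (Or.inr h)

end Construction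
section MainPrep

lemma upclosed_superset {G : Finset ℕ} {𝓜 : Finset (Finset ℕ)}
    (hup : ∀ A ∈ 𝓜, ∀ x ∈ G, insert x A ∈ 𝓜)
    {A X : Finset ℕ} (hA : A ∈ 𝓜) (hAX : A ⊆ X) (hXG : X ⊆ G) : X ∈ 𝓜 := by
  have key : ∀ k (X : Finset ℕ), X.card ≤ k → A ⊆ X → X ⊆ G → X ∈ 𝓜 := by
    intro k
    induction k with
    | zero =>
      intro X hXc hAX _
      have hX : X = ∅ := card_eq_zero.mp (Nat.le_zero.mp hXc)
      have hA' : A = ∅ := subset_empty.mp (hX ▸ hAX)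
      rw [hX, ← hA']
      exact hA
    | succ k ih =>
      intro X hXc hAX hXG
      by_cases hXA : X = A
      · exact hXA ▸ hA
      · have hss : A ⊂ X := lt_of_le_of_ne hAX (fun h => hXA h.symm)
        obtain ⟨x, hxX, hxA⟩ := exists_of_ssubset hss
        have h1 : X.erase x ∈ 𝓜 := by
          apply ih
          · have := card_erase_of_mem hxX
            omega
          · exact subset_erase.mpr ⟨hAX, hxA⟩
          · exact (erase_subset _ _).trans hXG
        have := hup _ h1 x (hXG hxX)
        rwa [insert_erase hxX] at this
  exact key X.card X le_rfl hAX hXG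

lemma atLeast_card (n s : ℕ) : (atLeast n s).card = ∑ j ∈ Finset.Icc s n, n.choose j := by
  have hG : (Finset.Icc 1 n).card = n := by rw [Nat.card_Icc]; omega
  have heq : atLeast n s = (Finset.Icc s n).biUnion (fun j => powersetCard j (Finset.Icc 1 n)) := by
    ext A
    simp only [atLeast, mem_filter, mem_powerset, mem_biUnion, mem_Icc, mem_powersetCard]
    constructor
    · rintro ⟨hA, hs⟩
      exact ⟨A.card, ⟨hs, by rw [← hG]; exact card_le_card hA⟩, hA, rfl⟩
    · rintro ⟨j, ⟨h1, _⟩, hA, rfl⟩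
      exact ⟨hA, h1⟩
  rw [heq, card_biUnion]
  · exact Finset.sum_congr rfl (fun j _ => by rw [card_powersetCard, hG])
  · intro x _ y _ hxy
    rw [Function.onFun, disjoint_left]
    intro A hA hA'
    exact hxy ((mem_powersetCard.mp hA).2.symm.trans (mem_powersetCard.mp hA').2)

lemma exists_missing {n r : ℕ} {𝓜 : Finset (Finset ℕ)} (h𝓜 : 𝓜 ⊆ (Finset.Icc 1 n).powerset)
    (hup : ∀ A ∈ 𝓜, ∀ x ∈ Finset.Icc 1 n, insert x A ∈ 𝓜)
    (hcard : 𝓜.card ≤ ∑ j ∈ Finset.Icc r n, n.choose j)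
    {A : Finset ℕ} (hA : A ∈ 𝓜) (hAr : A.card + 1 ≤ r) :
    ∃ B, B ⊆ Finset.Icc 1 n ∧ B ∉ 𝓜 ∧ B.card = A.card + 1 := by
  by_contra h
  push_neg at h
  have hsub : atLeast n (A.card + 1) ⊆ 𝓜 := by
    intro X hX
    obtain ⟨hXG, hXc⟩ := mem_filter.mp hX
    replace hXG := mem_powerset.mp hXG
    obtain ⟨Y, hYX, hYc⟩ := exists_subset_card_eq (s := X) (n := A.card + 1) hXc
    have hY𝓜 : Y ∈ 𝓜 := by
      by_contra hY
      exact (h Y (hYX.trans hXG) hY) hYc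
    exact upclosed_superset hup hY𝓜 hYX hXG
  have hne : A ∉ atLeast n (A.card + 1) := by
    intro hmem
    have := (mem_filter.mp hmem).2
    omega
  have hlt : (atLeast n (A.card + 1)).card < 𝓜.card :=
    card_lt_card ((ssubset_iff_of_subset hsub).mpr ⟨A, hA, hne⟩)
  have hge : ∑ j ∈ Finset.Icc r n, n.choose j ≤ (atLeast n (A.card + 1)).card := by
    rw [atLeast_card]
    exact Finset.sum_le_sum_of_subset (Finset.Icc_subset_Icc hAr le_rfl)
  omega

lemma exists_AB {n r : ℕ} {𝓜 : Finset (Finset ℕ)} (h𝓜 : 𝓜 ⊆ (Finset.Icc 1 n).powerset)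
    (hup : ∀ A ∈ 𝓜, ∀ x ∈ Finset.Icc 1 n, insert x A ∈ 𝓜)
    (hc1 : ∑ j ∈ Finset.Icc (r+1) n, n.choose j ≤ 𝓜.card)
    (hc2 : 𝓜.card ≤ ∑ j ∈ Finset.Icc r n, n.choose j)
    (hns : ¬(atLeast n (r+1) ⊆ 𝓜 ∧ 𝓜 ⊆ atLeast n r)) :
    ∃ A ∈ 𝓜, ∃ B, B ⊆ Finset.Icc 1 n ∧ B ∉ 𝓜 ∧ B.card = A.card + 1 := by
  by_cases hsmall : ∃ A ∈ 𝓜, A.card < r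
  · obtain ⟨A, hA, hAr⟩ := hsmall
    obtain ⟨B, hB⟩ := exists_missing h𝓜 hup hc2 hA (by omega)
    exact ⟨A, hA, B, hB⟩
  · push_neg at hsmall
    have hsub : 𝓜 ⊆ atLeast n r := fun X hX => mem_filter.mpr ⟨h𝓜 hX, hsmall X hX⟩
    have hmiss : ∃ B ∈ atLeast n (r+1), B ∉ 𝓜 := by
      by_contra h
      push_neg at h
      exact hns ⟨fun X hX => h X hX, hsub⟩
    obtain ⟨B₀, hB₀, hB₀𝓜⟩ := hmiss
    obtain ⟨hB₀G', hB₀c⟩ := mem_filter.mp hB₀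
    have hB₀G := mem_powerset.mp hB₀G'
    have hexA : ∃ A ∈ 𝓜, A.card ≤ r := by
      by_contra h
      push_neg at h
      have hsub2 : 𝓜 ⊆ atLeast n (r+1) := fun X hX => mem_filter.mpr ⟨h𝓜 hX, h X hX⟩
      have hlt : 𝓜.card < (atLeast n (r+1)).card :=
        card_lt_card ((ssubset_iff_of_subset hsub2).mpr ⟨B₀, hB₀, hB₀𝓜⟩)
      rw [atLeast_card] at hlt
      omega
    obtain ⟨A, hA, hAr⟩ := hexA
    have hAr' : A.card = r := le_antisymm hAr (hsmall A hA)
    obtain ⟨B, hBB₀, hBc⟩ := exists_subset_card_eq (s := B₀) (n := r+1) hB₀c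
    refine ⟨A, hA, B, hBB₀.trans hB₀G, ?_, by omega⟩
    intro hB𝓜
    exact hB₀𝓜 (upclosed_superset hup hB𝓜 hBB₀ hB₀G)

end MainPrep

theorem stmt1 (n i r : ℕ) (hn : 0 < n) (hi : 0 < i) (hi2 : i ≤ 2 ^ (n - 1))
    (hr1 : ∑ j ∈ Finset.Icc (r + 1) n, n.choose j ≤ 2 ^ (n - 1) + i)
    (hr2 : 2 ^ (n - 1) + i ≤ ∑ j ∈ Finset.Icc r n, n.choose j)
    (p : ℝ) (hp0 : 0 < p) (hp1 : p < 1) :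
    ∃ 𝓐 : Finset (Finset ℕ),
      atLeast n (r + 1) ⊆ 𝓐 ∧ 𝓐 ⊆ atLeast n r ∧ 𝓐.card = 2 ^ (n - 1) + i ∧
      ∀ 𝓑 : Finset (Finset ℕ), 𝓑 ⊆ (Finset.Icc 1 n).powerset →
        𝓑.card = 2 ^ (n - 1) + i → probInter p 𝓑 ≤ probInter p 𝓐 := by
  set G := Finset.Icc 1 n with hGdef
  set m := 2 ^ (n - 1) + i with hm
  have hGcard : G.card = n := by rw [hGdef, Nat.card_Icc]; omega
  -- m ≤ 2 ^ n
  have hm2n : m ≤ 2 ^ n := by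
    refine le_trans hr2 ?_
    calc ∑ j ∈ Finset.Icc r n, n.choose j
        ≤ ∑ j ∈ Finset.Icc 0 n, n.choose j :=
          Finset.sum_le_sum_of_subset (Finset.Icc_subset_Icc (Nat.zero_le r) le_rfl)
      _ = 2 ^ n := by
          rw [show Finset.Icc 0 n = Finset.range (n+1) by
            rw [← Nat.Ico_zero_eq_range, Nat.Icc_eq_range']; rfl]
          exact Nat.sum_range_choose n
  -- the candidate set
  set 𝒞 := G.powerset.powerset.filter (fun 𝓧 => 𝓧.card = m) with h𝒞
  have h𝒞mem : ∀ 𝓧, 𝓧 ∈ 𝒞 ↔ 𝓧 ⊆ G.powerset ∧ 𝓧.card = m := by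
    intro 𝓧
    rw [h𝒞, mem_filter, mem_powerset]
  have h𝒞ne : 𝒞.Nonempty := by
    obtain ⟨𝓧, h1, h2⟩ := exists_subset_card_eq (s := G.powerset) (n := m)
      (by rw [card_powerset, hGcard]; exact hm2n)
    exact ⟨𝓧, (h𝒞mem 𝓧).mpr ⟨h1, h2⟩⟩
  -- lexicographic maximizer
  obtain ⟨𝓜, h𝓜𝒞, hmax⟩ := Finset.exists_max_image 𝒞
    (fun 𝓧 => toLex (probInter p 𝓧, ∑ X ∈ 𝓧, X.card)) h𝒞ne
  obtain ⟨h𝓜sub, h𝓜card⟩ := (h𝒞mem 𝓜).mp h𝓜𝒞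
  have hprob : ∀ 𝓑 ∈ 𝒞, probInter p 𝓑 ≤ probInter p 𝓜 := by
    intro 𝓑 h𝓑
    have := hmax 𝓑 h𝓑
    rw [Prod.Lex.le_iff] at this
    rcases this with h | h
    · exact le_of_lt h
    · exact le_of_eq h.1
  -- a valid strictly-size-increasing compression contradicts maximality
  have hmove : ∀ (σ : Finset ℕ → Finset ℕ) (v : ℕ),
      (∀ X, v ∈ σ X) → (∀ X, v ∈ X → σ X = X) →
      (∀ X Y, v ∉ X → v ∉ Y → σ X = σ Y → X = Y) →
      (∀ X Y : Finset ℕ, (X ∩ Y).Nonempty → (X ∩ σ Y).Nonempty → (σ X ∩ Y).Nonempty) →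
      (∀ X ∈ 𝓜, σ X ⊆ G) → (∀ X, v ∉ X → (σ X).card = X.card + 1) →
      (famM σ 𝓜).Nonempty → False := by
    intro σ v a1 a2 a4 a5 aG asz hMne
    have hN𝒞 : famN σ 𝓜 ∈ 𝒞 := by
      refine (h𝒞mem _).mpr ⟨famN_subset h𝓜sub aG, ?_⟩
      rw [famN_card a2 a4, h𝓜card]
    have hple : probInter p 𝓜 ≤ probInter p (famN σ 𝓜) := master_prob a1 a2 a4 a5 hp0 hp1
    have hszeq : ∑ X ∈ famN σ 𝓜, X.card = (∑ X ∈ 𝓜, X.card) + (famM σ 𝓜).card :=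
      famN_sizes a2 a4 (fun A hA => asz A (famM_vfree a2 hA))
    have hpos : 0 < (famM σ 𝓜).card := card_pos.mpr hMne
    have hle := hmax (famN σ 𝓜) hN𝒞
    rw [Prod.Lex.le_iff] at hle
    rcases hle with h | ⟨h1, h2⟩
    · simp only [ofLex_toLex] at h
      linarith
    · simp only [ofLex_toLex] at h2
      omega
  -- 𝓜 is closed under insertion of ground elements
  have hup : ∀ A ∈ 𝓜, ∀ x ∈ G, insert x A ∈ 𝓜 := by
    intro A hA x hx
    by_contra hins
    refine hmove (insert x) x (fun X => mem_insert_self x X)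
      (fun X hX => insert_eq_self.mpr hX) ?_ ?_ ?_
      (fun X hX => card_insert_of_notMem hX) ⟨A, mem_filter.mpr ⟨hA, hins⟩⟩
    · intro X Y hX hY hXY
      rw [← erase_insert hX, ← erase_insert hY, hXY]
    · intro X Y hXY _
      obtain ⟨y, hy⟩ := hXY
      exact ⟨y, mem_inter.mpr ⟨mem_insert_of_mem (mem_inter.mp hy).1, (mem_inter.mp hy).2⟩⟩
    · intro X hX
      exact insert_subset hx (mem_powerset.mp (h𝓜sub hX))
  -- 𝓜 is sandwiched
  by_cases hsand : atLeast n (r+1) ⊆ 𝓜 ∧ 𝓜 ⊆ atLeast n r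
  · refine ⟨𝓜, hsand.1, hsand.2, h𝓜card, ?_⟩
    intro 𝓑 h𝓑1 h𝓑2
    exact hprob 𝓑 ((h𝒞mem 𝓑).mpr ⟨h𝓑1, h𝓑2⟩)
  · exfalso
    obtain ⟨A, hA, B, hBG, hB𝓜, hBc⟩ := exists_AB h𝓜sub hup
      (by rw [h𝓜card]; exact hr1) (by rw [h𝓜card]; exact hr2) hsand
    obtain ⟨σ, v, a1, a2, a4, a5, hσA, hvA, hσsub, hsz⟩ := uvf_construction hBc
    have hvG : v ∈ G := hBG (by rw [← hσA]; exact a1 A)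
    refine hmove σ v a1 a2 a4 a5 ?_ hsz ⟨A, mem_filter.mpr ⟨hA, by rw [hσA]; exact hB𝓜⟩⟩
    intro X hX
    refine (hσsub X).trans ?_
    apply union_subset
    · apply union_subset (mem_powerset.mp (h𝓜sub hX))
      exact union_subset (mem_powerset.mp (h𝓜sub hA)) hBG
    · intro y hy
      rw [mem_singleton.mp hy]
      exact hvG
end

section
/- Let $n$, $r$ and $i$ be positive integers with $r \le n/2$ and $i \le \binom{n-1}{r}$, and let $p \in (0,1)$. Then there exists a left-compressed family $\mathcal{A} \subseteq [n]^{(r)}$ with $|\mathcal{A}| = \binom{n-1}{r-1}+i$ such that for every family $\mathcal{B} \subseteq [n]^{(r)}$ with $|\mathcal{B}| = \binom{n-1}{r-1}+i$, we have $\mathbb{P}(\mathcal{B}_p \text{ is intersecting}) \le \mathbb{P}(\mathcal{A}_p \text{ is intersecting})$. -/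
open Finset

section SetLemmas

variable {u v : ℕ}

lemma sc_of_mov {A : Finset ℕ} (h1 : v ∈ A) (h2 : u ∉ A) :
    setCompress u v A = insert u (A.erase v) := if_pos ⟨h1, h2⟩

lemma sc_of_not {A : Finset ℕ} (h : ¬(v ∈ A ∧ u ∉ A)) : setCompress u v A = A := if_neg h

lemma sc_card (huv : u ≠ v) (A : Finset ℕ) : (setCompress u v A).card = A.card := by
  unfold setCompress
  split_ifs with h
  · obtain ⟨hv, hu⟩ := h
    have h1 : u ∉ A.erase v := fun hx => hu (Finset.mem_of_mem_erase hx)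
    rw [Finset.card_insert_of_notMem h1, Finset.card_erase_of_mem hv]
    have : 0 < A.card := Finset.card_pos.mpr ⟨v, hv⟩
    omega
  · rfl

lemma sc_inj (huv : u ≠ v) {A B : Finset ℕ} (hA1 : v ∈ A) (hA2 : u ∉ A)
    (hB1 : v ∈ B) (hB2 : u ∉ B) (h : setCompress u v A = setCompress u v B) : A = B := by
  rw [sc_of_mov hA1 hA2, sc_of_mov hB1 hB2] at h
  have key : ∀ C : Finset ℕ, v ∈ C → u ∉ C →
      insert v ((insert u (C.erase v)).erase u) = C := by
    intro C h1 h2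
    rw [Finset.erase_insert (fun hx => h2 (Finset.mem_of_mem_erase hx)),
      Finset.insert_erase h1]
  rw [← key A hA1 hA2, ← key B hB1 hB2, h]

lemma sc_inter_empty (huv : u ≠ v) {A B : Finset ℕ} (hA2 : u ∉ A)
    (hB1 : v ∈ B) (hB2 : u ∉ B) (hAB : A ∩ B = {v}) : A ∩ setCompress u v B = ∅ := by
  rw [sc_of_mov hB1 hB2, Finset.eq_empty_iff_forall_notMem]
  intro x hx
  simp only [Finset.mem_inter, Finset.mem_insert, Finset.mem_erase] at hx
  obtain ⟨hxA, hx2⟩ := hx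
  rcases hx2 with rfl | ⟨hxv, hxB⟩
  · exact hA2 hxA
  · have : x ∈ A ∩ B := Finset.mem_inter.mpr ⟨hxA, hxB⟩
    rw [hAB] at this
    exact hxv (Finset.mem_singleton.mp this)

lemma sc_mem_uniform {n r : ℕ} (h1 : 1 ≤ u) (huv : u < v) (h2 : v ≤ n)
    {A : Finset ℕ} (hA : A ∈ uniformFam n r) : setCompress u v A ∈ uniformFam n r := by
  rw [uniformFam, Finset.mem_powersetCard] at hA ⊢
  refine ⟨?_, by rw [sc_card huv.ne]; exact hA.2⟩
  unfold setCompress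
  split_ifs with h
  · intro x hx
    rcases Finset.mem_insert.mp hx with rfl | hx'
    · exact Finset.mem_Icc.mpr ⟨h1, le_trans huv.le h2⟩
    · exact hA.1 (Finset.mem_of_mem_erase hx')
  · exact hA.1

end SetLemmas
/-- Closure predicate used to define the forced part of the compression of a subfamily. -/
def ClosedF (u v : ℕ) (𝓑 𝓓 R : Finset (Finset ℕ)) : Prop :=
  (∀ A ∈ 𝓓, v ∈ A → u ∉ A → setCompress u v A ∉ 𝓑 → A ∈ R) ∧
  (∀ C ∈ 𝓓, v ∈ C → u ∉ C → (∃ A ∈ R, A ∩ C = {v}) → C ∈ R)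

instance (u v : ℕ) (𝓑 𝓓 R : Finset (Finset ℕ)) : Decidable (ClosedF u v 𝓑 𝓓 R) :=
  decidable_of_iff ((∀ A ∈ 𝓓, v ∈ A → u ∉ A → setCompress u v A ∉ 𝓑 → A ∈ R) ∧
    (∀ C ∈ 𝓓, v ∈ C → u ∉ C → (∃ A ∈ R, A ∩ C = {v}) → C ∈ R)) Iff.rfl

/-- The least closed subfamily of `𝓓`. -/
def Qset (u v : ℕ) (𝓑 𝓓 : Finset (Finset ℕ)) : Finset (Finset ℕ) :=
  𝓓.filter (fun B => ∀ R ∈ 𝓓.powerset, ClosedF u v 𝓑 𝓓 R → B ∈ R)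

/-- The compression of the subfamily `𝓓` of `𝓑`, compressing exactly the forced part. -/
def Phi (u v : ℕ) (𝓑 𝓓 : Finset (Finset ℕ)) : Finset (Finset ℕ) :=
  (𝓓 \ Qset u v 𝓑 𝓓) ∪ (Qset u v 𝓑 𝓓).image (setCompress u v)

section QLemmas

variable {u v : ℕ} {𝓑 𝓓 : Finset (Finset ℕ)}

lemma Qset_subset : Qset u v 𝓑 𝓓 ⊆ 𝓓 := Finset.filter_subset _ _

lemma Qset_min {R : Finset (Finset ℕ)} (hR : R ⊆ 𝓓) (hC : ClosedF u v 𝓑 𝓓 R) :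
    Qset u v 𝓑 𝓓 ⊆ R := by
  intro B hB
  rw [Qset, Finset.mem_filter] at hB
  exact hB.2 R (Finset.mem_powerset.mpr hR) hC

lemma Qset_closed : ClosedF u v 𝓑 𝓓 (Qset u v 𝓑 𝓓) := by
  constructor
  · intro A hA h1 h2 h3
    rw [Qset, Finset.mem_filter]
    exact ⟨hA, fun R _ hC => hC.1 A hA h1 h2 h3⟩
  · intro C hC h1 h2 ⟨A, hAQ, hAC⟩
    rw [Qset, Finset.mem_filter]
    refine ⟨hC, fun R hR hCl => ?_⟩
    rw [Qset, Finset.mem_filter] at hAQ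
    exact hCl.2 C hC h1 h2 ⟨A, hAQ.2 R hR hCl, hAC⟩

lemma Qset_mov : ∀ B ∈ Qset u v 𝓑 𝓓, v ∈ B ∧ u ∉ B := by
  intro B hB
  have : Qset u v 𝓑 𝓓 ⊆ 𝓓.filter (fun B => v ∈ B ∧ u ∉ B) := by
    refine Qset_min (Finset.filter_subset _ _) ⟨?_, ?_⟩
    · intro A hA h1 h2 _; exact Finset.mem_filter.mpr ⟨hA, h1, h2⟩
    · intro C hC h1 h2 _; exact Finset.mem_filter.mpr ⟨hC, h1, h2⟩
  exact (Finset.mem_filter.mp (this hB)).2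

lemma Qset_compress_notMem (huv : u < v) (hsub : 𝓓 ⊆ 𝓑) (hint : IsIntersecting 𝓓) :
    ∀ B ∈ Qset u v 𝓑 𝓓, setCompress u v B ∉ 𝓓 := by
  intro B hB
  have : Qset u v 𝓑 𝓓 ⊆ (Qset u v 𝓑 𝓓).filter (fun B => setCompress u v B ∉ 𝓓) := by
    refine Qset_min (fun X hX => Qset_subset (Finset.mem_filter.mp hX).1) ⟨?_, ?_⟩
    · intro A hA h1 h2 h3
      exact Finset.mem_filter.mpr ⟨Qset_closed.1 A hA h1 h2 h3, fun hc => h3 (hsub hc)⟩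
    · intro C hC h1 h2 ⟨A, hAR, hAC⟩
      have hAQ : A ∈ Qset u v 𝓑 𝓓 := (Finset.mem_filter.mp hAR).1
      refine Finset.mem_filter.mpr ⟨Qset_closed.2 C hC h1 h2 ⟨A, hAQ, hAC⟩, ?_⟩
      intro hc
      have hempty : A ∩ setCompress u v C = ∅ :=
        sc_inter_empty huv.ne (Qset_mov A hAQ).2 h1 h2 hAC
      have := hint A (Qset_subset hAQ) _ hc
      rw [hempty] at this
      exact Finset.not_nonempty_empty this
  exact (Finset.mem_filter.mp (this hB)).2

end QLemmas
section PhiLemmas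

variable {u v : ℕ} {𝓑 𝓓 : Finset (Finset ℕ)}

lemma mem_Phi {X : Finset ℕ} :
    X ∈ Phi u v 𝓑 𝓓 ↔ (X ∈ 𝓓 ∧ X ∉ Qset u v 𝓑 𝓓) ∨
      (∃ B ∈ Qset u v 𝓑 𝓓, setCompress u v B = X) := by
  simp [Phi, Finset.mem_union, Finset.mem_sdiff, Finset.mem_image]

lemma Phi_subset (hsub : 𝓓 ⊆ 𝓑) : Phi u v 𝓑 𝓓 ⊆ famCompress u v 𝓑 := by
  intro X hX
  rcases mem_Phi.mp hX with ⟨hX𝓓, hXQ⟩ | ⟨B, hBQ, rfl⟩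
  · rw [famCompress, Finset.mem_union]
    right
    refine Finset.mem_filter.mpr ⟨hsub hX𝓓, ?_⟩
    by_cases hmov : v ∈ X ∧ u ∉ X
    · by_contra hc
      exact hXQ (Qset_closed.1 X hX𝓓 hmov.1 hmov.2 hc)
    · rw [sc_of_not hmov]; exact hsub hX𝓓
  · rw [famCompress, Finset.mem_union]
    exact Or.inl (Finset.mem_image.mpr ⟨B, hsub (Qset_subset hBQ), rfl⟩)

lemma Phi_card (huv : u < v) (hsub : 𝓓 ⊆ 𝓑) (hint : IsIntersecting 𝓓) :
    (Phi u v 𝓑 𝓓).card = 𝓓.card := by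
  have hdisj : Disjoint (𝓓 \ Qset u v 𝓑 𝓓) ((Qset u v 𝓑 𝓓).image (setCompress u v)) := by
    rw [Finset.disjoint_left]
    rintro X hX hX2
    obtain ⟨B, hBQ, rfl⟩ := Finset.mem_image.mp hX2
    exact Qset_compress_notMem huv hsub hint B hBQ (Finset.mem_sdiff.mp hX).1
  rw [Phi, Finset.card_union_of_disjoint hdisj, Finset.card_image_of_injOn ?inj,
    Finset.card_sdiff_of_subset Qset_subset]
  · have := Finset.card_le_card (Qset_subset (u := u) (v := v) (𝓑 := 𝓑) (𝓓 := 𝓓))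
    omega
  case inj =>
    intro A hA B hB h
    obtain ⟨hA1, hA2⟩ := Qset_mov A hA
    obtain ⟨hB1, hB2⟩ := Qset_mov B hB
    exact sc_inj huv.ne hA1 hA2 hB1 hB2 h

lemma Phi_intersecting (huv : u < v) (hint : IsIntersecting 𝓓) :
    IsIntersecting (Phi u v 𝓑 𝓓) := by
  have main : ∀ X, X ∈ 𝓓 → X ∉ Qset u v 𝓑 𝓓 → ∀ B ∈ Qset u v 𝓑 𝓓,
      (X ∩ setCompress u v B).Nonempty := by
    intro X hX𝓓 hXQ B hBQ
    obtain ⟨hB1, hB2⟩ := Qset_mov B hBQ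
    by_cases hex : ∃ x ∈ X ∩ B, x ≠ v
    · obtain ⟨x, hx, hxv⟩ := hex
      obtain ⟨hxX, hxB⟩ := Finset.mem_inter.mp hx
      refine ⟨x, Finset.mem_inter.mpr ⟨hxX, ?_⟩⟩
      rw [sc_of_mov hB1 hB2]
      exact Finset.mem_insert.mpr (Or.inr (Finset.mem_erase.mpr ⟨hxv, hxB⟩))
    · push_neg at hex
      have hne : (X ∩ B).Nonempty := hint X hX𝓓 B (Qset_subset hBQ)
      have hXB : X ∩ B = {v} := by
        apply Finset.Subset.antisymm
        · intro y hy; exact Finset.mem_singleton.mpr (hex y hy)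
        · obtain ⟨y, hy⟩ := hne
          have := hex y hy
          subst this
          intro z hz
          rw [Finset.mem_singleton] at hz
          subst hz; exact hy
      by_cases hu : u ∈ X
      · refine ⟨u, Finset.mem_inter.mpr ⟨hu, ?_⟩⟩
        rw [sc_of_mov hB1 hB2]
        exact Finset.mem_insert_self _ _
      · have hvX : v ∈ X := by
          have : v ∈ X ∩ B := by rw [hXB]; exact Finset.mem_singleton_self v
          exact (Finset.mem_inter.mp this).1
        exfalso
        exact hXQ (Qset_closed.2 X hX𝓓 hvX hu ⟨B, hBQ, by rw [Finset.inter_comm]; exact hXB⟩)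
  intro X hX Y hY
  rcases mem_Phi.mp hX with ⟨hX𝓓, hXQ⟩ | ⟨A, hAQ, rfl⟩ <;>
    rcases mem_Phi.mp hY with ⟨hY𝓓, hYQ⟩ | ⟨B, hBQ, rfl⟩
  · exact hint X hX𝓓 Y hY𝓓
  · exact main X hX𝓓 hXQ B hBQ
  · rw [Finset.inter_comm]; exact main Y hY𝓓 hYQ A hAQ
  · obtain ⟨hA1, hA2⟩ := Qset_mov A hAQ
    obtain ⟨hB1, hB2⟩ := Qset_mov B hBQ
    refine ⟨u, Finset.mem_inter.mpr ⟨?_, ?_⟩⟩ <;>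
      [rw [sc_of_mov hA1 hA2]; rw [sc_of_mov hB1 hB2]] <;>
      exact Finset.mem_insert_self _ _

end PhiLemmas
section PhiInj
set_option maxHeartbeats 1600000

variable {u v : ℕ} {𝓑 : Finset (Finset ℕ)}

lemma Qset_subset_of_Phi_eq (huv : u < v) {𝓓 𝓓' : Finset (Finset ℕ)}
    (hsub' : 𝓓' ⊆ 𝓑) (hint' : IsIntersecting 𝓓')
    (h : Phi u v 𝓑 𝓓 = Phi u v 𝓑 𝓓') : Qset u v 𝓑 𝓓 ⊆ Qset u v 𝓑 𝓓' := by
  have decode : ∀ B ∈ Qset u v 𝓑 𝓓, B ∈ Qset u v 𝓑 𝓓' ∨ setCompress u v B ∈ 𝓓' := by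
    intro B hBQ
    obtain ⟨hB1, hB2⟩ := Qset_mov B hBQ
    have hmem : setCompress u v B ∈ Phi u v 𝓑 𝓓' := by
      rw [← h]
      exact mem_Phi.mpr (Or.inr ⟨B, hBQ, rfl⟩)
    rcases mem_Phi.mp hmem with ⟨h1, _⟩ | ⟨B', hB'Q, hB'⟩
    · exact Or.inr h1
    · obtain ⟨hB'1, hB'2⟩ := Qset_mov B' hB'Q
      have : B' = B := sc_inj huv.ne hB'1 hB'2 hB1 hB2 hB'
      subst this
      exact Or.inl hB'Q
  suffices hsuff : Qset u v 𝓑 𝓓 ⊆ Qset u v 𝓑 𝓓 ∩ Qset u v 𝓑 𝓓' by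
    exact fun B hB => (Finset.mem_inter.mp (hsuff hB)).2
  refine Qset_min (fun X hX => Qset_subset (Finset.mem_inter.mp hX).1) ⟨?_, ?_⟩
  · intro A hA h1 h2 h3
    have hAQ : A ∈ Qset u v 𝓑 𝓓 := Qset_closed.1 A hA h1 h2 h3
    refine Finset.mem_inter.mpr ⟨hAQ, ?_⟩
    rcases decode A hAQ with h' | h'
    · exact h'
    · exact absurd (hsub' h') h3
  · intro C hC h1 h2 ⟨A, hAR, hAC⟩
    obtain ⟨hAQ, hAQ'⟩ := Finset.mem_inter.mp hAR
    have hCQ : C ∈ Qset u v 𝓑 𝓓 := Qset_closed.2 C hC h1 h2 ⟨A, hAQ, hAC⟩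
    refine Finset.mem_inter.mpr ⟨hCQ, ?_⟩
    rcases decode C hCQ with h' | h'
    · exact h'
    · exfalso
      have hempty : A ∩ setCompress u v C = ∅ :=
        sc_inter_empty huv.ne (Qset_mov A hAQ).2 h1 h2 hAC
      have := hint' A (Qset_subset hAQ') _ h'
      rw [hempty] at this
      exact Finset.not_nonempty_empty this

lemma Phi_inj (huv : u < v) {𝓓 𝓓' : Finset (Finset ℕ)}
    (hsub : 𝓓 ⊆ 𝓑) (hsub' : 𝓓' ⊆ 𝓑) (hint : IsIntersecting 𝓓) (hint' : IsIntersecting 𝓓')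
    (h : Phi u v 𝓑 𝓓 = Phi u v 𝓑 𝓓') : 𝓓 = 𝓓' := by
  have hQ : Qset u v 𝓑 𝓓 = Qset u v 𝓑 𝓓' :=
    Finset.Subset.antisymm (Qset_subset_of_Phi_eq huv hsub' hint' h)
      (Qset_subset_of_Phi_eq huv hsub hint h.symm)
  have decomp : ∀ 𝓔 : Finset (Finset ℕ), 𝓔 ⊆ 𝓑 → IsIntersecting 𝓔 →
      𝓔 = Qset u v 𝓑 𝓔 ∪ (Phi u v 𝓑 𝓔 \ (Qset u v 𝓑 𝓔).image (setCompress u v)) := by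
    intro 𝓔 hs hi
    have key : Phi u v 𝓑 𝓔 \ (Qset u v 𝓑 𝓔).image (setCompress u v) = 𝓔 \ Qset u v 𝓑 𝓔 := by
      rw [Phi, Finset.union_sdiff_right]
      apply Finset.sdiff_eq_self_of_disjoint
      rw [Finset.disjoint_left]
      rintro X hX hX2
      obtain ⟨B, hBQ, rfl⟩ := Finset.mem_image.mp hX2
      exact Qset_compress_notMem huv hs hi B hBQ (Finset.mem_sdiff.mp hX).1
    rw [key, Finset.union_sdiff_of_subset Qset_subset]
  rw [decomp 𝓓 hsub hint, decomp 𝓓' hsub' hint', hQ, h]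

end PhiInj
section FamCompress

variable {u v : ℕ} {𝓑 : Finset (Finset ℕ)}

/-- The sets of `𝓑` that actually move under compression. -/
def Sfam (u v : ℕ) (𝓑 : Finset (Finset ℕ)) : Finset (Finset ℕ) :=
  𝓑.filter (fun A => v ∈ A ∧ u ∉ A ∧ setCompress u v A ∉ 𝓑)

lemma mem_Sfam {A : Finset ℕ} :
    A ∈ Sfam u v 𝓑 ↔ A ∈ 𝓑 ∧ v ∈ A ∧ u ∉ A ∧ setCompress u v A ∉ 𝓑 := by
  simp [Sfam]

lemma v_notMem_sc (huv : u < v) {A : Finset ℕ} (h1 : v ∈ A) (h2 : u ∉ A) :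
    v ∉ setCompress u v A := by
  rw [sc_of_mov h1 h2]
  intro hc
  rcases Finset.mem_insert.mp hc with h | h
  · exact huv.ne' h
  · exact (Finset.mem_erase.mp h).1 rfl

lemma famCompress_eq (huv : u < v) :
    famCompress u v 𝓑 = (𝓑 \ Sfam u v 𝓑) ∪ (Sfam u v 𝓑).image (setCompress u v) := by
  ext X
  rw [famCompress, Finset.mem_union, Finset.mem_union, Finset.mem_sdiff]
  constructor
  · rintro (hX | hX)
    · obtain ⟨A, hA, rfl⟩ := Finset.mem_image.mp hX
      by_cases hmov : v ∈ A ∧ u ∉ A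
      · by_cases hc : setCompress u v A ∈ 𝓑
        · left
          refine ⟨hc, fun hS => ?_⟩
          exact v_notMem_sc huv hmov.1 hmov.2 (mem_Sfam.mp hS).2.1
        · right
          exact Finset.mem_image.mpr ⟨A, mem_Sfam.mpr ⟨hA, hmov.1, hmov.2, hc⟩, rfl⟩
      · rw [sc_of_not hmov]
        left
        refine ⟨hA, fun hS => ?_⟩
        obtain ⟨_, h1, h2, _⟩ := mem_Sfam.mp hS
        exact hmov ⟨h1, h2⟩
    · obtain ⟨hX1, hX2⟩ := Finset.mem_filter.mp hX
      left
      exact ⟨hX1, fun hS => (mem_Sfam.mp hS).2.2.2 hX2⟩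
  · rintro (⟨hX, hXS⟩ | hX)
    · right
      refine Finset.mem_filter.mpr ⟨hX, ?_⟩
      by_cases hmov : v ∈ X ∧ u ∉ X
      · by_contra hc
        exact hXS (mem_Sfam.mpr ⟨hX, hmov.1, hmov.2, hc⟩)
      · rw [sc_of_not hmov]; exact hX
    · obtain ⟨A, hA, rfl⟩ := Finset.mem_image.mp hX
      exact Or.inl (Finset.mem_image.mpr ⟨A, (mem_Sfam.mp hA).1, rfl⟩)

lemma Sfam_image_disjoint (huv : u < v) :
    Disjoint (𝓑 \ Sfam u v 𝓑) ((Sfam u v 𝓑).image (setCompress u v)) := by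
  rw [Finset.disjoint_left]
  rintro X hX hX2
  obtain ⟨A, hA, rfl⟩ := Finset.mem_image.mp hX2
  exact (mem_Sfam.mp hA).2.2.2 (Finset.mem_sdiff.mp hX).1

lemma card_famCompress (huv : u < v) : (famCompress u v 𝓑).card = 𝓑.card := by
  rw [famCompress_eq huv, Finset.card_union_of_disjoint (Sfam_image_disjoint huv),
    Finset.card_image_of_injOn (fun A hA B hB h => by
      obtain ⟨_, hA1, hA2, _⟩ := mem_Sfam.mp hA
      obtain ⟨_, hB1, hB2, _⟩ := mem_Sfam.mp hB
      exact sc_inj huv.ne hA1 hA2 hB1 hB2 h),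
    Finset.card_sdiff_of_subset (show Sfam u v 𝓑 ⊆ 𝓑 from Finset.filter_subset _ _)]
  have := Finset.card_le_card (show Sfam u v 𝓑 ⊆ 𝓑 from Finset.filter_subset _ _)
  omega

lemma famCompress_subset_uniform {n r : ℕ} (h1 : 1 ≤ u) (huv : u < v) (h2 : v ≤ n)
    (hsub : 𝓑 ⊆ uniformFam n r) : famCompress u v 𝓑 ⊆ uniformFam n r := by
  intro X hX
  rw [famCompress, Finset.mem_union] at hX
  rcases hX with hX | hX
  · obtain ⟨A, hA, rfl⟩ := Finset.mem_image.mp hX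
    exact sc_mem_uniform h1 huv h2 (hsub hA)
  · exact hsub (Finset.mem_filter.mp hX).1

lemma probInter_le_famCompress (huv : u < v) {p : ℝ} (hp0 : 0 ≤ p) (hp1 : p ≤ 1) :
    probInter p 𝓑 ≤ probInter p (famCompress u v 𝓑) := by
  unfold probInter
  rw [card_famCompress huv]
  have hcongr : ∀ 𝓓 ∈ 𝓑.powerset.filter IsIntersecting,
      p ^ 𝓓.card * (1 - p) ^ (𝓑.card - 𝓓.card)
        = p ^ (Phi u v 𝓑 𝓓).card * (1 - p) ^ (𝓑.card - (Phi u v 𝓑 𝓓).card) := by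
    intro 𝓓 h𝓓
    obtain ⟨h1, h2⟩ := Finset.mem_filter.mp h𝓓
    rw [Phi_card huv (Finset.mem_powerset.mp h1) h2]
  rw [Finset.sum_congr rfl hcongr]
  have hinj : ∀ 𝓓 ∈ 𝓑.powerset.filter IsIntersecting, ∀ 𝓓' ∈ 𝓑.powerset.filter IsIntersecting,
      Phi u v 𝓑 𝓓 = Phi u v 𝓑 𝓓' → 𝓓 = 𝓓' := by
    intro 𝓓 h𝓓 𝓓' h𝓓' h
    obtain ⟨h1, h2⟩ := Finset.mem_filter.mp h𝓓
    obtain ⟨h1', h2'⟩ := Finset.mem_filter.mp h𝓓'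
    exact Phi_inj huv (Finset.mem_powerset.mp h1) (Finset.mem_powerset.mp h1') h2 h2' h
  have himg := Finset.sum_image (f := fun 𝓔 : Finset (Finset ℕ) =>
    p ^ 𝓔.card * (1 - p) ^ (𝓑.card - 𝓔.card)) hinj
  rw [← himg]
  apply Finset.sum_le_sum_of_subset_of_nonneg
  · intro 𝓔 h𝓔
    obtain ⟨𝓓, h𝓓, rfl⟩ := Finset.mem_image.mp h𝓔
    obtain ⟨h1, h2⟩ := Finset.mem_filter.mp h𝓓
    exact Finset.mem_filter.mpr ⟨Finset.mem_powerset.mpr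
      (Phi_subset (Finset.mem_powerset.mp h1)), Phi_intersecting huv h2⟩
  · intro 𝓔 _ _
    exact mul_nonneg (pow_nonneg hp0 _) (pow_nonneg (by linarith) _)

end FamCompress
section Weight

/-- Total weight of a set. -/
def wSet (A : Finset ℕ) : ℕ := A.sum id

/-- Total weight of a family. -/
def wFam (𝓐 : Finset (Finset ℕ)) : ℕ := 𝓐.sum wSet

variable {u v : ℕ} {𝓑 : Finset (Finset ℕ)}

lemma wSet_sc_lt (huv : u < v) {A : Finset ℕ} (h1 : v ∈ A) (h2 : u ∉ A) :
    wSet (setCompress u v A) < wSet A := by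
  rw [sc_of_mov h1 h2, wSet, Finset.sum_insert (fun hc => h2 (Finset.mem_of_mem_erase hc))]
  have hv : ∑ x ∈ A.erase v, id x + id v = ∑ x ∈ A, id x := Finset.sum_erase_add _ _ h1
  rw [wSet]
  show id u + ∑ x ∈ A.erase v, id x < A.sum id
  simp only [id_eq] at hv ⊢
  have : A.sum id = ∑ x ∈ A, id x := rfl
  simp only [id_eq] at this
  omega

lemma wFam_famCompress_lt (huv : u < v) (hne : famCompress u v 𝓑 ≠ 𝓑) :
    wFam (famCompress u v 𝓑) < wFam 𝓑 := by
  have hSsub : Sfam u v 𝓑 ⊆ 𝓑 := Finset.filter_subset _ _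
  have hSne : (Sfam u v 𝓑).Nonempty := by
    rw [Finset.nonempty_iff_ne_empty]
    intro hc
    apply hne
    rw [famCompress_eq huv, hc]
    simp
  rw [famCompress_eq huv, wFam, Finset.sum_union (Sfam_image_disjoint huv),
    Finset.sum_image (f := wSet) (fun A hA B hB h => by
      obtain ⟨_, hA1, hA2, _⟩ := mem_Sfam.mp hA
      obtain ⟨_, hB1, hB2, _⟩ := mem_Sfam.mp hB
      exact sc_inj huv.ne hA1 hA2 hB1 hB2 h)]
  have hlt : ∑ A ∈ Sfam u v 𝓑, wSet (setCompress u v A) < ∑ A ∈ Sfam u v 𝓑, wSet A := by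
    refine Finset.sum_lt_sum_of_nonempty hSne (fun A hA => ?_)
    obtain ⟨_, hA1, hA2, _⟩ := mem_Sfam.mp hA
    exact wSet_sc_lt huv hA1 hA2
  have hdecomp : ∑ A ∈ 𝓑 \ Sfam u v 𝓑, wSet A + ∑ A ∈ Sfam u v 𝓑, wSet A = wFam 𝓑 :=
    Finset.sum_sdiff hSsub
  omega

end Weight
theorem stmt2 (n r i : ℕ) (hn : 0 < n) (hr : 0 < r) (hi : 0 < i) (hrn : 2 * r ≤ n)
    (hi2 : i ≤ (n - 1).choose r)
    (p : ℝ) (hp0 : 0 < p) (hp1 : p < 1) :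
    ∃ 𝓐 : Finset (Finset ℕ),
      𝓐 ⊆ uniformFam n r ∧ LeftCompressed n 𝓐 ∧ 𝓐.card = (n - 1).choose (r - 1) + i ∧
      ∀ 𝓑 : Finset (Finset ℕ), 𝓑 ⊆ uniformFam n r →
        𝓑.card = (n - 1).choose (r - 1) + i → probInter p 𝓑 ≤ probInter p 𝓐 := by
  set k := (n - 1).choose (r - 1) + i with hk
  have hcardU : (uniformFam n r).card = n.choose r := by
    rw [uniformFam, Finset.card_powersetCard, Nat.card_Icc]
    norm_num
  have hkle : k ≤ (uniformFam n r).card := by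
    rw [hcardU]
    have hpascal : n.choose r = (n - 1).choose (r - 1) + (n - 1).choose r := by
      obtain ⟨n', rfl⟩ : ∃ n', n = n' + 1 := ⟨n - 1, by omega⟩
      obtain ⟨r', rfl⟩ : ∃ r', r = r' + 1 := ⟨r - 1, by omega⟩
      simp [Nat.choose_succ_succ]
    omega
  obtain ⟨𝓣, h𝓣sub, h𝓣card⟩ := Finset.exists_subset_card_eq hkle
  set S : Finset (Finset (Finset ℕ)) :=
    (uniformFam n r).powerset.filter (fun 𝓑 => 𝓑.card = k) with hS
  have hmemS : ∀ 𝓑 : Finset (Finset ℕ), 𝓑 ∈ S ↔ 𝓑 ⊆ uniformFam n r ∧ 𝓑.card = k := by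
    intro 𝓑
    rw [hS, Finset.mem_filter, Finset.mem_powerset]
  have hSne : S.Nonempty := ⟨𝓣, (hmemS 𝓣).mpr ⟨h𝓣sub, h𝓣card⟩⟩
  obtain ⟨𝓜, h𝓜S, h𝓜max⟩ := S.exists_max_image (probInter p) hSne
  set S' : Finset (Finset (Finset ℕ)) :=
    S.filter (fun 𝓑 => probInter p 𝓜 ≤ probInter p 𝓑) with hS'
  have hS'ne : S'.Nonempty := ⟨𝓜, Finset.mem_filter.mpr ⟨h𝓜S, le_refl _⟩⟩
  obtain ⟨𝓐, h𝓐S', h𝓐min⟩ := S'.exists_min_image wFam hS'ne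
  obtain ⟨h𝓐S, h𝓐prob⟩ := Finset.mem_filter.mp h𝓐S'
  obtain ⟨h𝓐sub, h𝓐card⟩ := (hmemS 𝓐).mp h𝓐S
  refine ⟨𝓐, h𝓐sub, ?_, h𝓐card, ?_⟩
  · -- left-compressed
    intro a b ha hab hbn
    by_contra hne
    have hCS : famCompress a b 𝓐 ∈ S := (hmemS _).mpr
      ⟨famCompress_subset_uniform ha hab hbn h𝓐sub, by rw [card_famCompress hab, h𝓐card]⟩
    have hCprob : probInter p 𝓜 ≤ probInter p (famCompress a b 𝓐) :=
      le_trans h𝓐prob (probInter_le_famCompress hab hp0.le hp1.le)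
    have hCS' : famCompress a b 𝓐 ∈ S' := Finset.mem_filter.mpr ⟨hCS, hCprob⟩
    have := h𝓐min _ hCS'
    have := wFam_famCompress_lt hab hne
    omega
  · -- optimality
    intro 𝓑 hsub hcard
    exact le_trans (h𝓜max 𝓑 ((hmemS 𝓑).mpr ⟨hsub, hcard⟩)) h𝓐prob
end

section
/- Let $\mathcal{A} \subseteq [n]^{(r)}$, let $i, j \in [n]$ with $i < j$, and let $\mathcal{C} = \mathcal{C}_{ij}\mathcal{A}$. Then there exists an injection $\phi$ from the collection of intersecting subfamilies of $\mathcal{A}$ to the collection of intersecting subfamilies of $\mathcal{C}$ such that $|\phi(\mathcal{B})| = |\mathcal{B}|$ for every intersecting subfamily $\mathcal{B} \subseteq \mathcal{A}$. -/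
open Finset

namespace Stmt3Aux

variable {i j : ℕ}

lemma sc_move {A : Finset ℕ} (hj : j ∈ A) (hi : i ∉ A) :
    setCompress i j A = insert i (A.erase j) := if_pos ⟨hj, hi⟩

lemma sc_fix {A : Finset ℕ} (h : ¬(j ∈ A ∧ i ∉ A)) : setCompress i j A = A := if_neg h

lemma mem_sc_move {A : Finset ℕ} (hj : j ∈ A) (hi : i ∉ A) {x : ℕ} :
    x ∈ setCompress i j A ↔ x = i ∨ (x ∈ A ∧ x ≠ j) := by
  rw [sc_move hj hi]
  simp only [Finset.mem_insert, Finset.mem_erase]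
  tauto

lemma i_mem_sc {A : Finset ℕ} (hj : j ∈ A) (hi : i ∉ A) : i ∈ setCompress i j A := by
  rw [sc_move hj hi]; exact Finset.mem_insert_self _ _

lemma sc_sc {A : Finset ℕ} (hj : j ∈ A) (hi : i ∉ A) :
    setCompress i j (setCompress i j A) = setCompress i j A :=
  sc_fix (fun h => h.2 (i_mem_sc hj hi))

lemma sc_inj {A B : Finset ℕ} (hjA : j ∈ A) (hiA : i ∉ A) (hjB : j ∈ B) (hiB : i ∉ B)
    (h : setCompress i j A = setCompress i j B) : A = B := by
  have hiA' : i ∉ A.erase j := fun hc => hiA (Finset.mem_of_mem_erase hc)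
  have hiB' : i ∉ B.erase j := fun hc => hiB (Finset.mem_of_mem_erase hc)
  have h2 : A.erase j = B.erase j := by
    have := congrArg (fun s => Finset.erase s i) h
    simpa [sc_move hjA hiA, sc_move hjB hiB, Finset.erase_insert hiA',
      Finset.erase_insert hiB'] using this
  calc A = insert j (A.erase j) := (Finset.insert_erase hjA).symm
    _ = insert j (B.erase j) := by rw [h2]
    _ = B := Finset.insert_erase hjB

lemma mem_famCompress {𝓕 : Finset (Finset ℕ)} {Z : Finset ℕ} :
    Z ∈ famCompress i j 𝓕 ↔
      (∃ W ∈ 𝓕, setCompress i j W = Z) ∨ (Z ∈ 𝓕 ∧ setCompress i j Z ∈ 𝓕) := by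
  simp [famCompress, Finset.mem_union, Finset.mem_image, Finset.mem_filter]

/-- The ambiguous pairs of the compressed family `𝓓` relative to ground family `𝓐`. -/
def pairsP (i j : ℕ) (𝓐 𝓓 : Finset (Finset ℕ)) : Finset (Finset ℕ) :=
  𝓐.filter (fun A => j ∈ A ∧ i ∉ A ∧ setCompress i j A ∈ 𝓓 ∧ A ∉ 𝓓)

lemma mem_pairsP {𝓐 𝓓 : Finset (Finset ℕ)} {A : Finset ℕ} :
    A ∈ pairsP i j 𝓐 𝓓 ↔
      A ∈ 𝓐 ∧ j ∈ A ∧ i ∉ A ∧ setCompress i j A ∈ 𝓓 ∧ A ∉ 𝓓 := by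
  simp [pairsP, Finset.mem_filter]

/-- The relation: two pair-sets intersect only at `j`. -/
def erel (i j : ℕ) (𝓐 𝓓 : Finset (Finset ℕ)) (X Y : Finset ℕ) : Prop :=
  X ∈ pairsP i j 𝓐 𝓓 ∧ Y ∈ pairsP i j 𝓐 𝓓 ∧ X ∩ Y = {j}

/-- Pairs reachable from a forced pair (`setCompress i j B ∉ 𝓐`). -/
noncomputable def reachR (i j : ℕ) (𝓐 𝓓 : Finset (Finset ℕ)) : Finset (Finset ℕ) :=
  @Finset.filter _ (fun A =>
    ∃ B ∈ pairsP i j 𝓐 𝓓, setCompress i j B ∉ 𝓐 ∧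
      Relation.ReflTransGen (erel i j 𝓐 𝓓) B A) (Classical.decPred _) (pairsP i j 𝓐 𝓓)

lemma mem_reachR {𝓐 𝓓 : Finset (Finset ℕ)} {A : Finset ℕ} :
    A ∈ reachR i j 𝓐 𝓓 ↔ A ∈ pairsP i j 𝓐 𝓓 ∧
      ∃ B ∈ pairsP i j 𝓐 𝓓, setCompress i j B ∉ 𝓐 ∧
        Relation.ReflTransGen (erel i j 𝓐 𝓓) B A :=
  @Finset.mem_filter _ _ (Classical.decPred _) _ _

lemma reachR_subset {𝓐 𝓓 : Finset (Finset ℕ)} :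
    reachR i j 𝓐 𝓓 ⊆ pairsP i j 𝓐 𝓓 := fun A hA => (mem_reachR.mp hA).1

lemma reachR_closed {𝓐 𝓓 : Finset (Finset ℕ)} {A X : Finset ℕ}
    (hA : A ∈ reachR i j 𝓐 𝓓) (hX : X ∈ pairsP i j 𝓐 𝓓) (h : A ∩ X = {j}) :
    X ∈ reachR i j 𝓐 𝓓 := by
  rw [mem_reachR] at hA ⊢
  obtain ⟨hAP, B, hBP, hBF, hpath⟩ := hA
  exact ⟨hX, B, hBP, hBF, hpath.tail ⟨hAP, hX, h⟩⟩

lemma reachR_self {𝓐 𝓓 : Finset (Finset ℕ)} {A : Finset ℕ}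
    (hA : A ∈ pairsP i j 𝓐 𝓓) (hF : setCompress i j A ∉ 𝓐) :
    A ∈ reachR i j 𝓐 𝓓 := by
  rw [mem_reachR]
  exact ⟨hA, A, hA, hF, Relation.ReflTransGen.refl⟩

noncomputable def phiMap (i j : ℕ) (𝓐 𝓑 : Finset (Finset ℕ)) : Finset (Finset ℕ) :=
  (𝓑 \ reachR i j 𝓐 (famCompress i j 𝓑)) ∪
    (reachR i j 𝓐 (famCompress i j 𝓑)).image (setCompress i j)

noncomputable def psiMap (i j : ℕ) (𝓐 𝓔 : Finset (Finset ℕ)) : Finset (Finset ℕ) :=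
  (𝓔 \ (reachR i j 𝓐 (famCompress i j 𝓔)).image (setCompress i j)) ∪
    reachR i j 𝓐 (famCompress i j 𝓔)

variable {𝓐 𝓑 : Finset (Finset ℕ)}

/-- If a movable set's compression lies in `C𝓑` but not in `𝓑`, the set was in `𝓑`. -/
lemma recover (h𝓑 : 𝓑 ⊆ 𝓐) {A : Finset ℕ} (hj : j ∈ A) (hi : i ∉ A)
    (hD : setCompress i j A ∈ famCompress i j 𝓑) (hnB : setCompress i j A ∉ 𝓑) :
    A ∈ 𝓑 := by
  rcases mem_famCompress.mp hD with ⟨W, hW, hCW⟩ | ⟨h1, _⟩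
  · by_cases hWm : j ∈ W ∧ i ∉ W
    · exact sc_inj hWm.1 hWm.2 hj hi hCW ▸ hW
    · rw [sc_fix hWm] at hCW
      exact absurd (hCW ▸ hW) hnB
  · exact absurd h1 hnB

/-- A movable set whose compression is not in `𝓑` is not in `C𝓑`. -/
lemma not_mem_D {A : Finset ℕ} (hj : j ∈ A) (hi : i ∉ A)
    (hnB : setCompress i j A ∉ 𝓑) : A ∉ famCompress i j 𝓑 := by
  intro hD
  rcases mem_famCompress.mp hD with ⟨W, hW, hCW⟩ | ⟨_, h2⟩
  · by_cases hWm : j ∈ W ∧ i ∉ W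
    · exact hi (hCW ▸ i_mem_sc hWm.1 hWm.2)
    · rw [sc_fix hWm] at hCW
      exact hWm (hCW ▸ ⟨hj, hi⟩)
  · exact hnB h2

/-- Every reachable pair was in `𝓑` and its compression was not. -/
lemma mem_reachR_spec (h𝓑 : 𝓑 ⊆ 𝓐) (hB : IsIntersecting 𝓑) {A : Finset ℕ}
    (hA : A ∈ reachR i j 𝓐 (famCompress i j 𝓑)) :
    A ∈ 𝓑 ∧ setCompress i j A ∉ 𝓑 := by
  rw [mem_reachR] at hA
  obtain ⟨hAP, B, hBP, hBF, hpath⟩ := hA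
  clear hAP
  induction hpath with
  | refl =>
      rw [mem_pairsP] at hBP
      have hnB : setCompress i j B ∉ 𝓑 := fun hc => hBF (h𝓑 hc)
      exact ⟨recover h𝓑 hBP.2.1 hBP.2.2.1 hBP.2.2.2.1 hnB, hnB⟩
  | @tail c a hsteps hstep ih =>
      obtain ⟨hcP, haP, hca⟩ := hstep
      obtain ⟨hcB, _⟩ := ih
      rw [mem_pairsP] at hcP haP
      have hnB : setCompress i j a ∉ 𝓑 := by
        intro hCaB
        obtain ⟨x, hx⟩ := hB c hcB (setCompress i j a) hCaB
        rw [Finset.mem_inter] at hx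
        rcases (mem_sc_move haP.2.1 haP.2.2.1).mp hx.2 with rfl | ⟨hxa, hxj⟩
        · exact hcP.2.2.1 hx.1
        · have : x ∈ c ∩ a := Finset.mem_inter.mpr ⟨hx.1, hxa⟩
          rw [hca, Finset.mem_singleton] at this
          exact hxj this
      exact ⟨recover h𝓑 haP.2.1 haP.2.2.1 haP.2.2.2.1 hnB, hnB⟩

lemma pair_of_moved (h𝓑 : 𝓑 ⊆ 𝓐) {X : Finset ℕ} (hX : X ∈ 𝓑) (hj : j ∈ X) (hi : i ∉ X)
    (hn : setCompress i j X ∉ 𝓑) : X ∈ pairsP i j 𝓐 (famCompress i j 𝓑) :=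
  mem_pairsP.mpr ⟨h𝓑 hX, hj, hi, mem_famCompress.mpr (Or.inl ⟨X, hX, rfl⟩),
    not_mem_D hj hi hn⟩

lemma phi_subset (h𝓑 : 𝓑 ⊆ 𝓐) :
    phiMap i j 𝓐 𝓑 ⊆ famCompress i j 𝓐 := by
  intro Z hZ
  rcases Finset.mem_union.mp hZ with hZ | hZ
  · rw [Finset.mem_sdiff] at hZ
    obtain ⟨hZB, hZR⟩ := hZ
    by_cases hm : j ∈ Z ∧ i ∉ Z
    · by_cases hCA : setCompress i j Z ∈ 𝓐
      · exact mem_famCompress.mpr (Or.inr ⟨h𝓑 hZB, hCA⟩)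
      · have hnB : setCompress i j Z ∉ 𝓑 := fun h => hCA (h𝓑 h)
        exact absurd (reachR_self (pair_of_moved h𝓑 hZB hm.1 hm.2 hnB) hCA) hZR
    · refine mem_famCompress.mpr (Or.inr ⟨h𝓑 hZB, ?_⟩)
      rw [sc_fix hm]; exact h𝓑 hZB
  · obtain ⟨A, hA, rfl⟩ := Finset.mem_image.mp hZ
    exact mem_famCompress.mpr (Or.inl ⟨A, (mem_pairsP.mp (reachR_subset hA)).1, rfl⟩)

lemma phi_disj (h𝓑 : 𝓑 ⊆ 𝓐) (hB : IsIntersecting 𝓑) :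
    Disjoint (𝓑 \ reachR i j 𝓐 (famCompress i j 𝓑))
      ((reachR i j 𝓐 (famCompress i j 𝓑)).image (setCompress i j)) := by
  rw [Finset.disjoint_right]
  rintro Z hZ hZ'
  obtain ⟨A, hA, rfl⟩ := Finset.mem_image.mp hZ
  exact (mem_reachR_spec h𝓑 hB hA).2 (Finset.mem_sdiff.mp hZ').1

lemma phi_card (h𝓑 : 𝓑 ⊆ 𝓐) (hB : IsIntersecting 𝓑) :
    (phiMap i j 𝓐 𝓑).card = 𝓑.card := by
  have hRB : reachR i j 𝓐 (famCompress i j 𝓑) ⊆ 𝓑 :=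
    fun A hA => (mem_reachR_spec h𝓑 hB hA).1
  have hinj : Set.InjOn (setCompress i j)
      (reachR i j 𝓐 (famCompress i j 𝓑) : Set (Finset ℕ)) := by
    intro A hA B hB' h
    have pA := mem_pairsP.mp (reachR_subset (Finset.mem_coe.mp hA))
    have pB := mem_pairsP.mp (reachR_subset (Finset.mem_coe.mp hB'))
    exact sc_inj pA.2.1 pA.2.2.1 pB.2.1 pB.2.2.1 h
  rw [phiMap, Finset.card_union_of_disjoint (phi_disj h𝓑 hB), Finset.card_sdiff_of_subset hRB,
    Finset.card_image_of_injOn hinj, Nat.sub_add_cancel (Finset.card_le_card hRB)]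

lemma inter_helper (h𝓑 : 𝓑 ⊆ 𝓐) (hB : IsIntersecting 𝓑) {X A : Finset ℕ}
    (hX : X ∈ 𝓑) (hXR : X ∉ reachR i j 𝓐 (famCompress i j 𝓑))
    (hA : A ∈ reachR i j 𝓐 (famCompress i j 𝓑)) :
    (X ∩ setCompress i j A).Nonempty := by
  obtain ⟨hAB, hCAnB⟩ := mem_reachR_spec h𝓑 hB hA
  have pA := mem_pairsP.mp (reachR_subset hA)
  by_cases hex : ∃ x ∈ X ∩ A, x ≠ j
  · obtain ⟨x, hx, hxj⟩ := hex
    rw [Finset.mem_inter] at hx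
    exact ⟨x, Finset.mem_inter.mpr
      ⟨hx.1, (mem_sc_move pA.2.1 pA.2.2.1).mpr (Or.inr ⟨hx.2, hxj⟩)⟩⟩
  · push_neg at hex
    obtain ⟨x, hx⟩ := hB X hX A hAB
    have hxj : x = j := hex x hx
    rw [Finset.mem_inter] at hx
    rw [hxj] at hx
    by_cases hiX : i ∈ X
    · exact ⟨i, Finset.mem_inter.mpr ⟨hiX, i_mem_sc pA.2.1 pA.2.2.1⟩⟩
    · by_cases hCX : setCompress i j X ∈ 𝓑
      · exfalso
        obtain ⟨y, hy⟩ := hB A hAB (setCompress i j X) hCX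
        rw [Finset.mem_inter] at hy
        rcases (mem_sc_move hx.1 hiX).mp hy.2 with rfl | ⟨hyX, hyj⟩
        · exact pA.2.2.1 hy.1
        · exact hyj (hex y (Finset.mem_inter.mpr ⟨hyX, hy.1⟩))
      · have hXP := pair_of_moved h𝓑 hX hx.1 hiX hCX
        have hAX : A ∩ X = {j} := by
          ext y
          simp only [Finset.mem_inter, Finset.mem_singleton]
          constructor
          · rintro ⟨hyA, hyX⟩
            exact hex y (Finset.mem_inter.mpr ⟨hyX, hyA⟩)
          · rintro rfl
            exact ⟨hx.2, hx.1⟩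
        exact absurd (reachR_closed hA hXP hAX) hXR

lemma phi_inter (h𝓑 : 𝓑 ⊆ 𝓐) (hB : IsIntersecting 𝓑) :
    IsIntersecting (phiMap i j 𝓐 𝓑) := by
  intro X hX Y hY
  rcases Finset.mem_union.mp hX with hX' | hX' <;>
    rcases Finset.mem_union.mp hY with hY' | hY'
  · rw [Finset.mem_sdiff] at hX' hY'
    exact hB X hX'.1 Y hY'.1
  · obtain ⟨A, hA, rfl⟩ := Finset.mem_image.mp hY'
    rw [Finset.mem_sdiff] at hX'
    exact inter_helper h𝓑 hB hX'.1 hX'.2 hA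
  · obtain ⟨A, hA, rfl⟩ := Finset.mem_image.mp hX'
    rw [Finset.mem_sdiff] at hY'
    rw [Finset.inter_comm]
    exact inter_helper h𝓑 hB hY'.1 hY'.2 hA
  · obtain ⟨A, hA, rfl⟩ := Finset.mem_image.mp hX'
    obtain ⟨A', hA', rfl⟩ := Finset.mem_image.mp hY'
    have pA := mem_pairsP.mp (reachR_subset hA)
    have pA' := mem_pairsP.mp (reachR_subset hA')
    exact ⟨i, Finset.mem_inter.mpr
      ⟨i_mem_sc pA.2.1 pA.2.2.1, i_mem_sc pA'.2.1 pA'.2.2.1⟩⟩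

lemma comp_phi (h𝓑 : 𝓑 ⊆ 𝓐) (hB : IsIntersecting 𝓑) :
    famCompress i j (phiMap i j 𝓐 𝓑) = famCompress i j 𝓑 := by
  ext Z
  constructor
  · intro hZ
    rcases mem_famCompress.mp hZ with ⟨W, hW, hCW⟩ | ⟨hZ1, hZ2⟩
    · rcases Finset.mem_union.mp hW with hW' | hW'
      · exact mem_famCompress.mpr (Or.inl ⟨W, (Finset.mem_sdiff.mp hW').1, hCW⟩)
      · obtain ⟨A, hA, rfl⟩ := Finset.mem_image.mp hW'
        have pA := mem_pairsP.mp (reachR_subset hA)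
        rw [sc_sc pA.2.1 pA.2.2.1] at hCW
        exact mem_famCompress.mpr (Or.inl ⟨A, (mem_reachR_spec h𝓑 hB hA).1, hCW⟩)
    · rcases Finset.mem_union.mp hZ1 with hZ' | hZ'
      · rw [Finset.mem_sdiff] at hZ'
        by_cases hm : j ∈ Z ∧ i ∉ Z
        · rcases Finset.mem_union.mp hZ2 with hC' | hC'
          · exact mem_famCompress.mpr (Or.inr ⟨hZ'.1, (Finset.mem_sdiff.mp hC').1⟩)
          · obtain ⟨A, hA, hCA⟩ := Finset.mem_image.mp hC'
            have pA := mem_pairsP.mp (reachR_subset hA)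
            have hZA : Z = A := sc_inj hm.1 hm.2 pA.2.1 pA.2.2.1 hCA.symm
            exact absurd (hZA ▸ hA) hZ'.2
        · exact mem_famCompress.mpr (Or.inl ⟨Z, hZ'.1, sc_fix hm⟩)
      · obtain ⟨A, hA, rfl⟩ := Finset.mem_image.mp hZ'
        exact mem_famCompress.mpr (Or.inl ⟨A, (mem_reachR_spec h𝓑 hB hA).1, rfl⟩)
  · intro hZ
    rcases mem_famCompress.mp hZ with ⟨W, hW, hCW⟩ | ⟨hZ1, hZ2⟩
    · by_cases hWR : W ∈ reachR i j 𝓐 (famCompress i j 𝓑)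
      · have hZE : Z ∈ phiMap i j 𝓐 𝓑 :=
          Finset.mem_union.mpr (Or.inr (Finset.mem_image.mpr ⟨W, hWR, hCW⟩))
        have pW := mem_pairsP.mp (reachR_subset hWR)
        have hfix : setCompress i j Z = Z := by
          rw [← hCW]; exact sc_sc pW.2.1 pW.2.2.1
        exact mem_famCompress.mpr (Or.inl ⟨Z, hZE, hfix⟩)
      · have hWE : W ∈ phiMap i j 𝓐 𝓑 :=
          Finset.mem_union.mpr (Or.inl (Finset.mem_sdiff.mpr ⟨hW, hWR⟩))
        exact mem_famCompress.mpr (Or.inl ⟨W, hWE, hCW⟩)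
    · by_cases hm : j ∈ Z ∧ i ∉ Z
      · have hZR : Z ∉ reachR i j 𝓐 (famCompress i j 𝓑) :=
          fun h => (mem_reachR_spec h𝓑 hB h).2 hZ2
        have hZE : Z ∈ phiMap i j 𝓐 𝓑 :=
          Finset.mem_union.mpr (Or.inl (Finset.mem_sdiff.mpr ⟨hZ1, hZR⟩))
        have hCZR : setCompress i j Z ∉ reachR i j 𝓐 (famCompress i j 𝓑) :=
          fun h => (mem_pairsP.mp (reachR_subset h)).2.2.1 (i_mem_sc hm.1 hm.2)
        have hCZE : setCompress i j Z ∈ phiMap i j 𝓐 𝓑 :=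
          Finset.mem_union.mpr (Or.inl (Finset.mem_sdiff.mpr ⟨hZ2, hCZR⟩))
        exact mem_famCompress.mpr (Or.inr ⟨hZE, hCZE⟩)
      · have hZR : Z ∉ reachR i j 𝓐 (famCompress i j 𝓑) := fun h =>
          hm ⟨(mem_pairsP.mp (reachR_subset h)).2.1,
            (mem_pairsP.mp (reachR_subset h)).2.2.1⟩
        have hZE : Z ∈ phiMap i j 𝓐 𝓑 :=
          Finset.mem_union.mpr (Or.inl (Finset.mem_sdiff.mpr ⟨hZ1, hZR⟩))
        exact mem_famCompress.mpr (Or.inl ⟨Z, hZE, sc_fix hm⟩)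

lemma psi_phi (h𝓑 : 𝓑 ⊆ 𝓐) (hB : IsIntersecting 𝓑) :
    psiMap i j 𝓐 (phiMap i j 𝓐 𝓑) = 𝓑 := by
  have hRB : reachR i j 𝓐 (famCompress i j 𝓑) ⊆ 𝓑 :=
    fun A hA => (mem_reachR_spec h𝓑 hB hA).1
  rw [psiMap, comp_phi h𝓑 hB, phiMap,
    Finset.union_sdiff_cancel_right (phi_disj h𝓑 hB),
    Finset.sdiff_union_of_subset hRB]

end Stmt3Aux
theorem stmt3 (n r : ℕ) (𝓐 : Finset (Finset ℕ)) (h𝓐 : 𝓐 ⊆ uniformFam n r)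
    (i j : ℕ) (hi : 1 ≤ i) (hij : i < j) (hj : j ≤ n) :
    ∃ φ : Finset (Finset ℕ) → Finset (Finset ℕ),
      Set.InjOn φ ↑(𝓐.powerset.filter IsIntersecting) ∧
      ∀ 𝓑 ∈ 𝓐.powerset.filter IsIntersecting,
        φ 𝓑 ∈ (famCompress i j 𝓐).powerset.filter IsIntersecting ∧
        (φ 𝓑).card = 𝓑.card := by
  refine ⟨Stmt3Aux.phiMap i j 𝓐, ?_, ?_⟩
  · intro 𝓑₁ h1 𝓑₂ h2 heq
    rw [Finset.mem_coe, Finset.mem_filter, Finset.mem_powerset] at h1 h2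
    rw [← Stmt3Aux.psi_phi h1.1 h1.2, ← Stmt3Aux.psi_phi h2.1 h2.2, heq]
  · intro 𝓑 hmem
    rw [Finset.mem_filter, Finset.mem_powerset] at hmem
    exact ⟨Finset.mem_filter.mpr ⟨Finset.mem_powerset.mpr
        (Stmt3Aux.phi_subset hmem.1), Stmt3Aux.phi_inter hmem.1 hmem.2⟩,
      Stmt3Aux.phi_card hmem.1 hmem.2⟩
end

section
/- Let $\mathcal{A} \subseteq \mathcal{P}[n]$ be any family of subsets of $[n]$, let $i, j \in [n]$ with $i < j$, and let $\mathcal{C} = \mathcal{C}_{ij}\mathcal{A}$. Then for every nonnegative integer $m$, the number of intersecting subfamilies of $\mathcal{C}$ of order $m$ is at least the number of intersecting subfamilies of $\mathcal{A}$ of order $m$. -/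
open Finset

namespace StmtAux

variable {i j : ℕ}

/-- The sets of `𝓑` that are forced to be compressed. -/
inductive Forced (i j : ℕ) (𝓐 𝓑 : Finset (Finset ℕ)) : Finset ℕ → Prop
  | base {B : Finset ℕ} : B ∈ 𝓑 → setCompress i j B ∉ 𝓐 → Forced i j 𝓐 𝓑 B
  | step {A B : Finset ℕ} : A ∈ 𝓑 → Forced i j 𝓐 𝓑 B →
      A ∩ setCompress i j B = ∅ → Forced i j 𝓐 𝓑 A

noncomputable def forcedSet (i j : ℕ) (𝓐 𝓑 : Finset (Finset ℕ)) : Finset (Finset ℕ) :=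
  @Finset.filter _ (Forced i j 𝓐 𝓑) (Classical.decPred _) 𝓑

lemma mem_forcedSet {𝓐 𝓑 : Finset (Finset ℕ)} {B : Finset ℕ} :
    B ∈ forcedSet i j 𝓐 𝓑 ↔ B ∈ 𝓑 ∧ Forced i j 𝓐 𝓑 B :=
  @Finset.mem_filter _ _ (Classical.decPred _) _ _

noncomputable def thetaFam (i j : ℕ) (𝓐 𝓑 : Finset (Finset ℕ)) : Finset (Finset ℕ) :=
  (𝓑 \ forcedSet i j 𝓐 𝓑) ∪ (forcedSet i j 𝓐 𝓑).image (setCompress i j)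

lemma sc_pos {A : Finset ℕ} (hjA : j ∈ A) (hiA : i ∉ A) :
    setCompress i j A = insert i (A.erase j) := if_pos ⟨hjA, hiA⟩

lemma mem_i_sc {A : Finset ℕ} (hjA : j ∈ A) (hiA : i ∉ A) : i ∈ setCompress i j A := by
  rw [sc_pos hjA hiA]; exact mem_insert_self _ _

lemma sc_inj (hij : i ≠ j) {A B : Finset ℕ} (hjA : j ∈ A) (hiA : i ∉ A)
    (hjB : j ∈ B) (hiB : i ∉ B) (h : setCompress i j A = setCompress i j B) : A = B := by
  have key : ∀ X : Finset ℕ, j ∈ X → i ∉ X → insert j ((setCompress i j X).erase i) = X := by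
    intro X hjX hiX
    rw [sc_pos hjX hiX, Finset.erase_insert (by simp [hiX]), Finset.insert_erase hjX]
  rw [← key A hjA hiA, ← key B hjB hiB, h]

lemma mem_sc_of_ne {A : Finset ℕ} (hjA : j ∈ A) (hiA : i ∉ A) {x : ℕ}
    (hx : x ∈ A) (hxj : x ≠ j) : x ∈ setCompress i j A := by
  rw [sc_pos hjA hiA]
  exact mem_insert_of_mem (Finset.mem_erase.mpr ⟨hxj, hx⟩)

lemma cross {A B : Finset ℕ} (hjA : j ∈ A) (hiA : i ∉ A) (hjB : j ∈ B) (hiB : i ∉ B)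
    (h : A ∩ setCompress i j B = ∅) : setCompress i j A ∩ B = ∅ := by
  rw [Finset.eq_empty_iff_forall_notMem] at h ⊢
  intro x hx
  rw [Finset.mem_inter, sc_pos hjA hiA, Finset.mem_insert, Finset.mem_erase] at hx
  obtain ⟨hx1 | ⟨hxj, hxA⟩, hxB⟩ := hx
  · exact hiB (hx1 ▸ hxB)
  · exact h x (Finset.mem_inter.mpr ⟨hxA, mem_sc_of_ne hjB hiB hxB hxj⟩)

variable {𝓐 𝓑 : Finset (Finset ℕ)}

/-- Key structural facts about forced sets. -/
lemma forced_spec (h𝓑 : 𝓑 ⊆ 𝓐) (hInt : IsIntersecting 𝓑) {B : Finset ℕ}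
    (hF : Forced i j 𝓐 𝓑 B) : B ∈ 𝓑 ∧ j ∈ B ∧ i ∉ B ∧ setCompress i j B ∉ 𝓑 := by
  induction hF with
  | base hB hC =>
    rename_i B
    have hform : j ∈ B ∧ i ∉ B := by
      by_contra hcon
      exact hC (by rw [setCompress, if_neg hcon]; exact h𝓑 hB)
    exact ⟨hB, hform.1, hform.2, fun h => hC (h𝓑 h)⟩
  | step hA hFB hEmp ih =>
    obtain ⟨hB, hjB, hiB, hCB⟩ := ih
    rename_i A B
    have hiA : i ∉ A := by
      intro hiA
      have h2 : i ∈ A ∩ setCompress i j B := Finset.mem_inter.mpr ⟨hiA, mem_i_sc hjB hiB⟩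
      rw [hEmp] at h2
      exact absurd h2 (Finset.notMem_empty _)
    have hjA : j ∈ A := by
      obtain ⟨x, hx⟩ := hInt A hA B hB
      rw [Finset.mem_inter] at hx
      by_cases hxj : x = j
      · exact hxj ▸ hx.1
      · exfalso
        have h2 : x ∈ A ∩ setCompress i j B :=
          Finset.mem_inter.mpr ⟨hx.1, mem_sc_of_ne hjB hiB hx.2 hxj⟩
        rw [hEmp] at h2
        exact absurd h2 (Finset.notMem_empty _)
    refine ⟨hA, hjA, hiA, fun hCA => ?_⟩
    obtain ⟨x, hx⟩ := hInt _ hCA B hB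
    have := cross hjA hiA hjB hiB hEmp
    rw [this] at hx
    exact absurd hx (Finset.notMem_empty x)

lemma theta_subset (h𝓑 : 𝓑 ⊆ 𝓐) :
    thetaFam i j 𝓐 𝓑 ⊆ famCompress i j 𝓐 := by
  intro x hx
  rw [thetaFam, Finset.mem_union] at hx
  rcases hx with hx | hx
  · rw [Finset.mem_sdiff] at hx
    obtain ⟨hx𝓑, hxX⟩ := hx
    have hC : setCompress i j x ∈ 𝓐 := by
      by_contra hC
      exact hxX (mem_forcedSet.mpr ⟨hx𝓑, Forced.base hx𝓑 hC⟩)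
    exact Finset.mem_union_right _ (Finset.mem_filter.mpr ⟨h𝓑 hx𝓑, hC⟩)
  · rw [Finset.mem_image] at hx
    obtain ⟨B, hB, rfl⟩ := hx
    exact Finset.mem_union_left _ (Finset.mem_image_of_mem _ (h𝓑 (mem_forcedSet.mp hB).1))

lemma theta_card (hij : i ≠ j) (h𝓑 : 𝓑 ⊆ 𝓐) (hInt : IsIntersecting 𝓑) :
    (thetaFam i j 𝓐 𝓑).card = 𝓑.card := by
  have hXsub : forcedSet i j 𝓐 𝓑 ⊆ 𝓑 := fun x hx => (mem_forcedSet.mp hx).1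
  have hdisj : Disjoint (𝓑 \ forcedSet i j 𝓐 𝓑) ((forcedSet i j 𝓐 𝓑).image (setCompress i j)) := by
    rw [Finset.disjoint_right]
    intro y hy hy'
    rw [Finset.mem_image] at hy
    obtain ⟨B, hB, rfl⟩ := hy
    obtain ⟨_, _, _, hCB⟩ := forced_spec h𝓑 hInt (mem_forcedSet.mp hB).2
    exact hCB ((Finset.mem_sdiff.mp hy').1)
  rw [thetaFam, Finset.card_union_of_disjoint hdisj,
    Finset.card_image_of_injOn (fun A hA B hB h => by
      obtain ⟨_, hjA, hiA, _⟩ := forced_spec h𝓑 hInt (mem_forcedSet.mp hA).2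
      obtain ⟨_, hjB, hiB, _⟩ := forced_spec h𝓑 hInt (mem_forcedSet.mp hB).2
      exact sc_inj hij hjA hiA hjB hiB h),
    Finset.card_sdiff_add_card_eq_card hXsub]

lemma theta_inter (h𝓑 : 𝓑 ⊆ 𝓐) (hInt : IsIntersecting 𝓑) :
    IsIntersecting (thetaFam i j 𝓐 𝓑) := by
  intro A hA B hB
  rw [thetaFam, Finset.mem_union] at hA hB
  have himg : ∀ {X}, X ∈ (forcedSet i j 𝓐 𝓑).image (setCompress i j) →
      ∃ B₀, (B₀ ∈ 𝓑 ∧ Forced i j 𝓐 𝓑 B₀) ∧ X = setCompress i j B₀ := by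
    intro X hX
    rw [Finset.mem_image] at hX
    obtain ⟨B₀, hB₀, rfl⟩ := hX
    exact ⟨B₀, mem_forcedSet.mp hB₀, rfl⟩
  have hmix : ∀ {X Y}, X ∈ 𝓑 \ forcedSet i j 𝓐 𝓑 →
      Y ∈ (forcedSet i j 𝓐 𝓑).image (setCompress i j) → (X ∩ Y).Nonempty := by
    intro X Y hX hY
    obtain ⟨B₀, ⟨hB₀𝓑, hB₀F⟩, rfl⟩ := himg hY
    rw [Finset.mem_sdiff] at hX
    rw [Finset.nonempty_iff_ne_empty]
    intro hE
    exact hX.2 (mem_forcedSet.mpr ⟨hX.1, Forced.step hX.1 hB₀F hE⟩)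
  rcases hA with hA | hA <;> rcases hB with hB | hB
  · exact hInt A (Finset.mem_sdiff.mp hA).1 B (Finset.mem_sdiff.mp hB).1
  · exact hmix hA hB
  · rw [Finset.inter_comm]; exact hmix hB hA
  · obtain ⟨A₀, ⟨hA₀𝓑, hA₀F⟩, rfl⟩ := himg hA
    obtain ⟨B₀, ⟨hB₀𝓑, hB₀F⟩, rfl⟩ := himg hB
    obtain ⟨_, hjA, hiA, _⟩ := forced_spec h𝓑 hInt hA₀F
    obtain ⟨_, hjB, hiB, _⟩ := forced_spec h𝓑 hInt hB₀F
    exact ⟨i, Finset.mem_inter.mpr ⟨mem_i_sc hjA hiA, mem_i_sc hjB hiB⟩⟩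

/-- Key injectivity lemma: a forced set of `𝓑` cannot appear compressed in `𝓑'`. -/
lemma key_lemma (hij : i ≠ j) {𝓑' : Finset (Finset ℕ)}
    (h𝓑 : 𝓑 ⊆ 𝓐) (hInt : IsIntersecting 𝓑)
    (h𝓑' : 𝓑' ⊆ 𝓐) (hInt' : IsIntersecting 𝓑')
    (hθ : thetaFam i j 𝓐 𝓑 = thetaFam i j 𝓐 𝓑') {B : Finset ℕ}
    (hF : Forced i j 𝓐 𝓑 B) : setCompress i j B ∉ 𝓑' := by
  induction hF with
  | base hB hC => exact fun h => hC (h𝓑' h)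
  | step hA hFB hEmp ih =>
    rename_i A B
    intro hCA
    obtain ⟨hB𝓑, hjB, hiB, hCB𝓑⟩ := forced_spec h𝓑 hInt hFB
    obtain ⟨_, hjA, hiA, _⟩ := forced_spec h𝓑 hInt (Forced.step hA hFB hEmp)
    -- setCompress A ∩ B = ∅, hence B ∉ 𝓑'
    have hcross := cross hjA hiA hjB hiB hEmp
    have hB' : B ∉ 𝓑' := by
      intro hB'
      obtain ⟨x, hx⟩ := hInt' _ hCA B hB'
      rw [hcross] at hx
      exact absurd hx (Finset.notMem_empty x)
    -- setCompress B ∈ thetaFam 𝓑 = thetaFam 𝓑'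
    have hmem : setCompress i j B ∈ thetaFam i j 𝓐 𝓑' := by
      rw [← hθ, thetaFam]
      exact Finset.mem_union_right _
        (Finset.mem_image_of_mem _ (mem_forcedSet.mpr ⟨hB𝓑, hFB⟩))
    rw [thetaFam, Finset.mem_union] at hmem
    rcases hmem with hmem | hmem
    · exact ih ((Finset.mem_sdiff.mp hmem).1)
    · rw [Finset.mem_image] at hmem
      obtain ⟨B'', hB'', hEq⟩ := hmem
      obtain ⟨hB''𝓑, hB''F⟩ := mem_forcedSet.mp hB''
      obtain ⟨_, hjB'', hiB'', _⟩ := forced_spec h𝓑' hInt' hB''F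
      have : B'' = B := sc_inj hij hjB'' hiB'' hjB hiB hEq
      exact hB' (this ▸ hB''𝓑)

lemma theta_inj_sub (hij : i ≠ j) {𝓑' : Finset (Finset ℕ)}
    (h𝓑 : 𝓑 ⊆ 𝓐) (hInt : IsIntersecting 𝓑)
    (h𝓑' : 𝓑' ⊆ 𝓐) (hInt' : IsIntersecting 𝓑')
    (hθ : thetaFam i j 𝓐 𝓑 = thetaFam i j 𝓐 𝓑') : 𝓑 ⊆ 𝓑' := by
  intro B hB
  by_cases hF : Forced i j 𝓐 𝓑 B
  · obtain ⟨_, hjB, hiB, _⟩ := forced_spec h𝓑 hInt hF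
    have hmem : setCompress i j B ∈ thetaFam i j 𝓐 𝓑' := by
      rw [← hθ, thetaFam]
      exact Finset.mem_union_right _
        (Finset.mem_image_of_mem _ (mem_forcedSet.mpr ⟨hB, hF⟩))
    rw [thetaFam, Finset.mem_union] at hmem
    rcases hmem with hmem | hmem
    · exact absurd ((Finset.mem_sdiff.mp hmem).1)
        (key_lemma hij h𝓑 hInt h𝓑' hInt' hθ hF)
    · rw [Finset.mem_image] at hmem
      obtain ⟨B'', hB'', hEq⟩ := hmem
      obtain ⟨hB''𝓑, hB''F⟩ := mem_forcedSet.mp hB''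
      obtain ⟨_, hjB'', hiB'', _⟩ := forced_spec h𝓑' hInt' hB''F
      rwa [← sc_inj hij hjB'' hiB'' hjB hiB hEq]
  · have hmem : B ∈ thetaFam i j 𝓐 𝓑' := by
      rw [← hθ, thetaFam]
      exact Finset.mem_union_left _
        (Finset.mem_sdiff.mpr ⟨hB, fun h => hF (mem_forcedSet.mp h).2⟩)
    rw [thetaFam, Finset.mem_union] at hmem
    rcases hmem with hmem | hmem
    · exact (Finset.mem_sdiff.mp hmem).1
    · rw [Finset.mem_image] at hmem
      obtain ⟨B'', hB'', hEq⟩ := hmem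
      obtain ⟨hB''𝓑, hB''F⟩ := mem_forcedSet.mp hB''
      exact absurd (hEq ▸ hB)
        (key_lemma hij h𝓑' hInt' h𝓑 hInt hθ.symm hB''F)

end StmtAux

theorem stmt4 (n : ℕ) (𝓐 : Finset (Finset ℕ)) (h𝓐 : 𝓐 ⊆ (Finset.Icc 1 n).powerset)
    (i j : ℕ) (hi : 1 ≤ i) (hij : i < j) (hj : j ≤ n) (m : ℕ) :
    numInter 𝓐 m ≤ numInter (famCompress i j 𝓐) m := by
  have hne : i ≠ j := Nat.ne_of_lt hij
  unfold numInter
  apply Finset.card_le_card_of_injOn (StmtAux.thetaFam i j 𝓐)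
  · intro 𝓑 h𝓑
    rw [Finset.mem_coe, Finset.mem_filter, Finset.mem_filter, Finset.mem_powerset] at h𝓑
    obtain ⟨⟨hsub, hInt⟩, hcard⟩ := h𝓑
    rw [Finset.mem_coe, Finset.mem_filter, Finset.mem_filter, Finset.mem_powerset]
    exact ⟨⟨StmtAux.theta_subset hsub, StmtAux.theta_inter hsub hInt⟩,
      by rw [StmtAux.theta_card hne hsub hInt]; exact hcard⟩
  · intro 𝓑 h𝓑 𝓑' h𝓑' hθ
    rw [Finset.mem_coe, Finset.mem_filter, Finset.mem_filter, Finset.mem_powerset] at h𝓑 h𝓑'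
    obtain ⟨⟨hsub, hInt⟩, _⟩ := h𝓑
    obtain ⟨⟨hsub', hInt'⟩, _⟩ := h𝓑'
    exact Finset.Subset.antisymm
      (StmtAux.theta_inj_sub hne hsub hInt hsub' hInt' hθ)
      (StmtAux.theta_inj_sub hne hsub' hInt' hsub hInt hθ.symm)
end

section
/- Let $\mathcal{A} \subseteq [n]^{(r)}$, let $i, j \in [n]$ with $i < j$, and let $p \in (0,1)$. Then $\mathbb{P}((\mathcal{C}_{ij}\mathcal{A})_p \text{ is intersecting}) \ge \mathbb{P}(\mathcal{A}_p \text{ is intersecting})$; that is, $\sum_{\mathcal{B} \subseteq \mathcal{C}_{ij}\mathcal{A},\ \mathcal{B} \text{ intersecting}} p^{|\mathcal{B}|}(1-p)^{|\mathcal{C}_{ij}\mathcal{A}|-|\mathcal{B}|} \ge \sum_{\mathcal{B} \subseteq \mathcal{A},\ \mathcal{B} \text{ intersecting}} p^{|\mathcal{B}|}(1-p)^{|\mathcal{A}|-|\mathcal{B}|}$. -/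
open Finset

namespace Stmt5Aux

variable {i j : ℕ} {𝓐 𝓑 : Finset (Finset ℕ)} {A X X' Y W z : Finset ℕ}

/-- `A` contains `j` but not `i` (so it is moved by compression, potentially). -/
def isLow (i j : ℕ) (A : Finset ℕ) : Prop := j ∈ A ∧ i ∉ A

/-- The inverse of compression on "upper" sets. -/
def uset (i j : ℕ) (A : Finset ℕ) : Finset ℕ := insert j (A.erase i)

lemma sc_low (h : isLow i j X) : setCompress i j X = insert i (X.erase j) := if_pos h

lemma sc_not_low (h : ¬ isLow i j X) : setCompress i j X = X := if_neg h

lemma mem_sc_i (h : isLow i j X) : i ∈ setCompress i j X := by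
  rw [sc_low h]; exact mem_insert_self _ _

lemma not_mem_sc_j (hne : i ≠ j) (h : isLow i j X) : j ∉ setCompress i j X := by
  rw [sc_low h]; simp [mem_insert, mem_erase, hne.symm]

lemma mem_sc_of {x : ℕ} (h : isLow i j X) (hx : x ∈ X) (hxj : x ≠ j) :
    x ∈ setCompress i j X := by
  rw [sc_low h]; exact mem_insert_of_mem (mem_erase.2 ⟨hxj, hx⟩)

lemma not_low_sc (h : isLow i j X) : ¬ isLow i j (setCompress i j X) :=
  fun hc => hc.2 (mem_sc_i h)

lemma uset_sc (h : isLow i j X) : uset i j (setCompress i j X) = X := by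
  have hi : i ∉ X.erase j := fun hx => h.2 (mem_of_mem_erase hx)
  rw [sc_low h, uset, erase_insert hi, insert_erase h.1]

lemma low_uset (hne : i ≠ j) (h : i ∈ Y ∧ j ∉ Y) : isLow i j (uset i j Y) := by
  constructor
  · exact mem_insert_self _ _
  · simp [uset, mem_insert, mem_erase, hne]

lemma sc_uset (hne : i ≠ j) (h : i ∈ Y ∧ j ∉ Y) : setCompress i j (uset i j Y) = Y := by
  rw [sc_low (low_uset hne h), uset, erase_insert (by simp [mem_erase, h.2]), insert_erase h.1]

lemma sc_inj (hne : i ≠ j) (hX : isLow i j X) (hX' : isLow i j X')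
    (e : setCompress i j X = setCompress i j X') : X = X' := by
  rw [← uset_sc hX, ← uset_sc hX', e]

lemma inter_sc (hX : isLow i j X) (hX' : isLow i j X') :
    X ∩ setCompress i j X' = (X.erase j) ∩ (X'.erase j) := by
  rw [sc_low hX']
  ext x
  simp only [mem_inter, mem_insert, mem_erase]
  constructor
  · rintro ⟨hx, hx' | hx'⟩
    · exact absurd (hx' ▸ hx) hX.2
    · exact ⟨⟨hx'.1, hx⟩, hx'⟩
  · rintro ⟨⟨hxj, hx⟩, hx'⟩
    exact ⟨hx, Or.inr hx'⟩

lemma sc_idem (A : Finset ℕ) : setCompress i j (setCompress i j A) = setCompress i j A := by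
  by_cases h : isLow i j A
  · exact sc_not_low (not_low_sc h)
  · rw [sc_not_low h]; exact sc_not_low h

/-- `X` is the lower set of a pair (both halves in the ambient family). -/
def pairZ (i j : ℕ) (𝓐 : Finset (Finset ℕ)) (X : Finset ℕ) : Prop :=
  isLow i j X ∧ X ∈ 𝓐 ∧ setCompress i j X ∈ 𝓐

/-- Exactly one of the two halves of the pair of `X` is in `𝓢`. -/
def exOne (i j : ℕ) (𝓢 : Finset (Finset ℕ)) (X : Finset ℕ) : Prop :=
  Xor' (X ∈ 𝓢) (setCompress i j X ∈ 𝓢)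

/-- Conflict-graph step. -/
def rel (i j : ℕ) (𝓐 𝓢 : Finset (Finset ℕ)) (X X' : Finset ℕ) : Prop :=
  pairZ i j 𝓐 X' ∧ exOne i j 𝓢 X' ∧ Disjoint (X.erase j) (X'.erase j)

def badm (i j : ℕ) (𝓐 𝓑 : Finset (Finset ℕ)) (W : Finset ℕ) : Prop :=
  ∃ B ∈ 𝓑, isLow i j B ∧ setCompress i j B ∉ 𝓐 ∧ Disjoint (setCompress i j W) B

def badm' (i j : ℕ) (𝓐 𝓓 : Finset (Finset ℕ)) (W : Finset ℕ) : Prop :=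
  ∃ B ∈ 𝓓, B ∉ 𝓐 ∧ Disjoint (setCompress i j W) (uset i j B)

def Reach (i j : ℕ) (𝓐 𝓑 : Finset (Finset ℕ)) (X : Finset ℕ) : Prop :=
  ∃ W, Relation.ReflTransGen (rel i j 𝓐 𝓑) X W ∧ badm i j 𝓐 𝓑 W

def Reach' (i j : ℕ) (𝓐 𝓓 : Finset (Finset ℕ)) (X : Finset ℕ) : Prop :=
  ∃ W, Relation.ReflTransGen (rel i j 𝓐 𝓓) X W ∧ badm' i j 𝓐 𝓓 W

/-- `X` is moved by the subfamily-compression map. -/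
def mv (i j : ℕ) (𝓐 𝓑 : Finset (Finset ℕ)) (X : Finset ℕ) : Prop :=
  X ∈ 𝓑 ∧ isLow i j X ∧
    (setCompress i j X ∉ 𝓐 ∨ (setCompress i j X ∉ 𝓑 ∧ Reach i j 𝓐 𝓑 X))

open Classical in
noncomputable def psi (i j : ℕ) (𝓐 𝓑 : Finset (Finset ℕ)) (X : Finset ℕ) : Finset ℕ :=
  if mv i j 𝓐 𝓑 X then setCompress i j X else X

noncomputable def Phi (i j : ℕ) (𝓐 𝓑 : Finset (Finset ℕ)) : Finset (Finset ℕ) :=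
  𝓑.image (psi i j 𝓐 𝓑)

def recMv (i j : ℕ) (𝓐 𝓓 : Finset (Finset ℕ)) (Y : Finset ℕ) : Prop :=
  (i ∈ Y ∧ j ∉ Y) ∧ (Y ∉ 𝓐 ∨ (uset i j Y ∈ 𝓐 ∧ Reach' i j 𝓐 𝓓 (uset i j Y)))

open Classical in
noncomputable def rho (i j : ℕ) (𝓐 𝓓 : Finset (Finset ℕ)) (Y : Finset ℕ) : Finset ℕ :=
  if recMv i j 𝓐 𝓓 Y then uset i j Y else Y

lemma psi_of_mv (h : mv i j 𝓐 𝓑 X) : psi i j 𝓐 𝓑 X = setCompress i j X := by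
  rw [psi, if_pos h]

lemma psi_of_not_mv (h : ¬ mv i j 𝓐 𝓑 X) : psi i j 𝓐 𝓑 X = X := by
  rw [psi, if_neg h]

lemma mv_mem (h : mv i j 𝓐 𝓑 X) : X ∈ 𝓑 := h.1

lemma mv_low (h : mv i j 𝓐 𝓑 X) : isLow i j X := h.2.1

lemma not_mv_of_sc_mem (h𝓑A : 𝓑 ⊆ 𝓐) (h : setCompress i j X ∈ 𝓑) :
    ¬ mv i j 𝓐 𝓑 X := by
  rintro ⟨_, _, hc | hc⟩
  · exact hc (h𝓑A h)
  · exact hc.1 h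

lemma mem_Phi : Y ∈ Phi i j 𝓐 𝓑 ↔ ∃ X ∈ 𝓑, psi i j 𝓐 𝓑 X = Y := mem_image

/-- State lemma (a): a low set is in `Phi` iff it is an unmoved member. -/
lemma stA (hz : isLow i j X) : X ∈ Phi i j 𝓐 𝓑 ↔ (X ∈ 𝓑 ∧ ¬ mv i j 𝓐 𝓑 X) := by
  constructor
  · rintro h
    obtain ⟨X₀, h0, he⟩ := mem_Phi.1 h
    by_cases m : mv i j 𝓐 𝓑 X₀
    · rw [psi_of_mv m] at he
      exact absurd (he ▸ mem_sc_i (mv_low m)) hz.2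
    · rw [psi_of_not_mv m] at he
      subst he; exact ⟨h0, m⟩
  · rintro ⟨h1, h2⟩
    exact mem_Phi.2 ⟨X, h1, psi_of_not_mv h2⟩

/-- State lemma (b). -/
lemma stB (hne : i ≠ j) (hz : isLow i j X) :
    setCompress i j X ∈ Phi i j 𝓐 𝓑 ↔ (setCompress i j X ∈ 𝓑 ∨ mv i j 𝓐 𝓑 X) := by
  constructor
  · rintro h
    obtain ⟨X₀, h0, he⟩ := mem_Phi.1 h
    by_cases m : mv i j 𝓐 𝓑 X₀
    · rw [psi_of_mv m] at he
      have := sc_inj hne (mv_low m) hz he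
      subst this; exact Or.inr m
    · rw [psi_of_not_mv m] at he
      subst he; exact Or.inl h0
  · rintro (h | h)
    · refine mem_Phi.2 ⟨setCompress i j X, h, ?_⟩
      exact psi_of_not_mv (fun hm => (not_low_sc hz) (mv_low hm))
    · exact mem_Phi.2 ⟨X, mv_mem h, psi_of_mv h⟩

lemma exOne_iff (hne : i ≠ j) (h𝓑A : 𝓑 ⊆ 𝓐) (hz : pairZ i j 𝓐 X) :
    exOne i j 𝓑 X ↔ exOne i j (Phi i j 𝓐 𝓑) X := by
  have hA := stA (𝓐 := 𝓐) (𝓑 := 𝓑) hz.1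
  have hB := stB (𝓐 := 𝓐) (𝓑 := 𝓑) hne hz.1
  have hC : mv i j 𝓐 𝓑 X → X ∈ 𝓑 := mv_mem
  have hD : setCompress i j X ∈ 𝓑 → ¬ mv i j 𝓐 𝓑 X := not_mv_of_sc_mem h𝓑A
  unfold exOne Xor' Xor at *
  tauto

lemma rel_iff (hne : i ≠ j) (h𝓑A : 𝓑 ⊆ 𝓐) (X X' : Finset ℕ) :
    rel i j 𝓐 𝓑 X X' ↔ rel i j 𝓐 (Phi i j 𝓐 𝓑) X X' := by
  constructor <;> rintro ⟨h1, h2, h3⟩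
  · exact ⟨h1, (exOne_iff hne h𝓑A h1).1 h2, h3⟩
  · exact ⟨h1, (exOne_iff hne h𝓑A h1).2 h2, h3⟩

lemma badm_iff (hne : i ≠ j) (h𝓑A : 𝓑 ⊆ 𝓐) (W : Finset ℕ) :
    badm i j 𝓐 𝓑 W ↔ badm' i j 𝓐 (Phi i j 𝓐 𝓑) W := by
  constructor
  · rintro ⟨B, hB, hlow, hsc, hdisj⟩
    have hm : mv i j 𝓐 𝓑 B := ⟨hB, hlow, Or.inl hsc⟩
    refine ⟨setCompress i j B, mem_Phi.2 ⟨B, hB, psi_of_mv hm⟩, hsc, ?_⟩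
    rw [uset_sc hlow]; exact hdisj
  · rintro ⟨B', hB', hB'A, hdisj⟩
    obtain ⟨X₀, h0, he⟩ := mem_Phi.1 hB'
    by_cases m : mv i j 𝓐 𝓑 X₀
    · rw [psi_of_mv m] at he
      subst he
      refine ⟨X₀, h0, mv_low m, hB'A, ?_⟩
      rwa [uset_sc (mv_low m)] at hdisj
    · rw [psi_of_not_mv m] at he
      subst he
      exact absurd (h𝓑A h0) hB'A

lemma Reach_iff (hne : i ≠ j) (h𝓑A : 𝓑 ⊆ 𝓐) (X : Finset ℕ) :
    Reach i j 𝓐 𝓑 X ↔ Reach' i j 𝓐 (Phi i j 𝓐 𝓑) X := by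
  constructor <;> rintro ⟨W, hRTG, hbad⟩
  · exact ⟨W, Relation.ReflTransGen.mono (fun a b h => (rel_iff hne h𝓑A a b).1 h) _ _ hRTG,
      (badm_iff hne h𝓑A W).1 hbad⟩
  · exact ⟨W, Relation.ReflTransGen.mono (fun a b h => (rel_iff hne h𝓑A a b).2 h) _ _ hRTG,
      (badm_iff hne h𝓑A W).2 hbad⟩

/-- From a vertex whose upper half is a member of the intersecting family, no reach. -/
lemma no_reach_of_upper (hint : IsIntersecting 𝓑) (hz : isLow i j z)
    (hc : setCompress i j z ∈ 𝓑) : ¬ Reach i j 𝓐 𝓑 z := by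
  rintro ⟨W, hRTG, hbad⟩
  have key : ∀ y, Relation.ReflTransGen (rel i j 𝓐 𝓑) y W →
      isLow i j y → setCompress i j y ∈ 𝓑 → False := by
    intro y h
    induction h using Relation.ReflTransGen.head_induction_on with
    | refl =>
      intro hlow hcy
      obtain ⟨B, hB, _, _, hdisj⟩ := hbad
      exact (Finset.not_disjoint_iff_nonempty_inter.2 (hint _ hcy _ hB)) hdisj
    | head h' h ih =>
      rename_i a c
      intro hlow hcy
      obtain ⟨⟨hylow, hyA, hycA⟩, hyex, hdisj⟩ := h'
      by_cases hyc : c ∈ 𝓑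
      · have hne : (c ∩ setCompress i j a).Nonempty := hint _ hyc _ hcy
        rw [inter_sc hylow hlow] at hne
        exact (Finset.not_disjoint_iff_nonempty_inter.2 hne) hdisj.symm
      · have hcc : setCompress i j c ∈ 𝓑 := by
          rcases hyex with ⟨h1, _⟩ | ⟨h1, _⟩
          · exact absurd h1 hyc
          · exact h1
        exact ih hylow hcc
  exact key z hRTG hz hc

/-- The recovery map inverts `psi` pointwise on members. -/
lemma rho_psi (hne : i ≠ j) (h𝓑A : 𝓑 ⊆ 𝓐) (hint : IsIntersecting 𝓑) :
    ∀ X ∈ 𝓑, rho i j 𝓐 (Phi i j 𝓐 𝓑) (psi i j 𝓐 𝓑 X) = X := by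
  intro X hX
  by_cases m : mv i j 𝓐 𝓑 X
  · rw [psi_of_mv m]
    have hlow := mv_low m
    have hrec : recMv i j 𝓐 (Phi i j 𝓐 𝓑) (setCompress i j X) := by
      refine ⟨⟨mem_sc_i hlow, not_mem_sc_j hne hlow⟩, ?_⟩
      rcases m.2.2 with hsc | ⟨hsc, hr⟩
      · exact Or.inl hsc
      · refine Or.inr ?_
        rw [uset_sc hlow]
        by_cases hA : setCompress i j X ∈ 𝓐
        · exact ⟨h𝓑A hX, (Reach_iff hne h𝓑A X).1 hr⟩
        · exact ⟨h𝓑A hX, (Reach_iff hne h𝓑A X).1 hr⟩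
    rw [rho, if_pos hrec, uset_sc hlow]
  · rw [psi_of_not_mv m]
    have hrec : ¬ recMv i j 𝓐 (Phi i j 𝓐 𝓑) X := by
      rintro ⟨⟨hiX, hjX⟩, hcase⟩
      rcases hcase with hA | ⟨huA, hr⟩
      · exact hA (h𝓑A hX)
      · have hlowu : isLow i j (uset i j X) := low_uset hne ⟨hiX, hjX⟩
        have hscu : setCompress i j (uset i j X) ∈ 𝓑 := by
          rw [sc_uset hne ⟨hiX, hjX⟩]; exact hX
        exact no_reach_of_upper hint hlowu hscu
          ((Reach_iff hne h𝓑A (uset i j X)).2 hr)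
    rw [rho, if_neg hrec]

lemma recover_Phi (hne : i ≠ j) (h𝓑A : 𝓑 ⊆ 𝓐) (hint : IsIntersecting 𝓑) :
    (Phi i j 𝓐 𝓑).image (rho i j 𝓐 (Phi i j 𝓐 𝓑)) = 𝓑 := by
  apply Finset.Subset.antisymm
  · intro Y hY
    obtain ⟨D, hD, he⟩ := mem_image.1 hY
    obtain ⟨X, hX, he2⟩ := mem_Phi.1 hD
    subst he2
    rw [rho_psi hne h𝓑A hint X hX] at he
    exact he ▸ hX
  · intro X hX
    have : X = rho i j 𝓐 (Phi i j 𝓐 𝓑) (psi i j 𝓐 𝓑 X) :=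
      (rho_psi hne h𝓑A hint X hX).symm
    rw [this]
    exact mem_image_of_mem _ (mem_Phi.2 ⟨X, hX, rfl⟩)

lemma psi_injOn (h𝓑A : 𝓑 ⊆ 𝓐) :
    ∀ X ∈ 𝓑, ∀ X' ∈ 𝓑, psi i j 𝓐 𝓑 X = psi i j 𝓐 𝓑 X' → X = X' := by
  intro X hX X' hX' he
  by_cases m : mv i j 𝓐 𝓑 X <;> by_cases m' : mv i j 𝓐 𝓑 X'
  · rw [psi_of_mv m, psi_of_mv m'] at he
    have := congrArg (uset i j) he
    rwa [uset_sc (mv_low m), uset_sc (mv_low m')] at this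
  · rw [psi_of_mv m, psi_of_not_mv m'] at he
    exfalso
    rcases m.2.2 with hsc | ⟨hsc, _⟩
    · exact hsc (he ▸ h𝓑A hX')
    · exact hsc (he ▸ hX')
  · rw [psi_of_not_mv m, psi_of_mv m'] at he
    exfalso
    rcases m'.2.2 with hsc | ⟨hsc, _⟩
    · exact hsc (he ▸ h𝓑A hX)
    · exact hsc (he ▸ hX)
  · rwa [psi_of_not_mv m, psi_of_not_mv m'] at he

lemma Phi_card (h𝓑A : 𝓑 ⊆ 𝓐) : (Phi i j 𝓐 𝓑).card = 𝓑.card :=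
  card_image_of_injOn (fun X hX X' hX' => psi_injOn h𝓑A X hX X' hX')

lemma Phi_subset (h𝓑A : 𝓑 ⊆ 𝓐) : Phi i j 𝓐 𝓑 ⊆ famCompress i j 𝓐 := by
  intro Y hY
  obtain ⟨X, hX, he⟩ := mem_Phi.1 hY
  subst he
  by_cases m : mv i j 𝓐 𝓑 X
  · rw [psi_of_mv m]
    exact mem_union_left _ (mem_image_of_mem _ (h𝓑A hX))
  · rw [psi_of_not_mv m]
    by_cases hlow : isLow i j X
    · have hsc : setCompress i j X ∈ 𝓐 := by
        by_contra hsc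
        exact m ⟨hX, hlow, Or.inl hsc⟩
      exact mem_union_right _ (mem_filter.2 ⟨h𝓑A hX, hsc⟩)
    · refine mem_union_left _ ?_
      have h2 : setCompress i j X = X := sc_not_low hlow
      exact h2 ▸ mem_image_of_mem _ (h𝓑A hX)

/-- Key asymmetric case: a moved set still meets every unmoved set. -/
lemma moved_meets_unmoved (hne : i ≠ j) (h𝓑A : 𝓑 ⊆ 𝓐) (hint : IsIntersecting 𝓑)
    (hX : X ∈ 𝓑) (hX' : X' ∈ 𝓑) (hmv : mv i j 𝓐 𝓑 X) (hmv' : ¬ mv i j 𝓐 𝓑 X') :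
    ((setCompress i j X) ∩ X').Nonempty := by
  have hlow := mv_low hmv
  by_cases hxj : ∃ x ∈ X ∩ X', x ≠ j
  · obtain ⟨x, hx, hxj⟩ := hxj
    rw [mem_inter] at hx
    exact ⟨x, mem_inter.2 ⟨mem_sc_of hlow hx.1 hxj, hx.2⟩⟩
  push_neg at hxj
  obtain ⟨x, hx0⟩ := hint X hX X' hX'
  have hj' : j ∈ X' := by
    have hh := hxj x hx0
    rw [mem_inter] at hx0
    exact hh ▸ hx0.2
  have hcore : Disjoint (X.erase j) (X'.erase j) := by
    rw [Finset.disjoint_left]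
    intro y hy hy'
    exact (mem_erase.1 hy).1
      (hxj y (mem_inter.2 ⟨mem_of_mem_erase hy, mem_of_mem_erase hy'⟩))
  by_cases hi' : i ∈ X'
  · exact ⟨i, mem_inter.2 ⟨mem_sc_i hlow, hi'⟩⟩
  exfalso
  have hlow' : isLow i j X' := ⟨hj', hi'⟩
  have hor : setCompress i j X' ∈ 𝓐 ∧
      (setCompress i j X' ∈ 𝓑 ∨ ¬ Reach i j 𝓐 𝓑 X') := by
    by_contra hcon
    rw [not_and_or] at hcon
    rcases hcon with h1 | h1
    · exact hmv' ⟨hX', hlow', Or.inl h1⟩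
    · rw [not_or, not_not] at h1
      exact hmv' ⟨hX', hlow', Or.inr ⟨h1.1, h1.2⟩⟩
  obtain ⟨hscA, hrest⟩ := hor
  rcases hrest with hscB | hnr
  · have hne2 : (X ∩ setCompress i j X').Nonempty := hint X hX _ hscB
    rw [inter_sc hlow hlow'] at hne2
    exact (Finset.not_disjoint_iff_nonempty_inter.2 hne2) hcore
  apply hnr
  have hdisj' : Disjoint (setCompress i j X') X := by
    have h3 : Disjoint X (setCompress i j X') := by
      rw [Finset.disjoint_iff_inter_eq_empty, inter_sc hlow hlow',
        ← Finset.disjoint_iff_inter_eq_empty]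
      exact hcore
    exact h3.symm
  by_cases hscX : setCompress i j X ∈ 𝓐
  · rcases hmv.2.2 with h1 | ⟨hscB2, hr⟩
    · exact absurd hscX h1
    obtain ⟨W, hRTG, hbad⟩ := hr
    exact ⟨W, Relation.ReflTransGen.head
      ⟨⟨hlow, h𝓑A hX, hscX⟩, Or.inl ⟨hX, hscB2⟩, hcore.symm⟩ hRTG, hbad⟩
  · exact ⟨X', Relation.ReflTransGen.refl, X, hX, hlow, hscX, hdisj'⟩

lemma Phi_inter (hne : i ≠ j) (h𝓑A : 𝓑 ⊆ 𝓐) (hint : IsIntersecting 𝓑) :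
    IsIntersecting (Phi i j 𝓐 𝓑) := by
  intro Y hY Y' hY'
  obtain ⟨X, hX, he⟩ := mem_Phi.1 hY
  obtain ⟨X', hX', he'⟩ := mem_Phi.1 hY'
  subst he he'
  by_cases m : mv i j 𝓐 𝓑 X <;> by_cases m' : mv i j 𝓐 𝓑 X'
  · rw [psi_of_mv m, psi_of_mv m']
    exact ⟨i, mem_inter.2 ⟨mem_sc_i (mv_low m), mem_sc_i (mv_low m')⟩⟩
  · rw [psi_of_mv m, psi_of_not_mv m']
    exact moved_meets_unmoved hne h𝓑A hint hX hX' m m'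
  · rw [psi_of_not_mv m, psi_of_mv m']
    rw [inter_comm]
    exact moved_meets_unmoved hne h𝓑A hint hX' hX m' m
  · rw [psi_of_not_mv m, psi_of_not_mv m']
    exact hint X hX X' hX'

/-- famCompress agrees with Mathlib's UV compression. -/
lemma compress_eq (hne : i ≠ j) (A : Finset ℕ) :
    UV.compress {i} {j} A = setCompress i j A := by
  rw [UV.compress, setCompress]
  by_cases h : j ∈ A ∧ i ∉ A
  · rw [if_pos, if_pos h]
    · ext x
      simp only [mem_sdiff, sup_eq_union, mem_union, mem_singleton, mem_insert, mem_erase]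
      constructor
      · rintro ⟨hx1 | hx1, hx2⟩
        · exact Or.inr ⟨hx2, hx1⟩
        · exact Or.inl hx1
      · rintro (rfl | ⟨hx1, hx2⟩)
        · exact ⟨Or.inr rfl, hne⟩
        · exact ⟨Or.inl hx2, hx1⟩
    · constructor
      · simp [Finset.disjoint_singleton_left, h.2]
      · simp [Finset.singleton_subset_iff, h.1]
  · rw [if_neg, if_neg h]
    rintro ⟨h1, h2⟩
    exact h ⟨Finset.singleton_subset_iff.1 h2, Finset.disjoint_singleton_left.1 h1⟩

lemma famCompress_eq (hne : i ≠ j) (𝓐 : Finset (Finset ℕ)) :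
    famCompress i j 𝓐 = UV.compression {i} {j} 𝓐 := by
  ext Y
  simp only [famCompress, UV.compression, mem_union, mem_filter, mem_image,
    compress_eq hne]
  constructor
  · rintro (⟨A, hA, rfl⟩ | ⟨hY, hscY⟩)
    · by_cases hY : setCompress i j A ∈ 𝓐
      · exact Or.inl ⟨hY, by rw [sc_idem]; exact hY⟩
      · exact Or.inr ⟨⟨A, hA, rfl⟩, hY⟩
    · exact Or.inl ⟨hY, hscY⟩
  · rintro (⟨hY, hscY⟩ | ⟨⟨A, hA, rfl⟩, _⟩)
    · exact Or.inr ⟨hY, hscY⟩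
    · exact Or.inl ⟨A, hA, rfl⟩

lemma card_famCompress (hne : i ≠ j) (𝓐 : Finset (Finset ℕ)) :
    (famCompress i j 𝓐).card = 𝓐.card := by
  rw [famCompress_eq hne]
  exact UV.card_compression _ _ _

theorem main (𝓐 : Finset (Finset ℕ)) (i j : ℕ) (hne : i ≠ j)
    (p : ℝ) (hp0 : 0 < p) (hp1 : p < 1) :
    probInter p 𝓐 ≤ probInter p (famCompress i j 𝓐) := by
  classical
  set S := 𝓐.powerset.filter IsIntersecting with hS
  set T := (famCompress i j 𝓐).powerset.filter IsIntersecting with hT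
  have hmemS : ∀ 𝓑, 𝓑 ∈ S ↔ (𝓑 ⊆ 𝓐 ∧ IsIntersecting 𝓑) := by
    intro 𝓑; rw [hS, mem_filter, mem_powerset]
  have hmemT : ∀ 𝓓, 𝓓 ∈ T ↔ (𝓓 ⊆ famCompress i j 𝓐 ∧ IsIntersecting 𝓓) := by
    intro 𝓓; rw [hT, mem_filter, mem_powerset]
  have step1 : probInter p 𝓐 =
      ∑ 𝓑 ∈ S, p ^ (Phi i j 𝓐 𝓑).card *
        (1 - p) ^ ((famCompress i j 𝓐).card - (Phi i j 𝓐 𝓑).card) := by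
    rw [probInter]
    refine Finset.sum_congr rfl (fun 𝓑 h𝓑 => ?_)
    rw [Phi_card ((hmemS 𝓑).1 h𝓑).1, card_famCompress hne]
  have hinj : ∀ 𝓑₁ ∈ S, ∀ 𝓑₂ ∈ S, Phi i j 𝓐 𝓑₁ = Phi i j 𝓐 𝓑₂ → 𝓑₁ = 𝓑₂ := by
    intro 𝓑₁ h1 𝓑₂ h2 he
    obtain ⟨hs1, hi1⟩ := (hmemS 𝓑₁).1 h1
    obtain ⟨hs2, hi2⟩ := (hmemS 𝓑₂).1 h2
    calc 𝓑₁ = (Phi i j 𝓐 𝓑₁).image (rho i j 𝓐 (Phi i j 𝓐 𝓑₁)) :=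
          (recover_Phi hne hs1 hi1).symm
      _ = (Phi i j 𝓐 𝓑₂).image (rho i j 𝓐 (Phi i j 𝓐 𝓑₂)) := by rw [he]
      _ = 𝓑₂ := recover_Phi hne hs2 hi2
  have step2 : ∑ 𝓑 ∈ S, p ^ (Phi i j 𝓐 𝓑).card *
        (1 - p) ^ ((famCompress i j 𝓐).card - (Phi i j 𝓐 𝓑).card) =
      ∑ 𝓓 ∈ S.image (Phi i j 𝓐), p ^ 𝓓.card *
        (1 - p) ^ ((famCompress i j 𝓐).card - 𝓓.card) :=
    (Finset.sum_image (f := fun (𝓓 : Finset (Finset ℕ)) => p ^ 𝓓.card *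
      (1 - p) ^ ((famCompress i j 𝓐).card - 𝓓.card)) hinj).symm
  have hsub : S.image (Phi i j 𝓐) ⊆ T := by
    intro 𝓓 h𝓓
    obtain ⟨𝓑, h𝓑, rfl⟩ := mem_image.1 h𝓓
    obtain ⟨hs, hi⟩ := (hmemS 𝓑).1 h𝓑
    exact (hmemT _).2 ⟨Phi_subset hs, Phi_inter hne hs hi⟩
  have step3 : ∑ 𝓓 ∈ S.image (Phi i j 𝓐), p ^ 𝓓.card *
        (1 - p) ^ ((famCompress i j 𝓐).card - 𝓓.card) ≤
      ∑ 𝓓 ∈ T, p ^ 𝓓.card * (1 - p) ^ ((famCompress i j 𝓐).card - 𝓓.card) := by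
    refine Finset.sum_le_sum_of_subset_of_nonneg hsub (fun 𝓓 _ _ => ?_)
    have h1 : (0:ℝ) ≤ p := le_of_lt hp0
    have h2 : (0:ℝ) ≤ 1 - p := by linarith
    positivity
  rw [step1, step2]
  exact step3

end Stmt5Aux

theorem stmt5 (n r : ℕ) (𝓐 : Finset (Finset ℕ)) (h𝓐 : 𝓐 ⊆ uniformFam n r)
    (i j : ℕ) (hi : 1 ≤ i) (hij : i < j) (hj : j ≤ n)
    (p : ℝ) (hp0 : 0 < p) (hp1 : p < 1) :
    probInter p 𝓐 ≤ probInter p (famCompress i j 𝓐) :=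
  Stmt5Aux.main 𝓐 i j (Nat.ne_of_lt hij) p hp0 hp1
end
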